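/- arXiv:1811.02772 — 9 statements merged into one kernel-verified Lean document; each statement's English description precedes it below -/
import Mathlib

section
/- Let X and Y be real normed linear spaces of dimension at least 2, and let T be a bounded linear operator from X to Y whose norm attainment set is M_T = {x₀, −x₀} for some x₀ ∈ X with ‖x₀‖ = 1. Suppose P is an L-projection on X whose range is span{x₀}, and suppose that the restriction of T to ker(P) has norm strictly less than ‖T‖. Then every norming sequence {x_n} for T has a subsequence converging to a·x₀ for some real a with |a| = 1. -/
/-- **Norming-sequence claim in Theorem 6.** Let `X, Y` be real normed spaces of
dimension ≥ 2, `T : X → Y` bounded linear with norm attainment set `{x₀, -x₀}`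
(`‖x₀‖ = 1`), let `P` be an L-projection on `X` with range `span{x₀}` and suppose
`‖T|_{ker P}‖ < ‖T‖`. Then every norming sequence for `T` has a subsequence
converging to `a • x₀` for some `a` with `|a| = 1`. -/
theorem norming_sequence_subsequence_converges
    {X Y : Type*} [NormedAddCommGroup X] [NormedSpace ℝ X]
    [NormedAddCommGroup Y] [NormedSpace ℝ Y]
    (hdimX : 2 ≤ Module.rank ℝ X) (hdimY : 2 ≤ Module.rank ℝ Y)
    (T : X →L[ℝ] Y) (x₀ : X) (hx₀ : ‖x₀‖ = 1)
    (hMT : {x : X | ‖x‖ = 1 ∧ ‖T x‖ = ‖T‖} = {x₀, -x₀})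
    (P : X →L[ℝ] X)
    (hPidem : ∀ z : X, P (P z) = P z)
    (hPL : ∀ z : X, ‖z‖ = ‖P z‖ + ‖z - P z‖)
    (hPrange : LinearMap.range (P : X →ₗ[ℝ] X) = Submodule.span ℝ ({x₀} : Set X))
    (hker : ‖T.comp (LinearMap.ker (P : X →ₗ[ℝ] X)).subtypeL‖ < ‖T‖)
    (x : ℕ → X) (hx : ∀ n, ‖x n‖ = 1)
    (hnorming : Filter.Tendsto (fun n => ‖T (x n)‖) Filter.atTop (nhds ‖T‖)) :
    ∃ (a : ℝ) (φ : ℕ → ℕ), |a| = 1 ∧ StrictMono φ ∧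
      Filter.Tendsto (fun n => x (φ n)) Filter.atTop (nhds (a • x₀)) := by

  classical
  have hTx₀ : ‖T x₀‖ = ‖T‖ := by
    have h : x₀ ∈ ({x₀, -x₀} : Set X) := by left; rfl
    rw [← hMT] at h
    exact h.2
  set c := ‖T.comp (LinearMap.ker (P : X →ₗ[ℝ] X)).subtypeL‖ with hc
  have hTpos : 0 < ‖T‖ - c := sub_pos.mpr hker
  have hmem : ∀ n, P (x n) ∈ Submodule.span ℝ ({x₀} : Set X) := fun n => by
    rw [← hPrange]; exact ⟨x n, rfl⟩
  choose a ha using fun n => Submodule.mem_span_singleton.mp (hmem n)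
  set w := fun n => x n - P (x n) with hw
  have hwker : ∀ n, w n ∈ LinearMap.ker (P : X →ₗ[ℝ] X) := fun n => by
    simp [hw, LinearMap.mem_ker, map_sub, hPidem]
  have hnorm_split : ∀ n, |a n| + ‖w n‖ = 1 := fun n => by
    have h1 := hPL (x n)
    rw [hx n, ← ha n, norm_smul, Real.norm_eq_abs, hx₀, mul_one] at h1
    rw [hw]; simp only; rw [← ha n]
    exact h1.symm
  have hTw : ∀ n, ‖T (w n)‖ ≤ c * ‖w n‖ := fun n => by
    have h := (T.comp (LinearMap.ker (P : X →ₗ[ℝ] X)).subtypeL).le_opNorm ⟨w n, hwker n⟩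
    simpa using h
  have hTbound : ∀ n, ‖T (x n)‖ ≤ ‖T‖ - ‖w n‖ * (‖T‖ - c) := fun n => by
    have hx_eq : x n = a n • x₀ + w n := by
      rw [hw]; simp only; rw [ha n]; abel
    calc ‖T (x n)‖ = ‖a n • T x₀ + T (w n)‖ := by
          rw [hx_eq]; simp [map_add, map_smul]
    _ ≤ |a n| * ‖T x₀‖ + ‖T (w n)‖ := by
          refine (norm_add_le _ _).trans ?_
          rw [norm_smul, Real.norm_eq_abs]
    _ ≤ |a n| * ‖T‖ + c * ‖w n‖ := by
          rw [hTx₀]; exact add_le_add le_rfl (hTw n)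
    _ = ‖T‖ - ‖w n‖ * (‖T‖ - c) := by
          have h1 := hnorm_split n
          have h2 : |a n| = 1 - ‖w n‖ := by linarith
          rw [h2]; ring
  have hw0 : Filter.Tendsto (fun n => ‖w n‖) Filter.atTop (nhds 0) := by
    have hle : ∀ n, ‖w n‖ ≤ (‖T‖ - ‖T (x n)‖) / (‖T‖ - c) := fun n => by
      rw [le_div_iff₀ hTpos]; have := hTbound n; linarith
    have htend : Filter.Tendsto (fun n => (‖T‖ - ‖T (x n)‖) / (‖T‖ - c))
        Filter.atTop (nhds 0) := by
      have h := (tendsto_const_nhds (x := ‖T‖)).sub hnorming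
      have h2 := h.div_const (‖T‖ - c)
      simpa using h2
    exact squeeze_zero (fun n => norm_nonneg _) hle htend
  have ha1 : Filter.Tendsto (fun n => |a n|) Filter.atTop (nhds 1) := by
    have heq : (fun n => |a n|) = fun n => 1 - ‖w n‖ :=
      funext fun n => by linarith [hnorm_split n]
    rw [heq]
    simpa using (tendsto_const_nhds (x := (1:ℝ))).sub hw0
  have hbdd : ∀ n, a n ∈ Set.Icc (-1 : ℝ) 1 := fun n => by
    have h1 := hnorm_split n
    have h2 := norm_nonneg (w n)
    have : |a n| ≤ 1 := by linarith
    exact abs_le.mp this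
  obtain ⟨L, hL, φ, hφ, hconv⟩ := isCompact_Icc.tendsto_subseq hbdd
  have hLabs : |L| = 1 := by
    have h1 : Filter.Tendsto (fun n => |a (φ n)|) Filter.atTop (nhds |L|) :=
      hconv.abs
    have h2 : Filter.Tendsto (fun n => |a (φ n)|) Filter.atTop (nhds 1) :=
      ha1.comp hφ.tendsto_atTop
    exact tendsto_nhds_unique h1 h2
  refine ⟨L, φ, hLabs, hφ, ?_⟩
  have hwconv : Filter.Tendsto (fun n => w (φ n)) Filter.atTop (nhds 0) := by
    rw [tendsto_zero_iff_norm_tendsto_zero]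
    exact hw0.comp hφ.tendsto_atTop
  have hx_eq : ∀ n, x (φ n) = a (φ n) • x₀ + w (φ n) := fun n => by
    rw [hw]; simp only; rw [ha (φ n)]; abel
  have : Filter.Tendsto (fun n => a (φ n) • x₀ + w (φ n)) Filter.atTop
      (nhds (L • x₀ + 0)) :=
    (hconv.smul_const x₀).add hwconv
  simpa [hx_eq] using this
end

section
/- Let X and Y be real normed linear spaces of dimension at least 2, and let T be a bounded linear operator from X to Y whose norm attainment set is M_T = {x₀, −x₀} for some x₀ ∈ X with ‖x₀‖ = 1. Suppose P is an L-projection on X whose range is span{x₀}, and suppose that the restriction of T to ker(P) has norm strictly less than ‖T‖. Then for any bounded linear operator A from X to Y and any ε ∈ [0,1), T ⊥_B^ε A if and only if ‖Tx₀ + λAx₀‖² ≥ ‖Tx₀‖² − 2ε‖Tx₀‖·‖λA‖ for all real λ. -/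
set_option maxHeartbeats 1000000
set_option synthInstance.maxHeartbeats 200000

section Aux

variable {X Y : Type*} [NormedAddCommGroup X] [NormedSpace ℝ X]
    [NormedAddCommGroup Y] [NormedSpace ℝ Y]

/-- If `P` is an L-projection with range `span {x₀}`, then any operator norm is bounded
by the max of its value at `x₀` and its norm on `ker P`. -/
lemma aux_opNorm_le_max (S : X →L[ℝ] Y) (x₀ : X) (hx₀ : ‖x₀‖ = 1)
    (P : X →L[ℝ] X)
    (hPidem : ∀ z : X, P (P z) = P z)
    (hPL : ∀ z : X, ‖z‖ = ‖P z‖ + ‖z - P z‖)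
    (hPrange : LinearMap.range (P : X →ₗ[ℝ] X) = Submodule.span ℝ ({x₀} : Set X))
    (c : ℝ) (hc : ∀ q : X, P q = 0 → ‖S q‖ ≤ c * ‖q‖) (hc0 : 0 ≤ c) :
    ‖S‖ ≤ max ‖S x₀‖ c := by
  apply ContinuousLinearMap.opNorm_le_bound _ (le_max_of_le_right hc0)
  intro x
  have hmem : P x ∈ LinearMap.range (P : X →ₗ[ℝ] X) := ⟨x, rfl⟩
  rw [hPrange, Submodule.mem_span_singleton] at hmem
  obtain ⟨α, hα⟩ := hmem
  have hq : P (x - P x) = 0 := by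
    simp [map_sub, hPidem]
  have hx : x = P x + (x - P x) := by abel
  have hnPx : ‖P x‖ = |α| := by rw [← hα, norm_smul, hx₀, Real.norm_eq_abs, mul_one]
  have h1 : ‖S x‖ ≤ ‖S (P x)‖ + ‖S (x - P x)‖ := by
    have hSx : S x = S (P x) + S (x - P x) := by rw [← map_add, ← hx]
    rw [hSx]; exact norm_add_le _ _
  have h2 : ‖S (P x)‖ = |α| * ‖S x₀‖ := by
    rw [← hα, map_smul, norm_smul, Real.norm_eq_abs]
  have h3 : ‖S (x - P x)‖ ≤ c * ‖x - P x‖ := hc _ hq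
  have h4 : ‖x‖ = |α| + ‖x - P x‖ := by rw [hPL x, hnPx]
  have hm : max ‖S x₀‖ c ≥ ‖S x₀‖ := le_max_left _ _
  have hm2 : max ‖S x₀‖ c ≥ c := le_max_right _ _
  have hα0 : (0:ℝ) ≤ |α| := abs_nonneg _
  have hq0 : (0:ℝ) ≤ ‖x - P x‖ := norm_nonneg _
  calc ‖S x‖ ≤ |α| * ‖S x₀‖ + c * ‖x - P x‖ := by rw [← h2]; linarith
  _ ≤ |α| * max ‖S x₀‖ c + ‖x - P x‖ * max ‖S x₀‖ c := by
      have := mul_le_mul_of_nonneg_left hm hα0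
      have := mul_le_mul_of_nonneg_right hm2 hq0
      nlinarith
  _ = max ‖S x₀‖ c * ‖x‖ := by rw [h4]; ring

/-- Key step: for `l ≥ 0`, approximate orthogonality of operators forces the
pointwise inequality at the norming point `x₀`. -/
lemma aux_forward (T A : X →L[ℝ] Y) (x₀ : X) (hx₀ : ‖x₀‖ = 1)
    (hTx₀ : ‖T x₀‖ = ‖T‖) (k : ℝ) (hk0 : 0 ≤ k) (hk : k < ‖T‖)
    (hbound : ∀ t : ℝ, ‖T + t • A‖ ≤ max ‖T x₀ + t • A x₀‖ (k + ‖t • A‖))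
    (ε : ℝ) (hε0 : 0 ≤ ε) (hε1 : ε < 1)
    (h : ∀ t : ℝ, ‖T‖ ^ 2 - 2 * ε * ‖T‖ * ‖t • A‖ ≤ ‖T + t • A‖ ^ 2)
    (l : ℝ) (hl : 0 ≤ l) :
    ‖T‖ ^ 2 - 2 * ε * ‖T‖ * ‖l • A‖ ≤ ‖T x₀ + l • A x₀‖ ^ 2 := by
  set N := ‖T‖ with hN
  set a := ‖A‖ with ha
  have hN0 : 0 < N := lt_of_le_of_lt hk0 hk
  have ha0 : 0 ≤ a := norm_nonneg _
  -- trivial case A = 0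
  rcases eq_or_lt_of_le ha0 with ha0' | hapos
  · have hA : A = 0 := by
      rw [← norm_le_zero_iff]; exact le_of_eq ha0'.symm
    have e1 : ‖l • A‖ = 0 := by rw [hA, smul_zero, norm_zero]
    have e2 : A x₀ = 0 := by rw [hA]; rfl
    rw [e1, e2, smul_zero, add_zero, hTx₀]
    nlinarith
  -- the norm of t • A
  have hsm : ∀ t : ℝ, 0 ≤ t → ‖t • A‖ = t * a := by
    intro t ht
    have hns := norm_smul t A
    rw [hns, Real.norm_eq_abs, abs_of_nonneg ht]
  -- small-l claim
  have hsmall : ∀ t : ℝ, (k + ‖t • A‖) ^ 2 < N ^ 2 - 2 * ε * N * ‖t • A‖ →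
      N ^ 2 - 2 * ε * N * ‖t • A‖ ≤ ‖T x₀ + t • A x₀‖ ^ 2 := by
    intro t hlt
    have h1 := h t
    have hb := hbound t
    have hkm0 : 0 ≤ k + ‖t • A‖ := by positivity
    have hTn0 : 0 ≤ ‖T + t • A‖ := norm_nonneg _
    have hlt2 : k + ‖t • A‖ < ‖T + t • A‖ := by nlinarith
    have : ‖T + t • A‖ ≤ ‖T x₀ + t • A x₀‖ := by
      rcases max_cases ‖T x₀ + t • A x₀‖ (k + ‖t • A‖) with ⟨h5, h6⟩ | ⟨h5, h6⟩
      · rw [h5] at hb; exact hb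
      · rw [h5] at hb; linarith
    nlinarith
  -- threshold
  set D : ℝ := 2 * a * (2 * k + a + 2 * N) with hD
  have hDpos : 0 < D := by positivity
  set t₀ : ℝ := min 1 ((N ^ 2 - k ^ 2) / D) with ht₀
  have ht₀pos : 0 < t₀ := by
    apply lt_min one_pos
    apply div_pos _ hDpos
    nlinarith
  have hthresh : ∀ t : ℝ, 0 ≤ t → t ≤ t₀ → (k + ‖t • A‖) ^ 2 < N ^ 2 - 2 * ε * N * ‖t • A‖ := by
    intro t ht ht'
    rw [hsm t ht]
    have h1 : t ≤ 1 := le_trans ht' (min_le_left _ _)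
    have h2 : t ≤ (N ^ 2 - k ^ 2) / D := le_trans ht' (min_le_right _ _)
    have h3 : t * D ≤ N ^ 2 - k ^ 2 := by
      rw [← le_div_iff₀ hDpos] at *; exact h2
    have hNk : k ^ 2 < N ^ 2 := by nlinarith
    have hta : 0 ≤ t * a := by positivity
    -- (k + t a)^2 + 2 ε N t a ≤ k^2 + t D/2 ≤ k^2 + (N²-k²)/2 < N²
    nlinarith [mul_le_mul_of_nonneg_right h1 hta, mul_le_mul_of_nonneg_left (le_of_lt hε1) (mul_nonneg (mul_nonneg (by norm_num : (0:ℝ) ≤ 2) hN0.le) hta)]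
  by_cases hcase : l ≤ t₀
  · exact hsmall l (hthresh l hl hcase)
  · push_neg at hcase
    have hlpos : 0 < l := lt_trans ht₀pos hcase
    set s : ℝ := t₀ / l with hs
    have hs0 : 0 < s := div_pos ht₀pos hlpos
    have hs1 : s < 1 := (div_lt_one hlpos).2 hcase
    have hsl : s * l = t₀ := div_mul_cancel₀ _ (ne_of_gt hlpos)
    have hφt₀ : N ^ 2 - 2 * ε * N * ‖t₀ • A‖ ≤ ‖T x₀ + t₀ • A x₀‖ ^ 2 :=
      hsmall t₀ (hthresh t₀ ht₀pos.le le_rfl)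
    -- convexity
    have hdecomp : T x₀ + t₀ • A x₀ = (1 - s) • (T x₀) + s • (T x₀ + l • A x₀) := by
      rw [smul_add, smul_smul, hsl]
      module
    have hconv : ‖T x₀ + t₀ • A x₀‖ ≤ (1 - s) * N + s * ‖T x₀ + l • A x₀‖ := by
      rw [hdecomp]
      calc ‖(1 - s) • (T x₀) + s • (T x₀ + l • A x₀)‖
          ≤ ‖(1 - s) • (T x₀)‖ + ‖s • (T x₀ + l • A x₀)‖ := norm_add_le _ _
        _ = (1 - s) * N + s * ‖T x₀ + l • A x₀‖ := by
            rw [norm_smul, norm_smul, Real.norm_eq_abs, Real.norm_eq_abs,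
              abs_of_nonneg (by linarith : (0:ℝ) ≤ 1 - s), abs_of_nonneg hs0.le, hTx₀]
    have hφ0 : 0 ≤ ‖T x₀ + l • A x₀‖ := norm_nonneg _
    set hφ : ℝ := ‖T x₀ + l • A x₀‖ with hφdef
    have hsq : ‖T x₀ + t₀ • A x₀‖ ^ 2 ≤ (1 - s) * N ^ 2 + s * hφ ^ 2 := by
      have h0 : 0 ≤ ‖T x₀ + t₀ • A x₀‖ := norm_nonneg _
      nlinarith [sq_nonneg (N - hφ), mul_nonneg hs0.le (sub_nonneg.2 hs1.le)]
    rw [hsm l hl]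
    rw [hsm t₀ ht₀pos.le] at hφt₀
    -- N² - 2εN t₀ a ≤ (1-s)N² + s hφ² ⇒ hφ² ≥ N² - 2εN (t₀/s) a = N² - 2εN l a
    have hla : t₀ * a = s * (l * a) := by rw [← hsl]; ring
    nlinarith [mul_pos hs0 (mul_pos hlpos hapos)]

end Aux

/-- **Theorem 6 (main part).** Let `X, Y` be real normed spaces of dimension ≥ 2,
`T : X → Y` bounded linear with norm attainment set `{x₀, -x₀}` (`‖x₀‖ = 1`), let
`P` be an L-projection on `X` with range `span{x₀}` and suppose `‖T|_{ker P}‖ < ‖T‖`.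
Then for any bounded linear operator `A` and `ε ∈ [0,1)`, `T ⊥_B^ε A` iff
`‖Tx₀ + λ Ax₀‖² ≥ ‖Tx₀‖² - 2 ε ‖Tx₀‖ ‖λ A‖` for all real `λ`. -/
theorem approx_BJ_orthogonality_Lideal
    {X Y : Type*} [NormedAddCommGroup X] [NormedSpace ℝ X]
    [NormedAddCommGroup Y] [NormedSpace ℝ Y]
    (hdimX : 2 ≤ Module.rank ℝ X) (hdimY : 2 ≤ Module.rank ℝ Y)
    (T : X →L[ℝ] Y) (x₀ : X) (hx₀ : ‖x₀‖ = 1)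
    (hMT : {x : X | ‖x‖ = 1 ∧ ‖T x‖ = ‖T‖} = {x₀, -x₀})
    (P : X →L[ℝ] X)
    (hPidem : ∀ z : X, P (P z) = P z)
    (hPL : ∀ z : X, ‖z‖ = ‖P z‖ + ‖z - P z‖)
    (hPrange : LinearMap.range (P : X →ₗ[ℝ] X) = Submodule.span ℝ ({x₀} : Set X))
    (hker : ‖T.comp (LinearMap.ker (P : X →ₗ[ℝ] X)).subtypeL‖ < ‖T‖)
    (A : X →L[ℝ] Y) (ε : ℝ) (hε : ε ∈ Set.Ico (0 : ℝ) 1) :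
    (∀ l : ℝ, ‖T‖ ^ 2 - 2 * ε * ‖T‖ * ‖l • A‖ ≤ ‖T + l • A‖ ^ 2) ↔
      (∀ l : ℝ, ‖T x₀‖ ^ 2 - 2 * ε * ‖T x₀‖ * ‖l • A‖ ≤ ‖T x₀ + l • A x₀‖ ^ 2) := by
  obtain ⟨hε0, hε1⟩ := hε
  have hx₀mem : x₀ ∈ ({x₀, -x₀} : Set X) := by left; rfl
  rw [← hMT] at hx₀mem
  have hTx₀ : ‖T x₀‖ = ‖T‖ := hx₀mem.2
  set k : ℝ := ‖T.comp (LinearMap.ker (P : X →ₗ[ℝ] X)).subtypeL‖ with hkdef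
  have hk0 : 0 ≤ k := hkdef ▸ ContinuousLinearMap.opNorm_nonneg _
  -- the kernel bound for T
  have hTker : ∀ q : X, P q = 0 → ‖T q‖ ≤ k * ‖q‖ := by
    intro q hq
    have : T q = (T.comp (LinearMap.ker (P : X →ₗ[ℝ] X)).subtypeL) ⟨q, LinearMap.mem_ker.2 hq⟩ := rfl
    rw [this]
    exact le_trans (ContinuousLinearMap.le_opNorm _ _) (le_of_eq rfl)
  -- the max bound for any operator of the form T + t • A (for any A)
  have hbound : ∀ (B : X →L[ℝ] Y) (t : ℝ),
      ‖T + t • B‖ ≤ max ‖T x₀ + t • B x₀‖ (k + ‖t • B‖) := by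
    intro B t
    have hc : ∀ q : X, P q = 0 → ‖(T + t • B) q‖ ≤ (k + ‖t • B‖) * ‖q‖ := by
      intro q hq
      have h1 : ‖T q‖ ≤ k * ‖q‖ := hTker q hq
      have h2 : ‖(t • B) q‖ ≤ ‖t • B‖ * ‖q‖ := ContinuousLinearMap.le_opNorm _ _
      calc ‖(T + t • B) q‖ = ‖T q + (t • B) q‖ := rfl
        _ ≤ ‖T q‖ + ‖(t • B) q‖ := norm_add_le _ _
        _ ≤ (k + ‖t • B‖) * ‖q‖ := by nlinarith
    have := aux_opNorm_le_max (T + t • B) x₀ hx₀ P hPidem hPL hPrange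
      (k + ‖t • B‖) hc (by positivity)
    simpa using this
  constructor
  · -- forward (hard) direction
    intro h l
    rw [hTx₀]
    rcases le_or_gt 0 l with hl | hl
    · exact aux_forward T A x₀ hx₀ hTx₀ k hk0 hker (hbound A) ε hε0 hε1 h l hl
    · -- use -A and -l
      have h' : ∀ t : ℝ, ‖T‖ ^ 2 - 2 * ε * ‖T‖ * ‖t • (-A)‖ ≤ ‖T + t • (-A)‖ ^ 2 := by
        intro t
        have := h (-t)
        simpa [neg_smul, smul_neg] using this
      have := aux_forward T (-A) x₀ hx₀ hTx₀ k hk0 hker (hbound (-A)) ε hε0 hε1 h' (-l)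
        (by linarith)
      have e1 : (-l) • ((-A) x₀) = l • A x₀ := by simp
      have e2 : ‖(-l) • (-A)‖ = ‖l • A‖ := by
        have : (-l) • (-A) = l • A := by module
        rw [this]
      rw [e1, e2] at this
      exact this
  · -- backward (easy) direction
    intro h l
    have h1 := h l
    rw [hTx₀] at h1
    have h2 : ‖T x₀ + l • A x₀‖ ≤ ‖T + l • A‖ := by
      have := (T + l • A).le_opNorm x₀
      simpa [hx₀] using this
    have h3 : 0 ≤ ‖T x₀ + l • A x₀‖ := norm_nonneg _
    nlinarith
end

section
/- Let X and Y be real normed linear spaces of dimension at least 2, and let T be a bounded linear operator from X to Y whose norm attainment set is M_T = {x₀, −x₀} for some x₀ ∈ X with ‖x₀‖ = 1. Suppose P is an L-projection on X whose range is span{x₀}, and suppose that the restriction of T to ker(P) has norm strictly less than ‖T‖. Let A be a bounded linear operator from X to Y with x₀ ∈ M_A, and let ε ∈ [0,1). Then T ⊥_B^ε A if and only if Tx₀ ⊥_B^ε Ax₀. -/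
lemma eps_orth_extend_real (a b m w δ L ε : ℝ)
    (ha : 0 ≤ a) (hb : 0 ≤ b) (hm0 : 0 ≤ m) (hw : 0 ≤ w) (hε : 0 ≤ ε)
    (hδ : 0 < δ) (hl : δ < L)
    (hconv : m ≤ (1 - δ / L) * a + (δ / L) * b)
    (hsq : a ^ 2 - 2 * ε * a * (δ * w) ≤ m ^ 2) :
    a ^ 2 - 2 * ε * a * (L * w) ≤ b ^ 2 := by
  have hL : 0 < L := lt_trans hδ hl
  set t : ℝ := δ / L with ht_def
  have ht0 : 0 < t := div_pos hδ hL
  have ht1 : t < 1 := (div_lt_one hL).2 hl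
  have htl : t * L = δ := by rw [ht_def, div_mul_cancel₀ _ (ne_of_gt hL)]
  set c : ℝ := (a - m) / δ with hc_def
  have hmc : m = a - c * δ := by rw [hc_def, div_mul_cancel₀ _ (ne_of_gt hδ)]; ring
  have hcδ : c * δ ≤ a := by nlinarith
  have hstar : 2 * a * c - c ^ 2 * δ ≤ 2 * ε * a * w := by nlinarith
  have hbc : a - c * L ≤ b := by
    have h2 : t * (a - b) ≤ c * δ := by nlinarith
    rw [← htl] at h2
    nlinarith
  clear_value t c
  clear ht_def hc_def htl ht1 hconv hmc hsq hm0
  rcases le_or_gt c 0 with hc | hc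
  · have hba : a ≤ b := by nlinarith [mul_nonneg (neg_nonneg.2 hc) hL.le]
    nlinarith [mul_self_le_mul_self ha hba,
      mul_nonneg (mul_nonneg (mul_nonneg hε ha) hL.le) hw]
  rcases le_or_gt (c * L) a with hca | hca
  · have h1 : (2 * a * c - c ^ 2 * δ) * L ≤ 2 * ε * a * w * L :=
      mul_le_mul_of_nonneg_right hstar hL.le
    have h2 : c ^ 2 * δ * L ≤ c ^ 2 * L * L :=
      mul_le_mul_of_nonneg_right (mul_le_mul_of_nonneg_left hl.le (sq_nonneg c)) hL.le
    have hb2 : (a - c * L) ^ 2 ≤ b ^ 2 :=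
      pow_le_pow_left₀ (by linarith : (0:ℝ) ≤ a - c * L) hbc 2
    nlinarith [h1, h2, hb2]
  · have h3 : c * (c * δ) ≤ c * a := mul_le_mul_of_nonneg_left hcδ hc.le
    have hcw : c * a ≤ 2 * ε * a * w := by nlinarith [hstar, h3]
    have h4 : a * a ≤ a * (c * L) := mul_le_mul_of_nonneg_left hca.le ha
    have h5 : (c * a) * L ≤ (2 * ε * a * w) * L :=
      mul_le_mul_of_nonneg_right hcw hL.le
    nlinarith [sq_nonneg b, h4, h5]

/-- Extension lemma: if the ε-BJ inequality holds for all small scalars,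
it holds for all scalars. -/
lemma eps_orth_extend {Y : Type*} [NormedAddCommGroup Y] [NormedSpace ℝ Y]
    (u v : Y) (ε δ : ℝ) (hε : 0 ≤ ε) (hδ : 0 < δ)
    (h : ∀ lam : ℝ, |lam| ≤ δ → ‖u‖ ^ 2 - 2 * ε * ‖u‖ * ‖lam • v‖ ≤ ‖u + lam • v‖ ^ 2) :
    ∀ l : ℝ, ‖u‖ ^ 2 - 2 * ε * ‖u‖ * ‖l • v‖ ≤ ‖u + l • v‖ ^ 2 := by
  intro l
  rcases le_or_gt |l| δ with hl | hl
  · exact h l hl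
  have hL : 0 < |l| := lt_trans hδ hl
  have ht0 : 0 < δ / |l| := div_pos hδ hL
  have ht1 : δ / |l| < 1 := (div_lt_one hL).2 hl
  have habs : |δ / |l| * l| = δ := by
    rw [abs_mul, abs_of_pos ht0, div_mul_cancel₀ _ (ne_of_gt hL)]
  have hconv : ‖u + (δ / |l| * l) • v‖ ≤ (1 - δ / |l|) * ‖u‖ + (δ / |l|) * ‖u + l • v‖ := by
    have hid : u + (δ / |l| * l) • v = (1 - δ / |l|) • u + (δ / |l|) • (u + l • v) := by
      rw [smul_add, smul_smul]; module
    calc ‖u + (δ / |l| * l) • v‖ = ‖(1 - δ / |l|) • u + (δ / |l|) • (u + l • v)‖ := by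
          rw [hid]
      _ ≤ ‖(1 - δ / |l|) • u‖ + ‖(δ / |l|) • (u + l • v)‖ := norm_add_le _ _
      _ = (1 - δ / |l|) * ‖u‖ + (δ / |l|) * ‖u + l • v‖ := by
          rw [norm_smul, norm_smul, Real.norm_eq_abs, Real.norm_eq_abs,
            abs_of_pos ht0, abs_of_nonneg (by linarith : (0:ℝ) ≤ 1 - δ / |l|)]
  have hsq : ‖u‖ ^ 2 - 2 * ε * ‖u‖ * (δ * ‖v‖) ≤ ‖u + (δ / |l| * l) • v‖ ^ 2 := by
    have h2 := h (δ / |l| * l) (le_of_eq habs)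
    rwa [norm_smul, Real.norm_eq_abs, habs] at h2
  have := eps_orth_extend_real ‖u‖ ‖u + l • v‖ ‖u + (δ / |l| * l) • v‖ ‖v‖ δ |l| ε
    (norm_nonneg _) (norm_nonneg _) (norm_nonneg _) (norm_nonneg _) hε hδ hl hconv hsq
  rw [norm_smul, Real.norm_eq_abs]
  linarith

set_option maxHeartbeats 1000000 in
set_option synthInstance.maxHeartbeats 400000 in
/-- **Theorem 6 ("moreover" part).** Under the hypotheses of the main part, if
additionally `x₀ ∈ M_A`, then `T ⊥_B^ε A` iff `Tx₀ ⊥_B^ε Ax₀`. -/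
theorem approx_BJ_orthogonality_Lideal_normAttaining
    {X Y : Type*} [NormedAddCommGroup X] [NormedSpace ℝ X]
    [NormedAddCommGroup Y] [NormedSpace ℝ Y]
    (hdimX : 2 ≤ Module.rank ℝ X) (hdimY : 2 ≤ Module.rank ℝ Y)
    (T : X →L[ℝ] Y) (x₀ : X) (hx₀ : ‖x₀‖ = 1)
    (hMT : {x : X | ‖x‖ = 1 ∧ ‖T x‖ = ‖T‖} = {x₀, -x₀})
    (P : X →L[ℝ] X)
    (hPidem : ∀ z : X, P (P z) = P z)
    (hPL : ∀ z : X, ‖z‖ = ‖P z‖ + ‖z - P z‖)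
    (hPrange : LinearMap.range (P : X →ₗ[ℝ] X) = Submodule.span ℝ ({x₀} : Set X))
    (hker : ‖T.comp (LinearMap.ker (P : X →ₗ[ℝ] X)).subtypeL‖ < ‖T‖)
    (A : X →L[ℝ] Y) (hx₀A : ‖A x₀‖ = ‖A‖)
    (ε : ℝ) (hε : ε ∈ Set.Ico (0 : ℝ) 1) :
    (∀ l : ℝ, ‖T‖ ^ 2 - 2 * ε * ‖T‖ * ‖l • A‖ ≤ ‖T + l • A‖ ^ 2) ↔
      (∀ l : ℝ, ‖T x₀‖ ^ 2 - 2 * ε * ‖T x₀‖ * ‖l • A x₀‖ ≤ ‖T x₀ + l • A x₀‖ ^ 2) := by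
  have hx0mem : x₀ ∈ {x : X | ‖x‖ = 1 ∧ ‖T x‖ = ‖T‖} := by
    rw [hMT]; left; rfl
  have hTx₀ : ‖T x₀‖ = ‖T‖ := hx0mem.2
  have hAsmul : ∀ l : ℝ, ‖l • A x₀‖ = ‖l • A‖ := fun l => by
    rw [norm_smul, norm_smul ((l : ℝ)) A, hx₀A]
  constructor
  · -- hard direction
    intro hT
    by_cases hAne : ‖A‖ = 0
    · have hA0 : A x₀ = 0 := norm_eq_zero.mp (by rw [hx₀A]; exact hAne)
      intro l
      simp [hA0]
    have hApos : 0 < ‖A‖ := lt_of_le_of_ne (norm_nonneg A) (Ne.symm hAne)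
    have hk : ‖T.comp (LinearMap.ker (P : X →ₗ[ℝ] X)).subtypeL‖ < ‖T‖ := hker
    set k := ‖T.comp (LinearMap.ker (P : X →ₗ[ℝ] X)).subtypeL‖ with hk_def
    have hk0 : 0 ≤ k := by rw [hk_def]; exact norm_nonneg (T.comp (LinearMap.ker (P : X →ₗ[ℝ] X)).subtypeL)
    set δ := (‖T‖ - k) / (2 * ‖A‖) with hδ_def
    have hδ : 0 < δ := div_pos (by linarith) (by positivity)
    refine eps_orth_extend (T x₀) (A x₀) ε δ hε.1 hδ ?_
    intro lam hlam
    -- the operator T + lam • A attains its norm at x₀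
    have hδA : δ * ‖A‖ = (‖T‖ - k) / 2 := by
      rw [hδ_def]; field_simp
    have hlamA : |lam| * ‖A‖ ≤ (‖T‖ - k) / 2 := by
      rw [← hδA]
      exact mul_le_mul_of_nonneg_right hlam (norm_nonneg A)
    have hSx₀ : ‖T‖ - |lam| * ‖A‖ ≤ ‖T x₀ + lam • A x₀‖ := by
      have h1 : ‖T x₀‖ - ‖lam • A x₀‖ ≤ ‖T x₀ + lam • A x₀‖ := by
        have h0 := norm_sub_norm_le (T x₀) (-(lam • A x₀))
        simp only [norm_neg, sub_neg_eq_add] at h0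
        exact h0
      rw [hTx₀, norm_smul, Real.norm_eq_abs, hx₀A] at h1
      exact h1
    have hmax : k + |lam| * ‖A‖ ≤ ‖T x₀ + lam • A x₀‖ := by linarith
    have hbound : ‖T + lam • A‖ ≤ ‖T x₀ + lam • A x₀‖ := by
      refine ContinuousLinearMap.opNorm_le_bound _ (norm_nonneg _) ?_
      intro x
      -- decompose x via the L-projection
      obtain ⟨t, ht⟩ : ∃ t : ℝ, t • x₀ = P x := by
        have hmem : P x ∈ LinearMap.range (P : X →ₗ[ℝ] X) := ⟨x, rfl⟩
        rw [hPrange] at hmem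
        exact Submodule.mem_span_singleton.mp hmem
      have hxker : x - P x ∈ LinearMap.ker (P : X →ₗ[ℝ] X) := by
        rw [LinearMap.mem_ker, ContinuousLinearMap.coe_coe]
        have : P (x - P x) = P x - P (P x) := map_sub P x (P x)
        rw [this, hPidem x, sub_self]
      have hTker : ‖T (x - P x)‖ ≤ k * ‖x - P x‖ := by
        have := (T.comp (LinearMap.ker (P : X →ₗ[ℝ] X)).subtypeL).le_opNorm ⟨x - P x, hxker⟩
        simpa using this
      have hnormPx : ‖P x‖ = |t| := by
        rw [← ht, norm_smul, Real.norm_eq_abs, hx₀, mul_one]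
      have hsum : |t| + ‖x - P x‖ = ‖x‖ := by
        rw [← hnormPx]; exact (hPL x).symm
      have hx_dec : x = t • x₀ + (x - P x) := by rw [ht]; abel
      calc ‖(T + lam • A) x‖
          = ‖t • ((T + lam • A) x₀) + (T + lam • A) (x - P x)‖ := by
            conv_lhs => rw [hx_dec]
            rw [map_add, map_smul]
        _ ≤ ‖t • ((T + lam • A) x₀)‖ + ‖(T + lam • A) (x - P x)‖ := norm_add_le _ _
        _ ≤ |t| * ‖T x₀ + lam • A x₀‖ + (k * ‖x - P x‖ + |lam| * ‖A‖ * ‖x - P x‖) := by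
            gcongr
            · simp only [ContinuousLinearMap.add_apply, ContinuousLinearMap.smul_apply,
                norm_smul, Real.norm_eq_abs]
              exact le_refl _
            · simp only [ContinuousLinearMap.add_apply, ContinuousLinearMap.smul_apply]
              calc ‖T (x - P x) + lam • A (x - P x)‖
                  ≤ ‖T (x - P x)‖ + ‖lam • A (x - P x)‖ := norm_add_le _ _
                _ ≤ k * ‖x - P x‖ + |lam| * ‖A‖ * ‖x - P x‖ := by
                    gcongr
                    rw [norm_smul, Real.norm_eq_abs, mul_assoc]
                    gcongr
                    exact A.le_opNorm _
        _ = |t| * ‖T x₀ + lam • A x₀‖ + (k + |lam| * ‖A‖) * ‖x - P x‖ := by ring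
        _ ≤ |t| * ‖T x₀ + lam • A x₀‖ + ‖T x₀ + lam • A x₀‖ * ‖x - P x‖ := by
            gcongr
        _ = ‖T x₀ + lam • A x₀‖ * (|t| + ‖x - P x‖) := by ring
        _ = ‖T x₀ + lam • A x₀‖ * ‖x‖ := by rw [hsum]
    have hop := hT lam
    have hsq : ‖T + lam • A‖ ^ 2 ≤ ‖T x₀ + lam • A x₀‖ ^ 2 :=
      pow_le_pow_left₀ (norm_nonneg _) hbound 2
    calc ‖T x₀‖ ^ 2 - 2 * ε * ‖T x₀‖ * ‖lam • A x₀‖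
        = ‖T‖ ^ 2 - 2 * ε * ‖T‖ * ‖lam • A‖ := by rw [hTx₀, hAsmul]
      _ ≤ ‖T + lam • A‖ ^ 2 := hop
      _ ≤ ‖T x₀ + lam • A x₀‖ ^ 2 := hsq
  · -- easy direction
    intro hpt l
    have h1 : ‖T x₀ + l • A x₀‖ ≤ ‖T + l • A‖ := by
      have := (T + l • A).le_opNorm x₀
      simpa [hx₀] using this
    have h2 := hpt l
    have h3 : ‖T x₀ + l • A x₀‖ ^ 2 ≤ ‖T + l • A‖ ^ 2 :=
      pow_le_pow_left₀ (norm_nonneg _) h1 2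
    rw [← hTx₀, ← hAsmul l]
    linarith
end

section
/- Let X and Y be real normed linear spaces of dimension at least 2, and let T be a bounded linear operator from X to Y whose norm attainment set is M_T = {x₀, −x₀} for some x₀ ∈ X with ‖x₀‖ = 1. Suppose P is an L-projection on X whose range is span{x₀}, and suppose that the restriction of T to ker(P) has norm strictly less than ‖T‖. Then for any bounded linear operator A from X to Y, T ⊥_B A if and only if Tx₀ ⊥_B Ax₀. -/
set_option synthInstance.maxHeartbeats 1000000
set_option maxHeartbeats 1000000


/-- **Corollary 7.** Let `X, Y` be real normed spaces of dimension ≥ 2, `T : X → Y`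
bounded linear with norm attainment set `{x₀, -x₀}` (`‖x₀‖ = 1`), `P` an L-projection
on `X` with range `span{x₀}` and `‖T|_{ker P}‖ < ‖T‖`. Then for any bounded linear
operator `A`, `T ⊥_B A` iff `Tx₀ ⊥_B Ax₀`. -/
theorem BJ_orthogonality_Lideal
    {X Y : Type*} [NormedAddCommGroup X] [NormedSpace ℝ X]
    [NormedAddCommGroup Y] [NormedSpace ℝ Y]
    (hdimX : 2 ≤ Module.rank ℝ X) (hdimY : 2 ≤ Module.rank ℝ Y)
    (T : X →L[ℝ] Y) (x₀ : X) (hx₀ : ‖x₀‖ = 1)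
    (hMT : {x : X | ‖x‖ = 1 ∧ ‖T x‖ = ‖T‖} = {x₀, -x₀})
    (P : X →L[ℝ] X)
    (hPidem : ∀ z : X, P (P z) = P z)
    (hPL : ∀ z : X, ‖z‖ = ‖P z‖ + ‖z - P z‖)
    (hPrange : LinearMap.range (P : X →ₗ[ℝ] X) = Submodule.span ℝ ({x₀} : Set X))
    (hker : ‖T.comp (LinearMap.ker (P : X →ₗ[ℝ] X)).subtypeL‖ < ‖T‖)
    (A : X →L[ℝ] Y) :
    (∀ l : ℝ, ‖T‖ ≤ ‖T + l • A‖) ↔ (∀ l : ℝ, ‖T x₀‖ ≤ ‖T x₀ + l • A x₀‖) := by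
  have hTx₀ : ‖T x₀‖ = ‖T‖ := by
    have hx : x₀ ∈ ({x₀, -x₀} : Set X) := Or.inl rfl
    rw [← hMT] at hx
    exact hx.2
  constructor
  · intro h
    by_contra hc
    push_neg at hc
    obtain ⟨l₀, hl₀⟩ := hc
    rw [hTx₀] at hl₀
    set c := ‖T.comp (LinearMap.ker (P : X →ₗ[ℝ] X)).subtypeL‖ with hc_def
    have hc0 : 0 ≤ c := hc_def ▸ ContinuousLinearMap.opNorm_nonneg _
    set δ := ‖T‖ - ‖T x₀ + l₀ • A x₀‖ with hδdef
    have hδ : 0 < δ := sub_pos.mpr hl₀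
    set D := |l₀| * ‖A‖ + 1 with hD
    have hD1 : (1 : ℝ) ≤ D := le_add_of_nonneg_left (by positivity)
    have hD0 : (0 : ℝ) < D := lt_of_lt_of_le one_pos hD1
    set t := min 1 ((‖T‖ - c) / D) with htdef
    have ht0 : 0 < t := lt_min one_pos (div_pos (sub_pos.mpr hker) hD0)
    have ht1 : t ≤ 1 := min_le_left _ _
    have htD : t * D ≤ ‖T‖ - c := by
      calc t * D ≤ ((‖T‖ - c) / D) * D := by
            exact mul_le_mul_of_nonneg_right (min_le_right _ _) hD0.le
        _ = ‖T‖ - c := div_mul_cancel₀ _ (ne_of_gt hD0)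
    have htT : t ≤ ‖T‖ - c := le_trans (le_mul_of_one_le_right ht0.le hD1) htD
    set lam := t * l₀ with hlamdef
    -- bound at x₀
    have hx₀bound : ‖T x₀ + lam • A x₀‖ ≤ ‖T‖ - t * δ := by
      have heq : T x₀ + lam • A x₀
          = (1 - t) • T x₀ + t • (T x₀ + l₀ • A x₀) := by
        rw [hlamdef]; module
      rw [heq]
      calc ‖(1 - t) • T x₀ + t • (T x₀ + l₀ • A x₀)‖
          ≤ ‖(1 - t) • T x₀‖ + ‖t • (T x₀ + l₀ • A x₀)‖ := norm_add_le _ _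
        _ = (1 - t) * ‖T x₀‖ + t * ‖T x₀ + l₀ • A x₀‖ := by
            rw [norm_smul, norm_smul, Real.norm_eq_abs, Real.norm_eq_abs,
              abs_of_nonneg (by linarith), abs_of_nonneg ht0.le]
        _ ≤ ‖T‖ - t * δ := by rw [hTx₀]; nlinarith
    -- bound on kernel
    have hkerb : ∀ w (hw : w ∈ LinearMap.ker (P : X →ₗ[ℝ] X)), ‖T w‖ ≤ c * ‖w‖ := by
      intro w hw
      have := (T.comp (LinearMap.ker (P : X →ₗ[ℝ] X)).subtypeL).le_opNorm ⟨w, hw⟩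
      simpa using this
    set K := max (‖T‖ - t * δ) (‖T‖ - t) with hK
    have hKT : K < ‖T‖ := max_lt (by nlinarith) (by linarith)
    have hK0 : 0 ≤ K := le_trans (by linarith) (le_max_right _ _)
    have hbound : ∀ x : X, ‖(T + lam • A) x‖ ≤ K * ‖x‖ := by
      intro x
      have hmem : P x ∈ Submodule.span ℝ ({x₀} : Set X) := by
        rw [← hPrange]; exact ⟨x, rfl⟩
      obtain ⟨a, ha⟩ := Submodule.mem_span_singleton.mp hmem
      set w := x - P x with hwdef
      have hwker : w ∈ LinearMap.ker (P : X →ₗ[ℝ] X) := by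
        simp [hwdef, LinearMap.mem_ker, map_sub, hPidem]
      have hxw : x = a • x₀ + w := by rw [hwdef, ha]; abel
      have hnorm : ‖x‖ = |a| + ‖w‖ := by
        have hPa : ‖P x‖ = |a| := by
          rw [← ha, norm_smul, hx₀, Real.norm_eq_abs, mul_one]
        rw [hPL x, hPa]
      have h1 : ‖(T + lam • A) (a • x₀)‖ ≤ |a| * (‖T‖ - t * δ) := by
        have : (T + lam • A) (a • x₀) = a • (T x₀ + lam • A x₀) := by
          simp [smul_add, smul_smul, mul_comm]
        rw [this, norm_smul, Real.norm_eq_abs]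
        exact mul_le_mul_of_nonneg_left hx₀bound (abs_nonneg a)
      have h2 : ‖(T + lam • A) w‖ ≤ (‖T‖ - t) * ‖w‖ := by
        have hlamabs : |lam| = t * |l₀| := by
          rw [hlamdef, abs_mul, abs_of_pos ht0]
        calc ‖(T + lam • A) w‖ = ‖T w + lam • A w‖ := by simp
          _ ≤ ‖T w‖ + ‖lam • A w‖ := norm_add_le _ _
          _ ≤ c * ‖w‖ + |lam| * (‖A‖ * ‖w‖) := by
              refine add_le_add (hkerb w hwker) ?_
              rw [norm_smul, Real.norm_eq_abs]
              exact mul_le_mul_of_nonneg_left (A.le_opNorm w) (abs_nonneg _)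
          _ = (c + t * (|l₀| * ‖A‖)) * ‖w‖ := by rw [hlamabs]; ring
          _ ≤ (‖T‖ - t) * ‖w‖ := by
              refine mul_le_mul_of_nonneg_right ?_ (norm_nonneg w)
              have : t * (|l₀| * ‖A‖) + t ≤ ‖T‖ - c := by
                calc t * (|l₀| * ‖A‖) + t = t * D := by rw [hD]; ring
                  _ ≤ ‖T‖ - c := htD
              linarith
      calc ‖(T + lam • A) x‖ = ‖(T + lam • A) (a • x₀) + (T + lam • A) w‖ := by
            rw [← map_add, ← hxw]
        _ ≤ ‖(T + lam • A) (a • x₀)‖ + ‖(T + lam • A) w‖ := norm_add_le _ _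
        _ ≤ |a| * (‖T‖ - t * δ) + (‖T‖ - t) * ‖w‖ := add_le_add h1 h2
        _ ≤ |a| * K + K * ‖w‖ := by
            refine add_le_add ?_ ?_
            · exact mul_le_mul_of_nonneg_left (le_max_left _ _) (abs_nonneg a)
            · exact mul_le_mul_of_nonneg_right (le_max_right _ _) (norm_nonneg w)
        _ = K * ‖x‖ := by rw [hnorm]; ring
    have hle : ‖T + lam • A‖ ≤ K := (T + lam • A).opNorm_le_bound hK0 hbound
    have := h lam
    linarith
  · intro h l
    calc ‖T‖ = ‖T x₀‖ := hTx₀.symm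
      _ ≤ ‖T x₀ + l • A x₀‖ := h l
      _ = ‖(T + l • A) x₀‖ := by simp
      _ ≤ ‖T + l • A‖ * ‖x₀‖ := (T + l • A).le_opNorm x₀
      _ = ‖T + l • A‖ := by rw [hx₀, mul_one]
end

section
/- Let X be a real reflexive Banach space and Y a real Banach space, both of dimension at least 2. Suppose K(X,Y), the space of compact linear operators from X to Y, is an M-ideal in L(X,Y), the space of bounded linear operators from X to Y. Let T ∈ L(X,Y) with ‖T‖ = 1 and dist(T, K(X,Y)) < 1, and suppose in addition that M_T = D ∪ (−D), where D is a closed connected subset of the unit sphere of X. Then for any A ∈ L(X,Y), T ⊥_B A if and only if there exists x ∈ M_T such that Tx ⊥_B Ax. -/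
open NormedSpace


section Aux

variable {X Y : Type*} [NormedAddCommGroup X] [NormedSpace ℝ X]
  [NormedAddCommGroup Y] [NormedSpace ℝ Y]

/-- The rank-one type functional `S ↦ y (S x)` on operators. -/
noncomputable def evFunc (x : X) (y : StrongDual ℝ Y) : StrongDual ℝ (X →L[ℝ] Y) :=
  LinearMap.mkContinuous
    { toFun := fun S => y (S x)
      map_add' := by intros; simp
      map_smul' := by intros; simp }
    (‖y‖ * ‖x‖) (fun S => by
      calc ‖y (S x)‖ ≤ ‖y‖ * ‖S x‖ := y.le_opNorm _
        _ ≤ ‖y‖ * (‖S‖ * ‖x‖) := by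
            have := S.le_opNorm x
            exact mul_le_mul_of_nonneg_left this (norm_nonneg y)
        _ = ‖y‖ * ‖x‖ * ‖S‖ := by ring)

@[simp] lemma evFunc_apply (x : X) (y : StrongDual ℝ Y) (S : X →L[ℝ] Y) :
    evFunc x y S = y (S x) := rfl

lemma norm_evFunc_le (x : X) (y : StrongDual ℝ Y) : ‖evFunc x y‖ ≤ ‖y‖ * ‖x‖ :=
  LinearMap.mkContinuous_norm_le _ (by positivity) _

/-- Approximate norm attainment on the closed unit ball. -/
lemma exists_approx (S : X →L[ℝ] Y) {ε : ℝ} (hε : 0 < ε) :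
    ∃ x : X, ‖x‖ ≤ 1 ∧ ‖S‖ - ε < ‖S x‖ := by
  by_contra h
  push_neg at h
  have h0 : (0 : ℝ) ≤ ‖S‖ - ε := by
    have := h 0 (by simp)
    simpa using this
  have hb : ‖S‖ ≤ ‖S‖ - ε := by
    refine S.opNorm_le_bound' h0 (fun x hx => ?_)
    have hxpos : 0 < ‖x‖ := lt_of_le_of_ne (norm_nonneg x) (Ne.symm hx)
    have hu : ‖(‖x‖⁻¹ • x)‖ ≤ 1 := by
      rw [norm_smul, norm_inv, norm_norm, inv_mul_cancel₀ (ne_of_gt hxpos)]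
    have h2 := h _ hu
    rw [map_smul, norm_smul, norm_inv, norm_norm] at h2
    calc ‖S x‖ = ‖x‖ * (‖x‖⁻¹ * ‖S x‖) := by field_simp
      _ ≤ ‖x‖ * (‖S‖ - ε) := mul_le_mul_of_nonneg_left h2 (norm_nonneg x)
      _ = (‖S‖ - ε) * ‖x‖ := by ring
  linarith

/-- The set of weak-star functionals induced by unit-ball pairs. -/
def evSet (X Y : Type*) [NormedAddCommGroup X] [NormedSpace ℝ X]
    [NormedAddCommGroup Y] [NormedSpace ℝ Y] : Set (WeakDual ℝ (X →L[ℝ] Y)) :=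
  {g | ∃ (x : X) (y : StrongDual ℝ Y), ‖x‖ ≤ 1 ∧ ‖y‖ ≤ 1 ∧
    g = StrongDual.toWeakDual (evFunc x y)}

lemma evSet_subset_ball :
    evSet X Y ⊆ WeakDual.toStrongDual ⁻¹' Metric.closedBall 0 1 := by
  rintro g ⟨x, y, hx, hy, rfl⟩
  simp only [Set.mem_preimage, Metric.mem_closedBall, dist_zero_right]
  have h1 : ‖WeakDual.toStrongDual (StrongDual.toWeakDual (evFunc x y))‖
      = ‖evFunc x y‖ := rfl
  rw [dist_zero_right (E := StrongDual ℝ (X →L[ℝ] Y)), h1]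
  have := norm_evFunc_le x y
  nlinarith [norm_nonneg x, norm_nonneg y]

lemma closure_evSet_subset_ball :
    closure (evSet X Y) ⊆ WeakDual.toStrongDual ⁻¹' Metric.closedBall 0 1 :=
  closure_minimal evSet_subset_ball (WeakDual.isClosed_closedBall 0 1)

lemma isCompact_closure_evSet : IsCompact (closure (evSet X Y)) :=
  (WeakDual.isCompact_closedBall (𝕜 := ℝ) (E := X →L[ℝ] Y) 0 1).of_isClosed_subset
    isClosed_closure closure_evSet_subset_ball

lemma norm_le_one_of_mem_closure_evSet {g : WeakDual ℝ (X →L[ℝ] Y)}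
    (hg : g ∈ closure (evSet X Y)) : ‖WeakDual.toStrongDual g‖ ≤ 1 := by
  have := closure_evSet_subset_ball hg
  simpa [Metric.mem_closedBall, dist_zero_right (E := StrongDual ℝ (X →L[ℝ] Y))] using this

/-- Cluster point extraction for sequences in the compact set. -/
lemma cluster_evSet (g : ℕ → WeakDual ℝ (X →L[ℝ] Y))
    (hg : ∀ n, g n ∈ closure (evSet X Y)) :
    ∃ e ∈ closure (evSet X Y), ∃ Uu : Ultrafilter ℕ,
      ↑Uu ≤ (Filter.atTop : Filter ℕ) ∧ Filter.Tendsto g ↑Uu (nhds e) := by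
  obtain ⟨Uu, hUu⟩ := Filter.exists_ultrafilter_le (Filter.atTop : Filter ℕ)
  have hle : ↑(Uu.map g) ≤ Filter.principal (closure (evSet X Y)) := by
    rw [Filter.le_principal_iff]
    exact Filter.mem_map.2 (Filter.univ_mem' hg)
  obtain ⟨e, heC, hlim⟩ := isCompact_closure_evSet.ultrafilter_le_nhds (Uu.map g) hle
  refine ⟨e, heC, Uu, hUu, ?_⟩
  rwa [Filter.Tendsto, ← Ultrafilter.coe_map]

/-- Every operator norm is attained by some functional in the closure. -/
lemma attain_evSet (S : X →L[ℝ] Y) :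
    ∃ g ∈ closure (evSet X Y), WeakDual.toStrongDual g S = ‖S‖ := by
  rcases eq_or_ne ‖S‖ 0 with hS | hS
  · refine ⟨StrongDual.toWeakDual (evFunc (0 : X) (0 : StrongDual ℝ Y)),
      subset_closure ⟨0, 0, by simp, by simp, rfl⟩, ?_⟩
    have : WeakDual.toStrongDual
        (StrongDual.toWeakDual (evFunc (0 : X) (0 : StrongDual ℝ Y))) S
        = (0 : StrongDual ℝ Y) (S 0) := rfl
    rw [this, hS]; simp
  · have hSpos : 0 < ‖S‖ := lt_of_le_of_ne (norm_nonneg S) (Ne.symm hS)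
    have hch : ∀ n : ℕ, ∃ g ∈ evSet X Y,
        ‖S‖ - ‖S‖ / (n + 1) < WeakDual.toStrongDual g S ∧
          WeakDual.toStrongDual g S ≤ ‖S‖ := by
      intro n
      have hεpos : 0 < ‖S‖ / (n + 2) := by positivity
      obtain ⟨x, hx1, hx2⟩ := exists_approx S hεpos
      have hlow : 0 < ‖S‖ - ‖S‖ / (n + 2) := by
        have h2 : ‖S‖ / (n + 2) ≤ ‖S‖ / 2 := by
          apply div_le_div_of_nonneg_left (le_of_lt hSpos) (by norm_num)
          · norm_num
        linarith
      have hSx : S x ≠ 0 := by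
        intro h0
        rw [h0, norm_zero] at hx2
        linarith
      obtain ⟨y, hy1, hy2'⟩ := exists_dual_vector ℝ (S x) (norm_ne_zero_iff.mpr hSx)
      have hy2 : y (S x) = ‖S x‖ := by exact_mod_cast hy2'
      refine ⟨StrongDual.toWeakDual (evFunc x y), ⟨x, y, hx1, hy1.le, rfl⟩, ?_, ?_⟩
      · have hval : WeakDual.toStrongDual (StrongDual.toWeakDual (evFunc x y)) S
            = ‖S x‖ := by
          have : WeakDual.toStrongDual (StrongDual.toWeakDual (evFunc x y)) S
              = y (S x) := rfl
          rw [this, hy2]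
        rw [hval]
        have hmono : ‖S‖ / ((n : ℝ) + 2) ≤ ‖S‖ / (n + 1) := by
          apply div_le_div_of_nonneg_left (le_of_lt hSpos) (by positivity)
          · linarith
        linarith
      · have hval : WeakDual.toStrongDual (StrongDual.toWeakDual (evFunc x y)) S
            = y (S x) := rfl
        rw [hval]
        calc y (S x) ≤ |y (S x)| := le_abs_self _
          _ = ‖y (S x)‖ := (Real.norm_eq_abs _).symm
          _ ≤ ‖y‖ * ‖S x‖ := y.le_opNorm _
          _ = ‖S x‖ := by rw [hy1, one_mul]
          _ ≤ ‖S‖ * ‖x‖ := S.le_opNorm x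
          _ ≤ ‖S‖ * 1 := mul_le_mul_of_nonneg_left hx1 (norm_nonneg S)
          _ = ‖S‖ := mul_one _
    choose g hgE hgl hgu using hch
    obtain ⟨e, heC, Uu, hUule, hUlim⟩ := cluster_evSet g (fun n => subset_closure (hgE n))
    have hev : Filter.Tendsto (fun n => WeakDual.toStrongDual (g n) S) ↑Uu
        (nhds (WeakDual.toStrongDual e S)) :=
      ((WeakDual.eval_continuous S).tendsto e).comp hUlim
    have hlow : Filter.Tendsto (fun n : ℕ => ‖S‖ - ‖S‖ / (n + 1)) Filter.atTop
        (nhds ‖S‖) := by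
      have h1 : Filter.Tendsto (fun n : ℕ => ‖S‖ / (n + 1)) Filter.atTop (nhds 0) := by
        have h2 : Filter.Tendsto (fun n : ℕ => ‖S‖ * (1 / (n + 1))) Filter.atTop
            (nhds (‖S‖ * 0)) :=
          tendsto_one_div_add_atTop_nhds_zero_nat.const_mul ‖S‖
        simpa [div_eq_mul_inv, one_div] using h2
      simpa using ((tendsto_const_nhds :
        Filter.Tendsto (fun _ : ℕ => ‖S‖) Filter.atTop (nhds ‖S‖)).sub h1)
    have hsq : Filter.Tendsto (fun n => WeakDual.toStrongDual (g n) S) Filter.atTop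
        (nhds ‖S‖) := by
      apply tendsto_of_tendsto_of_tendsto_of_le_of_le hlow tendsto_const_nhds
      · exact fun n => (hgl n).le
      · exact hgu
    exact ⟨e, heC, tendsto_nhds_unique hev (hsq.mono_left hUule)⟩

end Aux

section Struct

variable {X Y : Type*} [NormedAddCommGroup X] [NormedSpace ℝ X] [CompleteSpace X]
  [NormedAddCommGroup Y] [NormedSpace ℝ Y] [CompleteSpace Y]

set_option maxHeartbeats 2000000 in
/-- Any functional in the weak-star closure of the rank-one functionals which attains
value `1 = ‖T‖` at `T` is itself a rank-one functional, given the M-ideal structure. -/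
lemma struct_evSet
    (hrefl : Function.Surjective (NormedSpace.inclusionInDoubleDual ℝ X))
    (P : StrongDual ℝ (X →L[ℝ] Y) →L[ℝ] StrongDual ℝ (X →L[ℝ] Y))
    (hPidem : ∀ f, P (P f) = P f)
    (hPL : ∀ f, ‖f‖ = ‖P f‖ + ‖f - P f‖)
    (hPrange : Set.range ⇑P =
      {f : StrongDual ℝ (X →L[ℝ] Y) | ∀ K : X →L[ℝ] Y, IsCompactOperator ⇑K → f K = 0})
    (T : X →L[ℝ] Y) (hT : ‖T‖ = 1)
    (hdist : Metric.infDist T {K : X →L[ℝ] Y | IsCompactOperator ⇑K} < 1)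
    (e : WeakDual ℝ (X →L[ℝ] Y)) (heC : e ∈ closure (evSet X Y))
    (heT : WeakDual.toStrongDual e T = 1) :
    ∃ (x : X) (y : StrongDual ℝ Y), ‖x‖ = 1 ∧ ‖y‖ = 1 ∧
      WeakDual.toStrongDual e = evFunc x y := by
  classical
  set eD : StrongDual ℝ (X →L[ℝ] Y) := WeakDual.toStrongDual e with heDdef
  have hen : ‖eD‖ ≤ 1 := norm_le_one_of_mem_closure_evSet heC
  have hannr : ∀ h : StrongDual ℝ (X →L[ℝ] Y), h ∈ Set.range ⇑P →
      ∀ K : X →L[ℝ] Y, IsCompactOperator ⇑K → h K = 0 := by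
    intro h hh
    rw [hPrange] at hh
    exact hh
  have hCOne : {K : X →L[ℝ] Y | IsCompactOperator ⇑K}.Nonempty :=
    ⟨0, isCompactOperator_zero⟩
  obtain ⟨K₀, hK₀mem, hK₀dist⟩ := (Metric.infDist_lt_iff hCOne).1 hdist
  have hK₀ : IsCompactOperator ⇑K₀ := hK₀mem
  -- P eD = 0
  have hPe : P eD = 0 := by
    by_contra hne
    have ha : 0 < ‖P eD‖ :=
      lt_of_le_of_ne (norm_nonneg (E := StrongDual ℝ (X →L[ℝ] Y)) _) (fun h => hne ((norm_eq_zero (E := StrongDual ℝ (X →L[ℝ] Y))).1 h.symm))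
    have h1 : P eD T = P eD (T - K₀) := by
      have h0 := hannr (P eD) ⟨eD, rfl⟩ K₀ hK₀
      rw [map_sub, h0, sub_zero]
    have h2 : P eD (T - K₀) ≤ ‖P eD‖ * ‖T - K₀‖ := by
      calc P eD (T - K₀) ≤ |P eD (T - K₀)| := le_abs_self _
        _ = ‖P eD (T - K₀)‖ := (Real.norm_eq_abs _).symm
        _ ≤ ‖P eD‖ * ‖T - K₀‖ := (P eD).le_opNorm _
    have h3 : ‖T - K₀‖ < 1 := by rwa [← dist_eq_norm]
    have h4 : ‖P eD‖ * ‖T - K₀‖ < ‖P eD‖ := by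
      calc ‖P eD‖ * ‖T - K₀‖ < ‖P eD‖ * 1 := mul_lt_mul_of_pos_left h3 ha
        _ = ‖P eD‖ := mul_one _
    have h5 : (eD - P eD) T ≤ ‖eD - P eD‖ := by
      calc (eD - P eD) T ≤ |(eD - P eD) T| := le_abs_self _
        _ = ‖(eD - P eD) T‖ := (Real.norm_eq_abs _).symm
        _ ≤ ‖eD - P eD‖ * ‖T‖ := (eD - P eD).le_opNorm _
        _ = ‖eD - P eD‖ := by rw [hT, mul_one]
    have h6 : ‖P eD‖ + ‖eD - P eD‖ ≤ 1 := by
      rw [← hPL eD]; exact hen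
    have h7 : eD T = P eD T + (eD - P eD) T := by
      simp
    rw [heT] at h7
    linarith
  -- ultrafilter representation of e
  obtain ⟨U, hUE, hUe⟩ := mem_closure_iff_ultrafilter.1 heC
  have hselaux : ∀ g : WeakDual ℝ (X →L[ℝ] Y), ∃ q : X × StrongDual ℝ Y,
      ‖q.1‖ ≤ 1 ∧ ‖q.2‖ ≤ 1 ∧
        (g ∈ evSet X Y → g = StrongDual.toWeakDual (evFunc q.1 q.2)) := by
    intro g
    by_cases hg : g ∈ evSet X Y
    · obtain ⟨x, y, hx, hy, hgxy⟩ := hg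
      exact ⟨(x, y), hx, hy, fun _ => hgxy⟩
    · exact ⟨(0, 0), by simp, by simp, fun h => absurd h hg⟩
  choose q hq1 hq2 hq3 using hselaux
  -- limit in the double dual of X
  have hF1mem : ∀ g : WeakDual ℝ (X →L[ℝ] Y),
      StrongDual.toWeakDual (inclusionInDoubleDual ℝ X (q g).1) ∈
        (WeakDual.toStrongDual ⁻¹' Metric.closedBall 0 1 :
          Set (WeakDual ℝ (StrongDual ℝ X))) := by
    intro g
    simp only [Set.mem_preimage, Metric.mem_closedBall, dist_zero_right]
    rw [dist_zero_right (E := StrongDual ℝ (StrongDual ℝ X))]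
    calc ‖WeakDual.toStrongDual
          (StrongDual.toWeakDual (inclusionInDoubleDual ℝ X (q g).1))‖
        = ‖inclusionInDoubleDual ℝ X (q g).1‖ := rfl
      _ ≤ ‖(q g).1‖ := double_dual_bound ℝ X _
      _ ≤ 1 := hq1 g
  obtain ⟨xdd, hxddmem, hxddlim⟩ :=
    (WeakDual.isCompact_closedBall (𝕜 := ℝ) (E := StrongDual ℝ X) 0 1).ultrafilter_le_nhds
      (U.map fun g => StrongDual.toWeakDual (inclusionInDoubleDual ℝ X (q g).1))
      (by
        rw [Filter.le_principal_iff]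
        exact Filter.mem_map.2 (Filter.univ_mem' hF1mem))
  have hxddlim' : Filter.Tendsto
      (fun g => StrongDual.toWeakDual (inclusionInDoubleDual ℝ X (q g).1)) ↑U
      (nhds xdd) := by
    rwa [Filter.Tendsto, ← Ultrafilter.coe_map]
  obtain ⟨x, hxeq⟩ := hrefl (WeakDual.toStrongDual xdd)
  have hxddnorm : ‖WeakDual.toStrongDual xdd‖ ≤ 1 := by
    simpa [Metric.mem_closedBall, dist_zero_right] using hxddmem
  have hxnorm_le : ‖x‖ ≤ 1 := by
    by_cases hx0 : x = 0
    · simp [hx0]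
    · obtain ⟨fx, hfx1, hfx2'⟩ := exists_dual_vector ℝ x (norm_ne_zero_iff.mpr hx0)
      have hfx2 : fx x = ‖x‖ := by exact_mod_cast hfx2'
      calc ‖x‖ = fx x := hfx2.symm
        _ = (inclusionInDoubleDual ℝ X x) fx := (NormedSpace.dual_def ℝ X x fx).symm
        _ = (WeakDual.toStrongDual xdd) fx := by rw [hxeq]
        _ ≤ |(WeakDual.toStrongDual xdd) fx| := le_abs_self _
        _ = ‖(WeakDual.toStrongDual xdd) fx‖ := (Real.norm_eq_abs _).symm
        _ ≤ ‖WeakDual.toStrongDual xdd‖ * ‖fx‖ := (WeakDual.toStrongDual xdd).le_opNorm _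
        _ ≤ 1 * 1 := by
            refine mul_le_mul hxddnorm (le_of_eq hfx1) (norm_nonneg _) (by norm_num)
        _ = 1 := by norm_num
  have hxddev : ∀ f : StrongDual ℝ X,
      Filter.Tendsto (fun g => f ((q g).1)) ↑U (nhds (f x)) := by
    intro f
    have h1 : Filter.Tendsto
        (fun g => (StrongDual.toWeakDual (inclusionInDoubleDual ℝ X (q g).1)) f)
        ↑U (nhds (xdd f)) :=
      ((WeakDual.eval_continuous f).tendsto xdd).comp hxddlim'
    have h2 : xdd f = f x := by
      have : xdd f = (WeakDual.toStrongDual xdd) f := rfl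
      rw [this, ← hxeq, NormedSpace.dual_def]
    rw [h2] at h1
    exact h1
  -- limit in the dual of Y
  have hF2mem : ∀ g : WeakDual ℝ (X →L[ℝ] Y),
      StrongDual.toWeakDual (q g).2 ∈
        (WeakDual.toStrongDual ⁻¹' Metric.closedBall 0 1 : Set (WeakDual ℝ Y)) := by
    intro g
    simp only [Set.mem_preimage, Metric.mem_closedBall, dist_zero_right]
    exact hq2 g
  obtain ⟨yw, hywmem, hywlim⟩ :=
    (WeakDual.isCompact_closedBall (𝕜 := ℝ) (E := Y) 0 1).ultrafilter_le_nhds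
      (U.map fun g => StrongDual.toWeakDual (q g).2)
      (by
        rw [Filter.le_principal_iff]
        exact Filter.mem_map.2 (Filter.univ_mem' hF2mem))
  have hywlim' : Filter.Tendsto (fun g => StrongDual.toWeakDual (q g).2) ↑U
      (nhds yw) := by
    rwa [Filter.Tendsto, ← Ultrafilter.coe_map]
  set y : StrongDual ℝ Y := WeakDual.toStrongDual yw with hydef
  have hynorm_le : ‖y‖ ≤ 1 := by
    simpa [Metric.mem_closedBall, dist_zero_right] using hywmem
  have hywev : ∀ v : Y, Filter.Tendsto (fun g => (q g).2 v) ↑U (nhds (y v)) := by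
    intro v
    exact ((WeakDual.eval_continuous v).tendsto yw).comp hywlim'
  -- agreement on compact operators
  have hagree : ∀ Kc : X →L[ℝ] Y, IsCompactOperator ⇑Kc → eD Kc = y (Kc x) := by
    intro Kc hKc
    have hKc' : IsCompactOperator ⇑(Kc : X →ₗ[ℝ] Y) := hKc
    obtain ⟨S, hScomp, hSsub⟩ := hKc'.image_closedBall_subset_compact 1
    have hφmem : ∀ g : WeakDual ℝ (X →L[ℝ] Y), Kc ((q g).1) ∈ S := by
      intro g
      refine hSsub ⟨(q g).1, ?_, rfl⟩
      simpa [Metric.mem_closedBall, dist_zero_right] using hq1 g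
    obtain ⟨z, hzS, hzlim⟩ := hScomp.ultrafilter_le_nhds
      (U.map fun g => Kc ((q g).1))
      (by
        rw [Filter.le_principal_iff]
        exact Filter.mem_map.2 (Filter.univ_mem' hφmem))
    have hzlim' : Filter.Tendsto (fun g => Kc ((q g).1)) ↑U (nhds z) := by
      rwa [Filter.Tendsto, ← Ultrafilter.coe_map]
    have hz : z = Kc x := by
      rw [NormedSpace.eq_iff_forall_dual_eq ℝ]
      intro f
      have t1 : Filter.Tendsto (fun g => f (Kc ((q g).1))) ↑U (nhds (f z)) :=
        (f.continuous.tendsto z).comp hzlim'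
      have t2 : Filter.Tendsto (fun g => (f.comp Kc) ((q g).1)) ↑U
          (nhds ((f.comp Kc) x)) := hxddev (f.comp Kc)
      exact tendsto_nhds_unique t1 t2
    have hnormlim : Filter.Tendsto (fun g => ‖Kc ((q g).1) - Kc x‖) ↑U (nhds 0) := by
      rw [hz] at hzlim'
      have h2 : Filter.Tendsto (fun g => Kc ((q g).1) - Kc x) ↑U (nhds 0) := by
        simpa using hzlim'.sub_const (Kc x)
      simpa using h2.norm
    have t3 : Filter.Tendsto (fun g => (q g).2 (Kc x)) ↑U (nhds (y (Kc x))) :=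
      hywev (Kc x)
    have t4 : Filter.Tendsto (fun g => (q g).2 (Kc ((q g).1))) ↑U (nhds (y (Kc x))) := by
      have hdiff : Filter.Tendsto
          (fun g => (q g).2 (Kc ((q g).1)) - (q g).2 (Kc x)) ↑U (nhds 0) := by
        apply squeeze_zero_norm (fun g => ?_) hnormlim
        calc ‖(q g).2 (Kc ((q g).1)) - (q g).2 (Kc x)‖
            = ‖(q g).2 (Kc ((q g).1) - Kc x)‖ := by rw [map_sub]
          _ ≤ ‖(q g).2‖ * ‖Kc ((q g).1) - Kc x‖ := (q g).2.le_opNorm _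
          _ ≤ 1 * ‖Kc ((q g).1) - Kc x‖ :=
              mul_le_mul_of_nonneg_right (hq2 g) (norm_nonneg _)
          _ = ‖Kc ((q g).1) - Kc x‖ := one_mul _
      simpa using hdiff.add t3
    have t5 : Filter.Tendsto (fun g : WeakDual ℝ (X →L[ℝ] Y) => g Kc) ↑U
        (nhds (eD Kc)) :=
      ((WeakDual.eval_continuous Kc).tendsto e).mono_left hUe
    have t6 : ∀ᶠ g in (↑U : Filter (WeakDual ℝ (X →L[ℝ] Y))),
        g Kc = (q g).2 (Kc ((q g).1)) := by
      filter_upwards [hUE] with g hg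
      conv_lhs => rw [hq3 g hg]
      rfl
    exact tendsto_nhds_unique (t5.congr' t6) t4
  -- e equals the rank-one functional
  have hdiffann : ∀ Kc : X →L[ℝ] Y, IsCompactOperator ⇑Kc →
      (evFunc x y - eD) Kc = 0 := by
    intro Kc h
    rw [ContinuousLinearMap.sub_apply, evFunc_apply, hagree Kc h, sub_self]
  have hmem : evFunc x y - eD ∈ Set.range ⇑P := by
    rw [hPrange]
    exact hdiffann
  obtain ⟨w, hw⟩ := hmem
  have hfix : P (evFunc x y - eD) = evFunc x y - eD := by rw [← hw, hPidem]
  have hPev : P (evFunc x y) = evFunc x y - eD := by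
    rw [map_sub, hPe, sub_zero] at hfix
    exact hfix
  have heD1 : ‖eD‖ = 1 := by
    refine le_antisymm hen ?_
    calc (1 : ℝ) = eD T := heT.symm
      _ ≤ |eD T| := le_abs_self _
      _ = ‖eD T‖ := (Real.norm_eq_abs _).symm
      _ ≤ ‖eD‖ * ‖T‖ := eD.le_opNorm _
      _ = ‖eD‖ := by rw [hT, mul_one]
  have hnorm3 : ‖evFunc x y‖ = ‖evFunc x y - eD‖ + 1 := by
    have h := hPL (evFunc x y)
    rw [hPev, sub_sub_cancel, heD1] at h
    exact h
  have hevle : ‖evFunc x y‖ ≤ 1 := by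
    have := norm_evFunc_le x y
    nlinarith [norm_nonneg x, norm_nonneg y]
  have hdz : evFunc x y - eD = 0 := by
    have h1 : ‖evFunc x y - eD‖ ≤ 0 := by linarith
    have h2 : ‖evFunc x y - eD‖ = 0 := le_antisymm h1 (norm_nonneg (E := StrongDual ℝ (X →L[ℝ] Y)) _)
    exact (norm_eq_zero (a := evFunc x y - eD)).1 h2
  have heq : eD = evFunc x y := (sub_eq_zero.1 hdz).symm
  have hprod : (1 : ℝ) ≤ ‖y‖ * ‖x‖ := by
    have h1 : ‖eD‖ ≤ ‖y‖ * ‖x‖ := by rw [heq]; exact norm_evFunc_le x y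
    rw [heD1] at h1
    exact h1
  have hx1 : ‖x‖ = 1 :=
    le_antisymm hxnorm_le (by nlinarith [norm_nonneg x, norm_nonneg y])
  have hy1 : ‖y‖ = 1 :=
    le_antisymm hynorm_le (by nlinarith [norm_nonneg x, norm_nonneg y])
  exact ⟨x, y, hx1, hy1, heq⟩

end Struct

section Main

variable {X Y : Type*} [NormedAddCommGroup X] [NormedSpace ℝ X] [CompleteSpace X]
  [NormedAddCommGroup Y] [NormedSpace ℝ Y] [CompleteSpace Y]

set_option maxHeartbeats 2000000 in
/-- One-sided Birkhoff-James orthogonality points in the norm attainment set. -/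
lemma one_sided_point
    (hrefl : Function.Surjective (NormedSpace.inclusionInDoubleDual ℝ X))
    (P : StrongDual ℝ (X →L[ℝ] Y) →L[ℝ] StrongDual ℝ (X →L[ℝ] Y))
    (hPidem : ∀ f, P (P f) = P f)
    (hPL : ∀ f, ‖f‖ = ‖P f‖ + ‖f - P f‖)
    (hPrange : Set.range ⇑P =
      {f : StrongDual ℝ (X →L[ℝ] Y) | ∀ K : X →L[ℝ] Y, IsCompactOperator ⇑K → f K = 0})
    (T : X →L[ℝ] Y) (hT : ‖T‖ = 1)
    (hdist : Metric.infDist T {K : X →L[ℝ] Y | IsCompactOperator ⇑K} < 1)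
    (A : X →L[ℝ] Y) (hBJ : ∀ l : ℝ, ‖T‖ ≤ ‖T + l • A‖)
    (s : ℝ) (hs : s = 1 ∨ s = -1) :
    ∃ x : X, (‖x‖ = 1 ∧ ‖T x‖ = 1) ∧
      ∀ l : ℝ, 0 ≤ s * l → ‖T x‖ ≤ ‖T x + l • A x‖ := by
  classical
  have hs2 : s * s = 1 := by rcases hs with rfl | rfl <;> norm_num
  have hsabs : |s| = 1 := by rcases hs with rfl | rfl <;> norm_num
  have hch : ∀ n : ℕ, ∃ g ∈ closure (evSet X Y),
      WeakDual.toStrongDual g (T + (s / (n + 1)) • A) = ‖T + (s / (n + 1)) • A‖ :=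
    fun n => attain_evSet _
  choose g hgC hgval using hch
  have hgn : ∀ n : ℕ, ‖WeakDual.toStrongDual (g n)‖ ≤ 1 :=
    fun n => norm_le_one_of_mem_closure_evSet (hgC n)
  have habs : ∀ (n : ℕ) (S : X →L[ℝ] Y), |WeakDual.toStrongDual (g n) S| ≤ ‖S‖ := by
    intro n S
    calc |WeakDual.toStrongDual (g n) S| = ‖WeakDual.toStrongDual (g n) S‖ :=
        (Real.norm_eq_abs _).symm
      _ ≤ ‖WeakDual.toStrongDual (g n)‖ * ‖S‖ := (WeakDual.toStrongDual (g n)).le_opNorm _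
      _ ≤ 1 * ‖S‖ := mul_le_mul_of_nonneg_right (hgn n) (norm_nonneg _)
      _ = ‖S‖ := one_mul _
  have hbasic : ∀ n : ℕ,
      1 - ‖A‖ / (n + 1) ≤ WeakDual.toStrongDual (g n) T ∧
      WeakDual.toStrongDual (g n) T ≤ 1 ∧
      0 ≤ s * WeakDual.toStrongDual (g n) A := by
    intro n
    have hnpos : (0 : ℝ) < (n : ℝ) + 1 := by positivity
    have hTA : WeakDual.toStrongDual (g n) T +
        (s / (n + 1)) * WeakDual.toStrongDual (g n) A = ‖T + (s / (n + 1)) • A‖ := by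
      rw [← hgval n, map_add, map_smul, smul_eq_mul]
    have hTub : WeakDual.toStrongDual (g n) T ≤ 1 := by
      have h1 := (le_abs_self _).trans (habs n T)
      rwa [hT] at h1
    have hge1 : (1 : ℝ) ≤ WeakDual.toStrongDual (g n) T +
        (s / (n + 1)) * WeakDual.toStrongDual (g n) A := by
      rw [hTA]
      have h9 := hBJ (s / (n + 1))
      rwa [hT] at h9
    have hsA : 0 ≤ (s / (n + 1)) * WeakDual.toStrongDual (g n) A := by linarith
    have hsgd : 0 ≤ s * WeakDual.toStrongDual (g n) A := by
      have h1 : ((n : ℝ) + 1) * ((s / (n + 1)) * WeakDual.toStrongDual (g n) A) =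
          s * WeakDual.toStrongDual (g n) A := by
        field_simp
      nlinarith
    refine ⟨?_, hTub, hsgd⟩
    have habs2 : (s / (n + 1)) * WeakDual.toStrongDual (g n) A ≤ ‖A‖ / (n + 1) := by
      have h1 : |(s / (n + 1)) * WeakDual.toStrongDual (g n) A| ≤ ‖A‖ / (n + 1) := by
        rw [abs_mul, abs_div, hsabs, abs_of_pos hnpos]
        have h2 : |WeakDual.toStrongDual (g n) A| ≤ ‖A‖ := habs n A
        calc 1 / ((n : ℝ) + 1) * |WeakDual.toStrongDual (g n) A|
            ≤ 1 / ((n : ℝ) + 1) * ‖A‖ := by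
              apply mul_le_mul_of_nonneg_left h2 (by positivity)
          _ = ‖A‖ / ((n : ℝ) + 1) := by ring
      linarith [le_abs_self ((s / ((n : ℝ) + 1)) * WeakDual.toStrongDual (g n) A)]
    linarith
  obtain ⟨e, heC, Uu, hUule, hUlim⟩ := cluster_evSet g hgC
  have hevT : Filter.Tendsto (fun n => WeakDual.toStrongDual (g n) T) ↑Uu
      (nhds (WeakDual.toStrongDual e T)) :=
    ((WeakDual.eval_continuous T).tendsto e).comp hUlim
  have hlow : Filter.Tendsto (fun n : ℕ => 1 - ‖A‖ / (n + 1)) Filter.atTop (nhds 1) := by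
    have h1 : Filter.Tendsto (fun n : ℕ => ‖A‖ / (n + 1)) Filter.atTop (nhds 0) := by
      have h2 : Filter.Tendsto (fun n : ℕ => ‖A‖ * (1 / (n + 1))) Filter.atTop
          (nhds (‖A‖ * 0)) := tendsto_one_div_add_atTop_nhds_zero_nat.const_mul ‖A‖
      simpa [div_eq_mul_inv, one_div] using h2
    simpa using ((tendsto_const_nhds :
      Filter.Tendsto (fun _ : ℕ => (1 : ℝ)) Filter.atTop (nhds 1)).sub h1)
  have hsq : Filter.Tendsto (fun n => WeakDual.toStrongDual (g n) T) Filter.atTop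
      (nhds 1) := by
    apply tendsto_of_tendsto_of_tendsto_of_le_of_le hlow tendsto_const_nhds
    · exact fun n => (hbasic n).1
    · exact fun n => (hbasic n).2.1
  have heT : WeakDual.toStrongDual e T = 1 :=
    tendsto_nhds_unique hevT (hsq.mono_left hUule)
  have hevA : Filter.Tendsto (fun n => WeakDual.toStrongDual (g n) A) ↑Uu
      (nhds (WeakDual.toStrongDual e A)) :=
    ((WeakDual.eval_continuous A).tendsto e).comp hUlim
  have heA : 0 ≤ s * WeakDual.toStrongDual e A :=
    ge_of_tendsto (hevA.const_mul s)
      (Filter.Eventually.of_forall fun n => (hbasic n).2.2)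
  obtain ⟨x, y, hx1, hy1, hexy⟩ :=
    struct_evSet hrefl P hPidem hPL hPrange T hT hdist e heC heT
  have hyT : y (T x) = 1 := by
    have h1 : WeakDual.toStrongDual e T = evFunc x y T := by rw [hexy]
    rw [← evFunc_apply x y T, ← h1, heT]
  have hyA : y (A x) = WeakDual.toStrongDual e A := by
    have h1 : WeakDual.toStrongDual e A = evFunc x y A := by rw [hexy]
    rw [← evFunc_apply x y A, h1]
  have hTx : ‖T x‖ = 1 := by
    refine le_antisymm ?_ ?_
    · calc ‖T x‖ ≤ ‖T‖ * ‖x‖ := T.le_opNorm x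
        _ = 1 := by rw [hT, hx1, mul_one]
    · calc (1 : ℝ) = y (T x) := hyT.symm
        _ ≤ |y (T x)| := le_abs_self _
        _ = ‖y (T x)‖ := (Real.norm_eq_abs _).symm
        _ ≤ ‖y‖ * ‖T x‖ := y.le_opNorm _
        _ = ‖T x‖ := by rw [hy1, one_mul]
  refine ⟨x, ⟨hx1, hTx⟩, ?_⟩
  intro l hl
  have hsign : 0 ≤ l * y (A x) := by
    rw [hyA]
    have h1 : 0 ≤ (s * l) * (s * WeakDual.toStrongDual e A) := mul_nonneg hl heA
    calc (0 : ℝ) ≤ (s * l) * (s * WeakDual.toStrongDual e A) := h1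
      _ = (s * s) * (l * WeakDual.toStrongDual e A) := by ring
      _ = l * WeakDual.toStrongDual e A := by rw [hs2, one_mul]
  calc ‖T x‖ = 1 := hTx
    _ ≤ 1 + l * y (A x) := by linarith
    _ = y (T x + l • A x) := by rw [map_add, map_smul, smul_eq_mul, hyT]
    _ ≤ |y (T x + l • A x)| := le_abs_self _
    _ = ‖y (T x + l • A x)‖ := (Real.norm_eq_abs _).symm
    _ ≤ ‖y‖ * ‖T x + l • A x‖ := y.le_opNorm _
    _ = ‖T x + l • A x‖ := by rw [hy1, one_mul]

end Main

set_option maxHeartbeats 1000000 in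
/-- **Theorem 8 (ii).** Under the hypotheses of Theorem 8 (i), if in addition
`M_T = D ∪ (-D)` for some closed connected subset `D` of the unit sphere of `X`,
then `T ⊥_B A` iff there exists `x ∈ M_T` with `Tx ⊥_B Ax`. -/
theorem BJ_orthogonality_Mideal_connected
    {X Y : Type*} [NormedAddCommGroup X] [NormedSpace ℝ X] [CompleteSpace X]
    [NormedAddCommGroup Y] [NormedSpace ℝ Y] [CompleteSpace Y]
    (hrefl : Function.Surjective (NormedSpace.inclusionInDoubleDual ℝ X))
    (hdimX : 2 ≤ Module.rank ℝ X) (hdimY : 2 ≤ Module.rank ℝ Y)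
    (P : StrongDual ℝ (X →L[ℝ] Y) →L[ℝ] StrongDual ℝ (X →L[ℝ] Y))
    (hPidem : ∀ f, P (P f) = P f)
    (hPL : ∀ f, ‖f‖ = ‖P f‖ + ‖f - P f‖)
    (hPrange : Set.range ⇑P =
      {f : StrongDual ℝ (X →L[ℝ] Y) | ∀ K : X →L[ℝ] Y, IsCompactOperator ⇑K → f K = 0})
    (T : X →L[ℝ] Y) (hT : ‖T‖ = 1)
    (hdist : Metric.infDist T {K : X →L[ℝ] Y | IsCompactOperator ⇑K} < 1)
    (D : Set X) (hDclosed : IsClosed D) (hDconn : IsConnected D)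
    (hDsphere : D ⊆ Metric.sphere (0 : X) 1)
    (hMT : {x : X | ‖x‖ = 1 ∧ ‖T x‖ = ‖T‖} = D ∪ (-D))
    (A : X →L[ℝ] Y) :
    (∀ l : ℝ, ‖T‖ ≤ ‖T + l • A‖) ↔
      ∃ x : X, (‖x‖ = 1 ∧ ‖T x‖ = ‖T‖) ∧ (∀ l : ℝ, ‖T x‖ ≤ ‖T x + l • A x‖) := by
  classical
  constructor
  · intro hBJ
    by_contra hcon
    push_neg at hcon
    obtain ⟨x₁, hx₁M, hx₁⟩ :=
      one_sided_point hrefl P hPidem hPL hPrange T hT hdist A hBJ 1 (Or.inl rfl)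
    obtain ⟨x₂, hx₂M, hx₂⟩ :=
      one_sided_point hrefl P hPidem hPL hPrange T hT hdist A hBJ (-1) (Or.inr rfl)
    set u : Set X := {z | ∃ l : ℝ, 0 < l ∧ ‖T z + l • A z‖ < 1} with hudef
    set v : Set X := {z | ∃ l : ℝ, l < 0 ∧ ‖T z + l • A z‖ < 1} with hvdef
    have hcontz : ∀ l : ℝ, Continuous fun z : X => ‖T z + l • A z‖ := fun l =>
      (T.continuous.add (A.continuous.const_smul l)).norm
    have huopen : IsOpen u := by
      have h1 : u = ⋃ l ∈ Set.Ioi (0 : ℝ), {z : X | ‖T z + l • A z‖ < 1} := by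
        ext z
        simp only [hudef, Set.mem_setOf_eq, Set.mem_iUnion, Set.mem_Ioi, exists_prop]
      rw [h1]
      exact isOpen_biUnion fun l _ => isOpen_lt (hcontz l) continuous_const
    have hvopen : IsOpen v := by
      have h1 : v = ⋃ l ∈ Set.Iio (0 : ℝ), {z : X | ‖T z + l • A z‖ < 1} := by
        ext z
        simp only [hvdef, Set.mem_setOf_eq, Set.mem_iUnion, Set.mem_Iio, exists_prop]
      rw [h1]
      exact isOpen_biUnion fun l _ => isOpen_lt (hcontz l) continuous_const
    have hDMT : ∀ z ∈ D, ‖z‖ = 1 ∧ ‖T z‖ = ‖T‖ := by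
      intro z hz
      have h1 : z ∈ {x : X | ‖x‖ = 1 ∧ ‖T x‖ = ‖T‖} := by
        rw [hMT]; exact Or.inl hz
      exact h1
    have hsymm : ∀ (z : X) (l : ℝ), ‖T (-z) + l • A (-z)‖ = ‖T z + l • A z‖ := by
      intro z l
      rw [map_neg, map_neg, smul_neg, ← neg_add, norm_neg]
    have hcover : D ⊆ u ∪ v := by
      intro z hz
      obtain ⟨l, hl⟩ := hcon z (hDMT z hz)
      have hTz : ‖T z‖ = 1 := by rw [(hDMT z hz).2, hT]
      rw [hTz] at hl
      rcases lt_trichotomy l 0 with h | h | h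
      · exact Or.inr ⟨l, h, hl⟩
      · exfalso
        rw [h, zero_smul, add_zero, hTz] at hl
        exact lt_irrefl _ hl
      · exact Or.inl ⟨l, h, hl⟩
    have hx₁D : ∃ z ∈ D, ∀ l : ℝ, 0 ≤ l → 1 ≤ ‖T z + l • A z‖ := by
      have hmem : x₁ ∈ D ∪ (-D) := by
        rw [← hMT]
        exact ⟨hx₁M.1, by rw [hx₁M.2, hT]⟩
      rcases hmem with h | h
      · refine ⟨x₁, h, fun l hl => ?_⟩
        have := hx₁ l (by linarith)
        rwa [hx₁M.2] at this
      · refine ⟨-x₁, Set.mem_neg.1 h, fun l hl => ?_⟩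
        rw [hsymm x₁ l]
        have := hx₁ l (by linarith)
        rwa [hx₁M.2] at this
    have hx₂D : ∃ z ∈ D, ∀ l : ℝ, l ≤ 0 → 1 ≤ ‖T z + l • A z‖ := by
      have hmem : x₂ ∈ D ∪ (-D) := by
        rw [← hMT]
        exact ⟨hx₂M.1, by rw [hx₂M.2, hT]⟩
      rcases hmem with h | h
      · refine ⟨x₂, h, fun l hl => ?_⟩
        have := hx₂ l (by nlinarith)
        rwa [hx₂M.2] at this
      · refine ⟨-x₂, Set.mem_neg.1 h, fun l hl => ?_⟩
        rw [hsymm x₂ l]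
        have := hx₂ l (by nlinarith)
        rwa [hx₂M.2] at this
    obtain ⟨z₁, hz₁D, hz₁⟩ := hx₁D
    obtain ⟨z₂, hz₂D, hz₂⟩ := hx₂D
    have hne_v : (D ∩ v).Nonempty := by
      refine ⟨z₁, hz₁D, ?_⟩
      rcases hcover hz₁D with h | h
      · obtain ⟨l, hl0, hl⟩ := h
        exact absurd hl (not_lt.2 (hz₁ l hl0.le))
      · exact h
    have hne_u : (D ∩ u).Nonempty := by
      refine ⟨z₂, hz₂D, ?_⟩
      rcases hcover hz₂D with h | h
      · exact h
      · obtain ⟨l, hl0, hl⟩ := h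
        exact absurd hl (not_lt.2 (hz₂ l hl0.le))
    obtain ⟨z, hzD, hzu, hzv⟩ :=
      hDconn.isPreconnected u v huopen hvopen hcover hne_u hne_v
    obtain ⟨l₁, hl₁0, hl₁⟩ := hzu
    obtain ⟨l₂, hl₂0, hl₂⟩ := hzv
    have hTz : ‖T z‖ = 1 := by rw [(hDMT z hzD).2, hT]
    have hkey : (l₁ - l₂) • T z = l₁ • (T z + l₂ • A z) - l₂ • (T z + l₁ • A z) := by
      rw [smul_add, smul_add, smul_smul, smul_smul, sub_smul, mul_comm l₂ l₁]
      abel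
    have hnorm : (l₁ - l₂) * ‖T z‖ ≤ l₁ * ‖T z + l₂ • A z‖ + (-l₂) * ‖T z + l₁ • A z‖ := by
      calc (l₁ - l₂) * ‖T z‖ = ‖(l₁ - l₂) • T z‖ := by
            rw [norm_smul, Real.norm_eq_abs, abs_of_pos (by linarith)]
        _ = ‖l₁ • (T z + l₂ • A z) - l₂ • (T z + l₁ • A z)‖ := by rw [hkey]
        _ ≤ ‖l₁ • (T z + l₂ • A z)‖ + ‖l₂ • (T z + l₁ • A z)‖ := norm_sub_le _ _
        _ = l₁ * ‖T z + l₂ • A z‖ + (-l₂) * ‖T z + l₁ • A z‖ := by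
            rw [norm_smul, norm_smul, Real.norm_eq_abs, Real.norm_eq_abs,
              abs_of_pos hl₁0, abs_of_neg hl₂0]
    rw [hTz, mul_one] at hnorm
    nlinarith [mul_lt_mul_of_pos_left hl₂ hl₁0, mul_lt_mul_of_pos_left hl₁ (neg_pos.2 hl₂0)]
  · rintro ⟨x, ⟨hx1, hx2⟩, hp⟩ l
    calc ‖T‖ = ‖T x‖ := hx2.symm
      _ ≤ ‖T x + l • A x‖ := hp l
      _ = ‖(T + l • A) x‖ := by simp
      _ ≤ ‖T + l • A‖ * ‖x‖ := (T + l • A).le_opNorm x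
      _ = ‖T + l • A‖ := by rw [hx1, mul_one]
end

section
/- Let X be a real reflexive Banach space and Y a real Banach space, both of dimension at least 2. Suppose K(X,Y), the space of compact linear operators from X to Y, is an M-ideal in L(X,Y), the space of bounded linear operators from X to Y. Let T ∈ L(X,Y) with ‖T‖ = 1 and dist(T, K(X,Y)) < 1, suppose M_T = D ∪ (−D) where D is a closed connected subset of the unit sphere of X, and let ε ∈ [0,1). Then for any A ∈ L(X,Y), T ⊥_B^ε A if and only if there exists x ∈ M_T such that ‖Tx + λAx‖² ≥ ‖T‖² − 2ε‖T‖·‖λA‖ for all real λ. -/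
open NormedSpace Filter Metric Set

section Key

variable {X Y : Type*} [NormedAddCommGroup X] [NormedSpace ℝ X] [CompleteSpace X]
    [NormedAddCommGroup Y] [NormedSpace ℝ Y] [CompleteSpace Y]

private lemma sqrt_lower {u : ℝ} (h0 : 0 ≤ u) (h1 : u ≤ 1/2) :
    1 - u/2 - u^2 ≤ Real.sqrt (1 - u) := by
  have hs := Real.sq_sqrt (show (0:ℝ) ≤ 1 - u by linarith)
  have hn := Real.sqrt_nonneg (1 - u)
  nlinarith [sq_nonneg (Real.sqrt (1 - u) - (1 - u/2 - u^2))]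

/- Key lemma -/
set_option maxHeartbeats 4000000 in
theorem key_lemma [Nontrivial Y]
    (hrefl : Function.Surjective (NormedSpace.inclusionInDoubleDual ℝ X))
    (P : StrongDual ℝ (X →L[ℝ] Y) →L[ℝ] StrongDual ℝ (X →L[ℝ] Y))
    (hPidem : ∀ f, P (P f) = P f)
    (hPL : ∀ f, ‖f‖ = ‖P f‖ + ‖f - P f‖)
    (hPrange : Set.range ⇑P =
      {f : StrongDual ℝ (X →L[ℝ] Y) | ∀ K : X →L[ℝ] Y, IsCompactOperator ⇑K → f K = 0})
    (T : X →L[ℝ] Y) (hT : ‖T‖ = 1)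
    (hdist : Metric.infDist T {K : X →L[ℝ] Y | IsCompactOperator ⇑K} < 1)
    (ε : ℝ) (hε0 : 0 ≤ ε) (A : X →L[ℝ] Y)
    (hBJ : ∀ l : ℝ, 0 ≤ l → 1 - 2 * ε * l * ‖A‖ ≤ ‖T + l • A‖ ^ 2) :
    ∃ x : X, ‖x‖ = 1 ∧ ‖T x‖ = 1 ∧
      ∀ t : ℝ, 0 ≤ t → 1 - ε * t * ‖A‖ ≤ ‖T x + t • A x‖ := by
  classical
  -- the sequence of parameters
  obtain ⟨t, ht_pos, ht0⟩ : ∃ t : ℕ → ℝ, (∀ n, 0 < t n) ∧ Tendsto t atTop (nhds 0) :=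
    ⟨fun n => 1 / ((n : ℝ) + 1), fun n => by positivity,
      tendsto_one_div_add_atTop_nhds_zero_nat⟩
  set B : ℕ → (X →L[ℝ] Y) := fun n => T + t n • A with hB_def
  have hBn : ∀ n, Real.sqrt (1 - 2 * ε * t n * ‖A‖) ≤ ‖B n‖ := by
    intro n
    have h1 := hBJ (t n) (ht_pos n).le
    calc Real.sqrt (1 - 2 * ε * t n * ‖A‖) ≤ Real.sqrt (‖B n‖ ^ 2) := Real.sqrt_le_sqrt h1
      _ = ‖B n‖ := Real.sqrt_sq (norm_nonneg _)
  -- choose near-norming vectors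
  have hxex : ∀ n, ∃ x : X, ‖x‖ ≤ 1 ∧ ‖B n‖ - (t n)^2 ≤ ‖B n x‖ := by
    intro n
    have hlt : ‖B n‖ - (t n)^2 < ‖B n‖ := by nlinarith [ht_pos n]
    obtain ⟨x, hx1, hx2⟩ := (B n).exists_lt_apply_of_lt_opNorm hlt
    exact ⟨x, hx1.le, hx2.le⟩
  choose xs hxs1 hxs2 using hxex
  -- choose supporting functionals
  choose ys hys1 hys2 using fun n => exists_dual_vector' ℝ (B n (xs n))
  -- the ultrafilter
  set U : Ultrafilter ℕ := Ultrafilter.of atTop with hU_def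
  have hU : (U : Filter ℕ) ≤ atTop := Ultrafilter.of_le _
  -- limits along the ultrafilter
  have hulim : ∀ (a : ℕ → ℝ) (c : ℝ), (∀ n, |a n| ≤ c) →
      ∃ L, |L| ≤ c ∧ Tendsto a U (nhds L) := by
    intro a c hc
    have hmem : Set.Icc (-c) c ∈ U.map a :=
      Ultrafilter.mem_map.2 (Filter.univ_mem' fun n => by
        simpa [Set.mem_Icc] using abs_le.mp (hc n))
    obtain ⟨L, hL, hLe⟩ := (isCompact_Icc : IsCompact (Set.Icc (-c) c)).ultrafilter_le_nhds'
      (U.map a) hmem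
    refine ⟨L, abs_le.2 ⟨hL.1, hL.2⟩, ?_⟩
    rwa [Filter.Tendsto, ← Ultrafilter.coe_map]
  -- basic bound
  have hb : ∀ (C : X →L[ℝ] Y) (n : ℕ), |ys n (C (xs n))| ≤ ‖C‖ := by
    intro C n
    have h1 : ‖ys n (C (xs n))‖ ≤ ‖ys n‖ * ‖C (xs n)‖ := (ys n).le_opNorm _
    have h2 : ‖C (xs n)‖ ≤ ‖C‖ * ‖xs n‖ := C.le_opNorm _
    have h3 : ‖C‖ * ‖xs n‖ ≤ ‖C‖ * 1 :=
      mul_le_mul_of_nonneg_left (hxs1 n) (norm_nonneg C)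
    rw [hys1 n, one_mul] at h1
    rw [← Real.norm_eq_abs]
    linarith
  -- the limit functional F
  choose F0 hF0 hF0t using fun C => hulim (fun n => ys n (C (xs n))) ‖C‖ (hb C)
  have hFadd : ∀ C₁ C₂ : X →L[ℝ] Y, F0 (C₁ + C₂) = F0 C₁ + F0 C₂ := by
    intro C₁ C₂
    refine tendsto_nhds_unique (hF0t (C₁ + C₂)) ?_
    have h := (hF0t C₁).add (hF0t C₂)
    simpa [ContinuousLinearMap.add_apply, map_add] using h
  have hFsmul : ∀ (c : ℝ) (C : X →L[ℝ] Y), F0 (c • C) = c * F0 C := by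
    intro c C
    refine tendsto_nhds_unique (hF0t (c • C)) ?_
    have h := (hF0t C).const_mul c
    simpa [ContinuousLinearMap.smul_apply, map_smul, smul_eq_mul] using h
  obtain ⟨F, hFapp, hFle⟩ : ∃ F : StrongDual ℝ (X →L[ℝ] Y), (∀ C, F C = F0 C) ∧ ‖F‖ ≤ 1 := by
    refine ⟨LinearMap.mkContinuous
      { toFun := F0, map_add' := hFadd,
        map_smul' := by intro c C; simpa [smul_eq_mul] using hFsmul c C } 1
      (fun C => by simpa [Real.norm_eq_abs, one_mul] using hF0 C), fun C => rfl, ?_⟩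
    exact LinearMap.mkContinuous_norm_le _ zero_le_one _
  have hFt : ∀ C : X →L[ℝ] Y, Tendsto (fun n => ys n (C (xs n))) U (nhds (F C)) := by
    intro C; rw [hFapp C]; exact hF0t C
  -- the weak limit point xb
  have hbg : ∀ (g : StrongDual ℝ X) (n : ℕ), |g (xs n)| ≤ ‖g‖ := by
    intro g n
    have h1 : ‖g (xs n)‖ ≤ ‖g‖ * ‖xs n‖ := g.le_opNorm _
    have h2 : ‖g‖ * ‖xs n‖ ≤ ‖g‖ * 1 := mul_le_mul_of_nonneg_left (hxs1 n) (norm_nonneg g)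
    rw [← Real.norm_eq_abs]; linarith
  choose Φ0 hΦ0 hΦ0t using fun g => hulim (fun n => g (xs n)) ‖g‖ (hbg g)
  have hΦadd : ∀ g₁ g₂ : StrongDual ℝ X, Φ0 (g₁ + g₂) = Φ0 g₁ + Φ0 g₂ := by
    intro g₁ g₂
    refine tendsto_nhds_unique (hΦ0t (g₁ + g₂)) ?_
    have h := (hΦ0t g₁).add (hΦ0t g₂)
    simpa [ContinuousLinearMap.add_apply] using h
  have hΦsmul : ∀ (c : ℝ) (g : StrongDual ℝ X), Φ0 (c • g) = c * Φ0 g := by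
    intro c g
    refine tendsto_nhds_unique (hΦ0t (c • g)) ?_
    have h := (hΦ0t g).const_mul c
    simpa [ContinuousLinearMap.smul_apply, smul_eq_mul] using h
  obtain ⟨Φ, hΦapp⟩ : ∃ Φ : StrongDual ℝ (StrongDual ℝ X), ∀ g, Φ g = Φ0 g :=
    ⟨LinearMap.mkContinuous
      { toFun := Φ0, map_add' := hΦadd,
        map_smul' := by intro c g; simpa [smul_eq_mul] using hΦsmul c g } 1
      (fun g => by simpa [Real.norm_eq_abs, one_mul] using hΦ0 g), fun g => rfl⟩
  obtain ⟨xb, hxb⟩ := hrefl Φ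
  have hxb_app : ∀ g : StrongDual ℝ X, g xb = Φ0 g := by
    intro g
    have h := congrArg (fun (F : StrongDual ℝ (StrongDual ℝ X)) => F g) hxb
    rw [← hΦapp g]
    simpa [NormedSpace.dual_def] using h
  have hxb_t : ∀ g : StrongDual ℝ X, Tendsto (fun n => g (xs n)) U (nhds (g xb)) := by
    intro g; rw [hxb_app g]; exact hΦ0t g
  have hxb_norm : ‖xb‖ ≤ 1 := by
    refine NormedSpace.norm_le_dual_bound ℝ xb zero_le_one (fun g => ?_)
    rw [hxb_app g]
    simpa [Real.norm_eq_abs, one_mul] using hΦ0 g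
  -- the weak-star limit functional ystar
  have hby : ∀ (w : Y) (n : ℕ), |ys n w| ≤ ‖w‖ := by
    intro w n
    have h1 : ‖ys n w‖ ≤ ‖ys n‖ * ‖w‖ := (ys n).le_opNorm _
    rw [hys1 n, one_mul] at h1
    rwa [← Real.norm_eq_abs]
  choose y0 hy0 hy0t using fun w => hulim (fun n => ys n w) ‖w‖ (hby w)
  have hyadd : ∀ w₁ w₂ : Y, y0 (w₁ + w₂) = y0 w₁ + y0 w₂ := by
    intro w₁ w₂
    refine tendsto_nhds_unique (hy0t (w₁ + w₂)) ?_
    have h := (hy0t w₁).add (hy0t w₂)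
    simpa [map_add] using h
  have hysmul : ∀ (c : ℝ) (w : Y), y0 (c • w) = c * y0 w := by
    intro c w
    refine tendsto_nhds_unique (hy0t (c • w)) ?_
    have h := (hy0t w).const_mul c
    simpa [map_smul, smul_eq_mul] using h
  obtain ⟨ystar, hystar_app, hystar_le⟩ :
      ∃ ystar : StrongDual ℝ Y, (∀ w, ystar w = y0 w) ∧ ‖ystar‖ ≤ 1 := by
    refine ⟨LinearMap.mkContinuous
      { toFun := y0, map_add' := hyadd,
        map_smul' := by intro c w; simpa [smul_eq_mul] using hysmul c w } 1
      (fun w => by simpa [Real.norm_eq_abs, one_mul] using hy0 w), fun w => rfl, ?_⟩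
    exact LinearMap.mkContinuous_norm_le _ zero_le_one _
  have hystar_t : ∀ w : Y, Tendsto (fun n => ys n w) U (nhds (ystar w)) := by
    intro w; rw [hystar_app w]; exact hy0t w
  -- compatibility on compact operators
  have hstar : ∀ S : X →L[ℝ] Y, IsCompactOperator ⇑S → F S = ystar (S xb) := by
    intro S hS
    have hCcpt : IsCompact (closure (⇑S '' Metric.closedBall 0 1)) := by
      have h : IsCompactOperator ⇑(S : X →ₗ[ℝ] Y) := hS
      exact h.isCompact_closure_image_of_bounded Metric.isBounded_closedBall
    have hmem : closure (⇑S '' Metric.closedBall 0 1) ∈ U.map (fun n => S (xs n)) :=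
      Ultrafilter.mem_map.2 (Filter.univ_mem' fun n =>
        subset_closure ⟨xs n, by simpa [Metric.mem_closedBall] using hxs1 n, rfl⟩)
    obtain ⟨z, hzC, hzle⟩ := hCcpt.ultrafilter_le_nhds' _ hmem
    have hzt : Tendsto (fun n => S (xs n)) U (nhds z) := by
      rwa [Filter.Tendsto, ← Ultrafilter.coe_map]
    have hz_eq : z = S xb := by
      by_contra hne
      obtain ⟨g, hg1, hg2⟩ := exists_dual_vector ℝ (z - S xb) (norm_ne_zero_iff.2 (sub_ne_zero.2 hne))
      have h1 : Tendsto (fun n => g (S (xs n))) U (nhds (g z)) :=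
        (g.continuous.tendsto z).comp hzt
      have h2 : Tendsto (fun n => g (S (xs n))) U (nhds (g (S xb))) := by
        have h := hxb_t (g.comp S)
        simpa using h
      have h3 : g z = g (S xb) := tendsto_nhds_unique h1 h2
      rw [map_sub, h3, sub_self] at hg2
      have h4 : ‖z - S xb‖ = 0 := by exact_mod_cast hg2.symm
      exact hne (sub_eq_zero.1 (norm_eq_zero.1 h4))
    have hnorm0 : Tendsto (fun n => ‖S (xs n) - S xb‖) U (nhds 0) := by
      rw [← hz_eq]
      exact tendsto_iff_norm_sub_tendsto_zero.1 hzt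
    have hterm1 : Tendsto (fun n => ys n (S (xs n) - S xb)) U (nhds 0) := by
      refine squeeze_zero_norm (fun n => ?_) hnorm0
      have h := (ys n).le_opNorm (S (xs n) - S xb)
      rwa [hys1 n, one_mul] at h
    have hterm2 : Tendsto (fun n => ys n (S xb)) U (nhds (ystar (S xb))) := hystar_t _
    have hsum : Tendsto (fun n => ys n (S (xs n))) U (nhds (ystar (S xb))) := by
      have h := hterm1.add hterm2
      rw [zero_add] at h
      refine h.congr (fun n => ?_)
      rw [← map_add]
      congr 1
      abel
    exact tendsto_nhds_unique (hFt S) hsum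
  -- the limit of ys n (T (xs n)) is 1
  have hys2' : ∀ n, ys n (B n (xs n)) = ‖B n (xs n)‖ := fun n => by exact_mod_cast hys2 n
  have happly : ∀ n, ys n (B n (xs n)) = ys n (T (xs n)) + t n * ys n (A (xs n)) := by
    intro n
    rw [hB_def]
    simp [ContinuousLinearMap.add_apply, ContinuousLinearMap.smul_apply, map_add, map_smul,
      smul_eq_mul]
  have hTub : ∀ n, ys n (T (xs n)) ≤ 1 := by
    intro n
    have h := hb T n
    rw [hT] at h
    exact le_trans (le_abs_self _) h
  have hTlb : ∀ n, Real.sqrt (1 - 2 * ε * t n * ‖A‖) - (t n)^2 - t n * ‖A‖ ≤ ys n (T (xs n)) := by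
    intro n
    have h1 := hys2' n
    have h2 := hxs2 n
    have h3 := hBn n
    have h4 := happly n
    have h5 := abs_le.1 (hb A n)
    have h6 := mul_le_mul_of_nonneg_left h5.2 (ht_pos n).le
    linarith
  have hsq_t : Tendsto (fun n => Real.sqrt (1 - 2 * ε * t n * ‖A‖) - (t n)^2 - t n * ‖A‖)
      atTop (nhds 1) := by
    have h1 : Tendsto (fun n => 1 - 2 * ε * t n * ‖A‖) atTop (nhds 1) := by
      have h : Tendsto (fun n => 2 * ε * t n * ‖A‖) atTop (nhds 0) := by
        simpa using ((ht0.const_mul (2 * ε)).mul_const ‖A‖)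
      simpa using (Filter.Tendsto.sub
        (tendsto_const_nhds : Tendsto (fun _ : ℕ => (1:ℝ)) atTop (nhds 1)) h)
    have h2 : Tendsto (fun n => Real.sqrt (1 - 2 * ε * t n * ‖A‖)) atTop (nhds 1) := by
      have h := (Real.continuous_sqrt.tendsto 1).comp h1
      simpa [Function.comp_def] using h
    have h3 : Tendsto (fun n => (t n)^2) atTop (nhds 0) := by
      have h := ht0.mul ht0
      simpa [sq] using h
    have h4 : Tendsto (fun n => t n * ‖A‖) atTop (nhds 0) := by
      have h := ht0.mul_const ‖A‖
      simpa using h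
    have h := (h2.sub h3).sub h4
    simpa using h
  have hT_tends : Tendsto (fun n => ys n (T (xs n))) U (nhds 1) :=
    tendsto_of_tendsto_of_tendsto_of_le_of_le (hsq_t.mono_left hU) tendsto_const_nhds
      hTlb hTub
  have hFT : F T = 1 := tendsto_nhds_unique (hFt T) hT_tends
  -- the limit of ys n (A (xs n)) is at least -ε‖A‖
  have hFA : -(ε * ‖A‖) ≤ F A := by
    have hAlb : ∀ n, 2 * ε * t n * ‖A‖ ≤ 1/2 →
        -(ε * ‖A‖) - (4 * ε^2 * ‖A‖^2 + 1) * t n ≤ ys n (A (xs n)) := by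
      intro n hn
      have hu0 : 0 ≤ 2 * ε * t n * ‖A‖ :=
        mul_nonneg (mul_nonneg (by linarith) (ht_pos n).le) (norm_nonneg A)
      have hsl := sqrt_lower hu0 hn
      have h1 := hys2' n
      have h2 := hxs2 n
      have h3 := hBn n
      have h4 := happly n
      have h5 := hTub n
      -- t n * (ys n (A (xs n))) ≥ sqrt - tn² - 1 ≥ (1 - u/2 - u²) - tn² - 1
      have h6 : t n * ys n (A (xs n)) ≥
          (1 - (2 * ε * t n * ‖A‖)/2 - (2 * ε * t n * ‖A‖)^2) - (t n)^2 - 1 := by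
        nlinarith
      have h7 := (mul_le_mul_iff_of_pos_left (ht_pos n)).1 (show
          t n * (-(ε * ‖A‖) - (4 * ε^2 * ‖A‖^2 + 1) * t n) ≤ t n * ys n (A (xs n)) by nlinarith)
      exact h7
    by_contra hcon
    push_neg at hcon
    set σ := -(ε * ‖A‖) - F A with hσ_def
    have hσpos : 0 < σ := by rw [hσ_def]; linarith
    have hev1 : ∀ᶠ n in atTop, 2 * ε * t n * ‖A‖ ≤ 1/2 := by
      have h : Tendsto (fun n => 2 * ε * t n * ‖A‖) atTop (nhds 0) := by
        have h := ((ht0.const_mul (2 * ε)).mul_const ‖A‖)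
        simpa [mul_comm, mul_assoc, mul_left_comm] using h
      exact h.eventually_le_const (by norm_num)
    have hev2 : ∀ᶠ n in atTop, (4 * ε^2 * ‖A‖^2 + 1) * t n ≤ σ/2 := by
      have h : Tendsto (fun n => (4 * ε^2 * ‖A‖^2 + 1) * t n) atTop (nhds 0) :=
        by simpa using (ht0.const_mul (4 * ε^2 * ‖A‖^2 + 1))
      exact h.eventually_le_const (by linarith)
    have hev : ∀ᶠ n in (U : Filter ℕ), -(ε * ‖A‖) - σ/2 ≤ ys n (A (xs n)) := by
      refine Filter.Eventually.filter_mono hU ?_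
      filter_upwards [hev1, hev2] with n h1 h2
      have := hAlb n h1
      linarith
    have hge : -(ε * ‖A‖) - σ/2 ≤ F A := ge_of_tendsto (hFt A) hev
    rw [hσ_def] at hge
    linarith
  -- ‖F‖ = 1
  have hFT1 : (1:ℝ) ≤ ‖F‖ := by
    have h := F.le_opNorm T
    rw [hT, mul_one] at h
    calc (1:ℝ) = ‖F T‖ := by rw [hFT]; simp
      _ ≤ ‖F‖ := h
  have hFnorm : ‖F‖ = 1 := le_antisymm hFle hFT1
  -- range P kills compacts
  have hkills : ∀ w, ∀ K : X →L[ℝ] Y, IsCompactOperator ⇑K → (P w) K = 0 := by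
    intro w K hK
    have h : P w ∈ Set.range ⇑P := ⟨w, rfl⟩
    rw [hPrange] at h
    exact h K hK
  have hrangeP : ∀ h : StrongDual ℝ (X →L[ℝ] Y),
      (∀ K : X →L[ℝ] Y, IsCompactOperator ⇑K → h K = 0) → ∃ w, P w = h := by
    intro h hh
    have h2 : h ∈ Set.range ⇑P := by rw [hPrange]; exact hh
    exact h2
  -- P F = 0
  have hPF : P F = 0 := by
    by_cases hz : ‖P F‖ = 0
    · exact (ContinuousLinearMap.opNorm_zero_iff (P F)).1 hz
    exfalso
    have hpos : 0 < ‖P F‖ := by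
      rcases (norm_nonneg (P F)).lt_or_eq with h | h
      · exact h
      · exact absurd h.symm hz
    have hPFd : (P F) T ≤ ‖P F‖ * Metric.infDist T {K : X →L[ℝ] Y | IsCompactOperator ⇑K} := by
      by_contra hcon
      push_neg at hcon
      have hlt : Metric.infDist T {K : X →L[ℝ] Y | IsCompactOperator ⇑K} < (P F) T / ‖P F‖ := by
        rw [lt_div_iff₀ hpos]
        linarith [hcon]
      have hne : ({K : X →L[ℝ] Y | IsCompactOperator ⇑K}).Nonempty := by
        refine ⟨0, ?_⟩
        show IsCompactOperator ⇑(0 : X →L[ℝ] Y)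
        have h0 : ⇑(0 : X →L[ℝ] Y) = (0 : X → Y) := by funext x; simp
        rw [h0]
        exact isCompactOperator_zero
      obtain ⟨K, hKmem, hKlt⟩ := (Metric.infDist_lt_iff hne).1 hlt
      have h1 : (P F) T = (P F) (T - K) := by
        rw [map_sub, hkills F K hKmem, sub_zero]
      have h2 : (P F) (T - K) ≤ ‖P F‖ * ‖T - K‖ := by
        have h := (P F).le_opNorm (T - K)
        exact le_trans (le_abs_self _) (by rwa [← Real.norm_eq_abs])
      rw [dist_eq_norm] at hKlt
      rw [lt_div_iff₀ hpos] at hKlt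
      nlinarith
    have hsum := hPL F
    have h3 : (F - P F) T ≤ ‖F - P F‖ := by
      have h := (F - P F).le_opNorm T
      rw [hT, mul_one] at h
      exact le_trans (le_abs_self _) (by rwa [← Real.norm_eq_abs])
    have h4 : F T = (P F) T + (F - P F) T := by
      simp [ContinuousLinearMap.sub_apply]
    have hd1 : Metric.infDist T {K : X →L[ℝ] Y | IsCompactOperator ⇑K} < 1 := hdist
    have hd0 : 0 ≤ Metric.infDist T {K : X →L[ℝ] Y | IsCompactOperator ⇑K} :=
      Metric.infDist_nonneg
    nlinarith [hFT, mul_pos hpos (show (0:ℝ) < 1 - Metric.infDist T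
      {K : X →L[ℝ] Y | IsCompactOperator ⇑K} by linarith)]
  -- the functional yhat
  have hyhat_b : ∀ C : X →L[ℝ] Y, ‖ystar (C xb)‖ ≤ 1 * ‖C‖ := by
    intro C
    have h1 : ‖ystar (C xb)‖ ≤ ‖ystar‖ * ‖C xb‖ := ystar.le_opNorm _
    have h2 : ‖ystar‖ * ‖C xb‖ ≤ 1 * ‖C xb‖ :=
      mul_le_mul_of_nonneg_right hystar_le (norm_nonneg _)
    have h3 : ‖C xb‖ ≤ ‖C‖ * ‖xb‖ := C.le_opNorm _
    have h4 : ‖C‖ * ‖xb‖ ≤ ‖C‖ * 1 := mul_le_mul_of_nonneg_left hxb_norm (norm_nonneg _)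
    rw [one_mul] at h2 ⊢
    linarith [mul_one ‖C‖]
  obtain ⟨yhat, hyhat_app, hyhat_le⟩ :
      ∃ yhat : StrongDual ℝ (X →L[ℝ] Y), (∀ C, yhat C = ystar (C xb)) ∧ ‖yhat‖ ≤ 1 := by
    refine ⟨LinearMap.mkContinuous
      { toFun := fun C => ystar (C xb),
        map_add' := by intro C₁ C₂; simp [ContinuousLinearMap.add_apply],
        map_smul' := by intro c C; simp [ContinuousLinearMap.smul_apply] } 1 hyhat_b,
      fun C => rfl, ?_⟩
    exact LinearMap.mkContinuous_norm_le _ zero_le_one _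
  -- G = F
  have hGF : yhat - P yhat = F := by
    have hdiff : ∀ K : X →L[ℝ] Y, IsCompactOperator ⇑K → ((yhat - P yhat) - F) K = 0 := by
      intro K hK
      have h1 : F K = ystar (K xb) := hstar K hK
      have h2 : (P yhat) K = 0 := hkills yhat K hK
      simp [ContinuousLinearMap.sub_apply, hyhat_app, h1, h2]
    obtain ⟨w, hw⟩ := hrangeP _ hdiff
    have h3 : P ((yhat - P yhat) - F) = (yhat - P yhat) - F := by rw [← hw, hPidem]
    have h4 : P (yhat - P yhat) = 0 := by rw [map_sub, hPidem, sub_self]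
    have h5 : P ((yhat - P yhat) - F) = 0 := by rw [map_sub, h4, hPF, sub_zero]
    have h6 : (yhat - P yhat) - F = 0 := by rw [← h3, h5]
    exact sub_eq_zero.1 h6
  have hPyhat : P yhat = 0 := by
    have hsum := hPL yhat
    have h1 : ‖yhat - P yhat‖ = 1 := by rw [hGF, hFnorm]
    have h2 : ‖P yhat‖ ≤ 0 := by linarith
    exact (ContinuousLinearMap.opNorm_zero_iff (P yhat)).1 (le_antisymm h2 (norm_nonneg _))
  have hyhatF : yhat = F := by
    have := hGF
    rwa [hPyhat, sub_zero] at this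
  have hTxb : ystar (T xb) = 1 := by
    have h := hyhat_app T
    rw [hyhatF] at h
    rw [← h, hFT]
  have hAxb : -(ε * ‖A‖) ≤ ystar (A xb) := by
    have h := hyhat_app A
    rw [hyhatF] at h
    rw [← h]
    exact hFA
  -- norm facts
  have hTxb_norm : ‖T xb‖ = 1 := by
    have h1 : (1:ℝ) ≤ ‖T xb‖ := by
      have h := ystar.le_opNorm (T xb)
      have h2 : ‖ystar (T xb)‖ = 1 := by rw [hTxb]; simp
      have h3 : ‖ystar‖ * ‖T xb‖ ≤ 1 * ‖T xb‖ :=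
        mul_le_mul_of_nonneg_right hystar_le (norm_nonneg _)
      rw [one_mul] at h3
      linarith
    have h2 : ‖T xb‖ ≤ 1 := by
      have h := T.le_opNorm xb
      rw [hT, one_mul] at h
      linarith
    linarith
  have hxb1 : ‖xb‖ = 1 := by
    have h := T.le_opNorm xb
    rw [hT, one_mul] at h
    exact le_antisymm hxb_norm (by linarith)
  refine ⟨xb, hxb1, hTxb_norm, ?_⟩
  intro s hs
  have h1 : ystar (T xb + s • A xb) ≤ ‖T xb + s • A xb‖ := by
    have ha := ystar.le_opNorm (T xb + s • A xb)
    have hb' := le_abs_self (ystar (T xb + s • A xb))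
    rw [← Real.norm_eq_abs] at hb'
    have h3 : ‖ystar‖ * ‖T xb + s • A xb‖ ≤ 1 * ‖T xb + s • A xb‖ :=
      mul_le_mul_of_nonneg_right hystar_le (norm_nonneg _)
    rw [one_mul] at h3
    linarith
  have h2 : ystar (T xb + s • A xb) = 1 + s * ystar (A xb) := by
    rw [map_add, map_smul, hTxb, smul_eq_mul]
  have h3 : -(ε * ‖A‖) * s ≤ ystar (A xb) * s := mul_le_mul_of_nonneg_right hAxb hs
  nlinarith [h1, h2, h3]
end Key

set_option maxHeartbeats 4000000 in
/-- **Theorem 9 (ii).** Under the M-ideal hypotheses, `‖T‖ = 1`,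
`dist(T, K(X,Y)) < 1`, `M_T = D ∪ (-D)` with `D` a closed connected subset of the
unit sphere, and `ε ∈ [0,1)`:  `T ⊥_B^ε A` iff there exists `x ∈ M_T` with
`‖Tx + λAx‖² ≥ ‖T‖² - 2ε‖T‖‖λA‖` for all real `λ`. -/
theorem approx_BJ_orthogonality_Mideal_connected
    {X Y : Type*} [NormedAddCommGroup X] [NormedSpace ℝ X] [CompleteSpace X]
    [NormedAddCommGroup Y] [NormedSpace ℝ Y] [CompleteSpace Y]
    (hrefl : Function.Surjective (NormedSpace.inclusionInDoubleDual ℝ X))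
    (hdimX : 2 ≤ Module.rank ℝ X) (hdimY : 2 ≤ Module.rank ℝ Y)
    (P : StrongDual ℝ (X →L[ℝ] Y) →L[ℝ] StrongDual ℝ (X →L[ℝ] Y))
    (hPidem : ∀ f, P (P f) = P f)
    (hPL : ∀ f, ‖f‖ = ‖P f‖ + ‖f - P f‖)
    (hPrange : Set.range ⇑P =
      {f : StrongDual ℝ (X →L[ℝ] Y) | ∀ K : X →L[ℝ] Y, IsCompactOperator ⇑K → f K = 0})
    (T : X →L[ℝ] Y) (hT : ‖T‖ = 1)
    (hdist : Metric.infDist T {K : X →L[ℝ] Y | IsCompactOperator ⇑K} < 1)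
    (D : Set X) (hDclosed : IsClosed D) (hDconn : IsConnected D)
    (hDsphere : D ⊆ Metric.sphere (0 : X) 1)
    (hMT : {x : X | ‖x‖ = 1 ∧ ‖T x‖ = ‖T‖} = D ∪ (-D))
    (ε : ℝ) (hε : ε ∈ Set.Ico (0 : ℝ) 1) (A : X →L[ℝ] Y) :
    (∀ l : ℝ, ‖T‖ ^ 2 - 2 * ε * ‖T‖ * ‖l • A‖ ≤ ‖T + l • A‖ ^ 2) ↔
      ∃ x : X, (‖x‖ = 1 ∧ ‖T x‖ = ‖T‖) ∧
        (∀ l : ℝ, ‖T‖ ^ 2 - 2 * ε * ‖T‖ * ‖l • A‖ ≤ ‖T x + l • A x‖ ^ 2) := by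
  have hε0 : 0 ≤ ε := hε.1
  haveI : Nontrivial Y := by
    rcases subsingleton_or_nontrivial Y with h | h
    · exact absurd hdimY (by rw [rank_subsingleton']; norm_num)
    · exact h
  constructor
  · -- forward direction
    intro hBJ
    -- the two key applications
    have hBJ' : ∀ l : ℝ, 0 ≤ l → 1 - 2 * ε * l * ‖A‖ ≤ ‖T + l • A‖ ^ 2 := by
      intro l hl
      have h := hBJ l
      rw [hT] at h
      have hsm : ‖l • A‖ = ‖l‖ * ‖A‖ := norm_smul l A
      calc 1 - 2 * ε * l * ‖A‖ = 1 ^ 2 - 2 * ε * 1 * ‖l • A‖ := by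
            rw [hsm, Real.norm_eq_abs, abs_of_nonneg hl]; ring
        _ ≤ ‖T + l • A‖ ^ 2 := h
    have hBJneg : ∀ l : ℝ, 0 ≤ l → 1 - 2 * ε * l * ‖-A‖ ≤ ‖T + l • (-A)‖ ^ 2 := by
      intro l hl
      have h := hBJ (-l)
      rw [hT] at h
      have hsm : ‖(-l) • A‖ = ‖(-l)‖ * ‖A‖ := norm_smul (-l) A
      calc 1 - 2 * ε * l * ‖-A‖ = 1 ^ 2 - 2 * ε * 1 * ‖(-l) • A‖ := by
            rw [norm_neg, hsm, Real.norm_eq_abs, abs_neg, abs_of_nonneg hl]; ring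
        _ ≤ ‖T + (-l) • A‖ ^ 2 := h
        _ = ‖T + l • (-A)‖ ^ 2 := by rw [show (-l) • A = l • (-A) by
              rw [neg_smul, ← smul_neg]]
    obtain ⟨xp, hxp1, hxp2, hxpP⟩ := key_lemma hrefl P hPidem hPL hPrange T hT hdist
      ε hε0 A hBJ'
    obtain ⟨xm, hxm1, hxm2, hxmP0⟩ := key_lemma hrefl P hPidem hPL hPrange T hT hdist
      ε hε0 (-A) hBJneg
    have hxmP : ∀ s : ℝ, 0 ≤ s → 1 - ε * s * ‖A‖ ≤ ‖T xm - s • A xm‖ := by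
      intro s hs
      have h := hxmP0 s hs
      rw [norm_neg] at h
      calc 1 - ε * s * ‖A‖ ≤ ‖T xm + s • (-A) xm‖ := h
        _ = ‖T xm - s • A xm‖ := by
            rw [ContinuousLinearMap.neg_apply, smul_neg, ← sub_eq_add_neg]
    -- from a two-sided point, derive the conclusion
    have good : ∀ x : X, ‖x‖ = 1 → ‖T x‖ = 1 →
        (∀ s : ℝ, 0 ≤ s → 1 - ε * s * ‖A‖ ≤ ‖T x + s • A x‖) →
        (∀ s : ℝ, 0 ≤ s → 1 - ε * s * ‖A‖ ≤ ‖T x - s • A x‖) →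
        (∀ l : ℝ, ‖T‖ ^ 2 - 2 * ε * ‖T‖ * ‖l • A‖ ≤ ‖T x + l • A x‖ ^ 2) := by
      intro x hx1 hx2 hp hn l
      have hsm : ‖l • A‖ = ‖l‖ * ‖A‖ := norm_smul l A
      rw [hT, hsm, Real.norm_eq_abs, one_pow, mul_one]
      rcases le_or_gt 0 l with hl | hl
      · have h1 := hp l hl
        have ha : (0:ℝ) ≤ ‖T x + l • A x‖ := norm_nonneg _
        have hu : 0 ≤ ε * l * ‖A‖ := by positivity
        rw [abs_of_nonneg hl]
        rcases le_or_gt (ε * l * ‖A‖) 1 with hu1 | hu1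
        · nlinarith
        · nlinarith
      · have hl' : 0 ≤ -l := by linarith
        have h1 := hn (-l) hl'
        have heq : T x - (-l) • A x = T x + l • A x := by
          rw [neg_smul, sub_neg_eq_add]
        rw [heq] at h1
        have ha : (0:ℝ) ≤ ‖T x + l • A x‖ := norm_nonneg _
        have hu : 0 ≤ ε * (-l) * ‖A‖ := by positivity
        rw [abs_of_neg hl]
        rcases le_or_gt (ε * (-l) * ‖A‖) 1 with hu1 | hu1
        · nlinarith
        · nlinarith
    by_cases hc1 : ∀ s : ℝ, 0 ≤ s → 1 - ε * s * ‖A‖ ≤ ‖T xp - s • A xp‖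
    · exact ⟨xp, ⟨hxp1, by rw [hT]; exact hxp2⟩, good xp hxp1 hxp2 hxpP hc1⟩
    by_cases hc2 : ∀ s : ℝ, 0 ≤ s → 1 - ε * s * ‖A‖ ≤ ‖T xm + s • A xm‖
    · exact ⟨xm, ⟨hxm1, by rw [hT]; exact hxm2⟩, good xm hxm1 hxm2 hc2 hxmP⟩
    -- both fail: use connectedness of D
    push_neg at hc1 hc2
    obtain ⟨s1, hs10, hs1lt⟩ := hc1
    obtain ⟨s2, hs20, hs2lt⟩ := hc2
    have hs1pos : 0 < s1 := by
      rcases hs10.lt_or_eq with h | h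
      · exact h
      · exfalso; rw [← h] at hs1lt; simp [hxp2] at hs1lt
    have hs2pos : 0 < s2 := by
      rcases hs20.lt_or_eq with h | h
      · exact h
      · exfalso; rw [← h] at hs2lt; simp [hxm2] at hs2lt
    set UU : Set X := {x | ∃ s : ℝ, 0 < s ∧ ‖T x + s • A x‖ < 1 - ε * s * ‖A‖} with hUU_def
    set VV : Set X := {x | ∃ s : ℝ, 0 < s ∧ ‖T x - s • A x‖ < 1 - ε * s * ‖A‖} with hVV_def
    have hUopen : IsOpen UU := by
      have : UU = ⋃ s ∈ Set.Ioi (0:ℝ), {x : X | ‖T x + s • A x‖ < 1 - ε * s * ‖A‖} := by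
        ext x
        simp [hUU_def, Set.mem_Ioi]
      rw [this]
      refine isOpen_biUnion fun s _ => ?_
      exact isOpen_lt (by fun_prop) continuous_const
    have hVopen : IsOpen VV := by
      have : VV = ⋃ s ∈ Set.Ioi (0:ℝ), {x : X | ‖T x - s • A x‖ < 1 - ε * s * ‖A‖} := by
        ext x
        simp [hVV_def, Set.mem_Ioi]
      rw [this]
      refine isOpen_biUnion fun s _ => ?_
      exact isOpen_lt (by fun_prop) continuous_const
    have hxpV : xp ∈ VV := ⟨s1, hs1pos, hs1lt⟩
    have hxmU : xm ∈ UU := ⟨s2, hs2pos, hs2lt⟩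
    have hUneg : ∀ x, x ∈ UU → -x ∈ UU := by
      rintro x ⟨s, hs, hlt⟩
      refine ⟨s, hs, ?_⟩
      calc ‖T (-x) + s • A (-x)‖ = ‖-(T x + s • A x)‖ := by
            rw [map_neg, map_neg, smul_neg]; congr 1; abel
        _ = ‖T x + s • A x‖ := norm_neg _
        _ < 1 - ε * s * ‖A‖ := hlt
    have hVneg : ∀ x, x ∈ VV → -x ∈ VV := by
      rintro x ⟨s, hs, hlt⟩
      refine ⟨s, hs, ?_⟩
      calc ‖T (-x) - s • A (-x)‖ = ‖-(T x - s • A x)‖ := by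
            rw [map_neg, map_neg, smul_neg]; congr 1; abel
        _ = ‖T x - s • A x‖ := norm_neg _
        _ < 1 - ε * s * ‖A‖ := hlt
    have hMTp : xp ∈ D ∪ (-D) := by
      rw [← hMT]; exact ⟨hxp1, by rw [hT]; exact hxp2⟩
    have hMTm : xm ∈ D ∪ (-D) := by
      rw [← hMT]; exact ⟨hxm1, by rw [hT]; exact hxm2⟩
    obtain ⟨p, hpD, hpV⟩ : ∃ p, p ∈ D ∧ p ∈ VV := by
      rcases hMTp with h | h
      · exact ⟨xp, h, hxpV⟩
      · exact ⟨-xp, Set.mem_neg.1 h, hVneg _ hxpV⟩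
    obtain ⟨m, hmD, hmU⟩ : ∃ m, m ∈ D ∧ m ∈ UU := by
      rcases hMTm with h | h
      · exact ⟨xm, h, hxmU⟩
      · exact ⟨-xm, Set.mem_neg.1 h, hUneg _ hxmU⟩
    by_cases hcover : D ⊆ UU ∪ VV
    · exfalso
      obtain ⟨z, hzD, hzUV⟩ := hDconn.isPreconnected UU VV hUopen hVopen hcover
        ⟨m, hmD, hmU⟩ ⟨p, hpD, hpV⟩
      obtain ⟨s, hs, hlt1⟩ := hzUV.1
      obtain ⟨r, hr, hlt2⟩ := hzUV.2
      have hzM : z ∈ {x : X | ‖x‖ = 1 ∧ ‖T x‖ = ‖T‖} := by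
        rw [hMT]; exact Or.inl hzD
      have hTz : ‖T z‖ = 1 := by rw [hzM.2, hT]
      set c1 := r / (s + r) with hc1_def
      set c2 := s / (s + r) with hc2_def
      have hsr : 0 < s + r := by linarith
      have hc1pos : 0 < c1 := by rw [hc1_def]; positivity
      have hc2pos : 0 < c2 := by rw [hc2_def]; positivity
      have hc12 : c1 + c2 = 1 := by
        rw [hc1_def, hc2_def, ← add_div, add_comm r s, div_self hsr.ne']
      have hzero : c1 * s - c2 * r = 0 := by rw [hc1_def, hc2_def]; field_simp; ring
      have hcomb : c1 • (T z + s • A z) + c2 • (T z - r • A z) = T z := by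
        have h : c1 • (T z + s • A z) + c2 • (T z - r • A z)
            = (c1 + c2) • T z + (c1 * s - c2 * r) • A z := by
          module
        rw [h, hc12, hzero, one_smul, zero_smul, add_zero]
      have hnorm_le : ‖T z‖ ≤ c1 * ‖T z + s • A z‖ + c2 * ‖T z - r • A z‖ := by
        calc ‖T z‖ = ‖c1 • (T z + s • A z) + c2 • (T z - r • A z)‖ := by rw [hcomb]
          _ ≤ ‖c1 • (T z + s • A z)‖ + ‖c2 • (T z - r • A z)‖ := norm_add_le _ _
          _ = c1 * ‖T z + s • A z‖ + c2 * ‖T z - r • A z‖ := by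
              rw [norm_smul, norm_smul, Real.norm_eq_abs, Real.norm_eq_abs,
                abs_of_pos hc1pos, abs_of_pos hc2pos]
      have k1 : c1 * ‖T z + s • A z‖ < c1 * (1 - ε * s * ‖A‖) :=
        mul_lt_mul_of_pos_left hlt1 hc1pos
      have k2 : c2 * ‖T z - r • A z‖ < c2 * (1 - ε * r * ‖A‖) :=
        mul_lt_mul_of_pos_left hlt2 hc2pos
      have k3 : 0 ≤ ε * ‖A‖ * (c1 * s + c2 * r) := by positivity
      nlinarith [hnorm_le, hTz, k1, k2, k3, hc12]
    · obtain ⟨z, hzD, hz⟩ := Set.not_subset.1 hcover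
      have hzU : z ∉ UU := fun h => hz (Or.inl h)
      have hzV : z ∉ VV := fun h => hz (Or.inr h)
      have hzM : z ∈ {x : X | ‖x‖ = 1 ∧ ‖T x‖ = ‖T‖} := by
        rw [hMT]; exact Or.inl hzD
      have hTz : ‖T z‖ = 1 := by rw [hzM.2, hT]
      have hPz : ∀ s : ℝ, 0 ≤ s → 1 - ε * s * ‖A‖ ≤ ‖T z + s • A z‖ := by
        intro s hs
        rcases hs.lt_or_eq with h | h
        · by_contra hlt
          exact hzU ⟨s, h, by linarith [not_le.1 hlt]⟩
        · rw [← h]; simp [hTz]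
      have hNz : ∀ s : ℝ, 0 ≤ s → 1 - ε * s * ‖A‖ ≤ ‖T z - s • A z‖ := by
        intro s hs
        rcases hs.lt_or_eq with h | h
        · by_contra hlt
          exact hzV ⟨s, h, by linarith [not_le.1 hlt]⟩
        · rw [← h]; simp [hTz]
      exact ⟨z, ⟨hzM.1, hzM.2⟩, good z hzM.1 hTz hPz hNz⟩
  · -- reverse direction
    rintro ⟨x, ⟨hx1, hx2⟩, hineq⟩ l
    have h1 : ‖T x + l • A x‖ ≤ ‖T + l • A‖ := by
      have h := (T + l • A).le_opNorm x
      rw [hx1, mul_one] at h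
      calc ‖T x + l • A x‖ = ‖(T + l • A) x‖ := by
            rw [ContinuousLinearMap.add_apply, ContinuousLinearMap.smul_apply]
        _ ≤ ‖T + l • A‖ := h
    have h2 := hineq l
    have h0 : (0:ℝ) ≤ ‖T x + l • A x‖ := norm_nonneg _
    nlinarith [h1, h2, h0]
end

section
/- Let X and Y be real normed linear spaces of dimension at least 2, and let T be a bounded linear operator from X to Y whose norm attainment set is M_T = {x₀, −x₀} for some x₀ ∈ X with ‖x₀‖ = 1. Suppose P is an L-projection on X whose range is span{x₀}. Then T is a smooth point of the space of bounded linear operators from X to Y if and only if (i) Tx₀ is a smooth point of Y, and (ii) the restriction of T to ker(P) has norm strictly less than ‖T‖. -/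
open NormedSpace

section AuxDefs

variable {X Y : Type*} [NormedAddCommGroup X] [NormedSpace ℝ X]
  [NormedAddCommGroup Y] [NormedSpace ℝ Y]

/-- Projection onto `ker P` as a continuous linear map. -/
noncomputable def auxPi (P : X →L[ℝ] X) (hPidem : ∀ z : X, P (P z) = P z) :
    X →L[ℝ] ↥(LinearMap.ker (P : X →ₗ[ℝ] X)) :=
  (ContinuousLinearMap.id ℝ X - P).codRestrict (LinearMap.ker (P : X →ₗ[ℝ] X)) (fun z => by
    simp [LinearMap.mem_ker, hPidem z])

lemma auxPi_coe (P : X →L[ℝ] X) (hPidem : ∀ z : X, P (P z) = P z) (z : X) :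
    ((auxPi P hPidem z : X)) = z - P z := rfl

/-- Rank-one-type embedding `Y → L(X,Y)`. -/
noncomputable def auxA (ψ : X →L[ℝ] ℝ) (P : X →L[ℝ] X) : Y →L[ℝ] (X →L[ℝ] Y) :=
  ContinuousLinearMap.smulRightL ℝ X Y (ψ.comp P)

lemma auxA_apply (ψ : X →L[ℝ] ℝ) (P : X →L[ℝ] X) (y : Y) (z : X) :
    auxA ψ P y z = ψ (P z) • y := rfl

/-- Embedding `L(ker P, Y) → L(X,Y)` via precomposition with `auxPi`. -/
noncomputable def auxB (P : X →L[ℝ] X) (hPidem : ∀ z : X, P (P z) = P z) :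
    (↥(LinearMap.ker (P : X →ₗ[ℝ] X)) →L[ℝ] Y) →L[ℝ] (X →L[ℝ] Y) :=
  (ContinuousLinearMap.compL ℝ X ↥(LinearMap.ker (P : X →ₗ[ℝ] X)) Y).flip (auxPi P hPidem)

lemma auxB_apply (P : X →L[ℝ] X) (hPidem : ∀ z : X, P (P z) = P z)
    (R : ↥(LinearMap.ker (P : X →ₗ[ℝ] X)) →L[ℝ] Y) (z : X) :
    auxB P hPidem R z = R (auxPi P hPidem z) := rfl

end AuxDefs

section AuxInstances

variable {X Y : Type*} [NormedAddCommGroup X] [NormedSpace ℝ X]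
  [NormedAddCommGroup Y] [NormedSpace ℝ Y]

set_option synthInstance.maxHeartbeats 1000000 in
noncomputable instance auxNACG (K : Submodule ℝ X) :
    NormedAddCommGroup (↥K →L[ℝ] Y) := inferInstance

set_option synthInstance.maxHeartbeats 1000000 in
noncomputable instance auxNS (K : Submodule ℝ X) :
    NormedSpace ℝ (↥K →L[ℝ] Y) := inferInstance

end AuxInstances

set_option maxHeartbeats 1000000
set_option synthInstance.maxHeartbeats 400000

/-- **Theorem 10 (smoothness with an L-ideal).** Let `X, Y` be real normed spaces of
dimension ≥ 2, `T : X → Y` bounded linear with norm attainment set `{x₀, -x₀}`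
(`‖x₀‖ = 1`), and let `P` be an L-projection on `X` with range `span{x₀}`. Then `T`
is a smooth point of `L(X,Y)` iff (i) `Tx₀` is a smooth point of `Y` and
(ii) `‖T|_{ker P}‖ < ‖T‖`. -/
theorem smooth_iff_Lideal
    {X Y : Type*} [NormedAddCommGroup X] [NormedSpace ℝ X]
    [NormedAddCommGroup Y] [NormedSpace ℝ Y]
    (hdimX : 2 ≤ Module.rank ℝ X) (hdimY : 2 ≤ Module.rank ℝ Y)
    (T : X →L[ℝ] Y) (x₀ : X) (hx₀ : ‖x₀‖ = 1)
    (hMT : {x : X | ‖x‖ = 1 ∧ ‖T x‖ = ‖T‖} = {x₀, -x₀})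
    (P : X →L[ℝ] X)
    (hPidem : ∀ z : X, P (P z) = P z)
    (hPL : ∀ z : X, ‖z‖ = ‖P z‖ + ‖z - P z‖)
    (hPrange : LinearMap.range (P : X →ₗ[ℝ] X) = Submodule.span ℝ ({x₀} : Set X)) :
    (∃! f : StrongDual ℝ (X →L[ℝ] Y), ‖f‖ = 1 ∧ f T = ‖T‖) ↔
      ((∃! g : StrongDual ℝ Y, ‖g‖ = 1 ∧ g (T x₀) = ‖T x₀‖) ∧
        ‖T.comp (LinearMap.ker (P : X →ₗ[ℝ] X)).subtypeL‖ < ‖T‖) := by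
  -- Basic facts
  have hx₀ne : x₀ ≠ 0 := by
    intro h; rw [h, norm_zero] at hx₀; norm_num at hx₀
  have hTx₀ : ‖T x₀‖ = ‖T‖ := by
    have h1 : x₀ ∈ ({x₀, -x₀} : Set X) := by left; rfl
    rw [← hMT] at h1
    exact h1.2
  -- `T ≠ 0`, i.e. `0 < ‖T‖`
  have hTpos : 0 < ‖T‖ := by
    rcases (norm_nonneg T).lt_or_eq with h | h
    · exact h
    · exfalso
      -- find a unit vector outside span{x₀}
      have hspan : Submodule.span ℝ ({x₀} : Set X) ≠ ⊤ := by
        intro htop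
        have h1 : Module.rank ℝ X ≤ 1 := by
          have h2 := rank_span_le (R := ℝ) ({x₀} : Set X)
          rw [htop, rank_top, Cardinal.mk_singleton] at h2
          exact h2
        exact absurd (hdimX.trans h1) (by norm_num)
      obtain ⟨y, hy⟩ : ∃ y : X, y ∉ Submodule.span ℝ ({x₀} : Set X) := by
        by_contra hc
        push_neg at hc
        exact hspan (Submodule.eq_top_iff'.mpr hc)
      have hy0 : y ≠ 0 := fun h0 => hy (h0 ▸ Submodule.zero_mem _)
      set u : X := ‖y‖⁻¹ • y with hu
      have hun : ‖u‖ = 1 := by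
        rw [hu, norm_smul, norm_inv, norm_norm, inv_mul_cancel₀ (norm_ne_zero_iff.mpr hy0)]
      have humem : u ∈ {x : X | ‖x‖ = 1 ∧ ‖T x‖ = ‖T‖} := by
        refine ⟨hun, ?_⟩
        have h1 : ‖T u‖ ≤ ‖T‖ * ‖u‖ := T.le_opNorm u
        rw [hun, mul_one] at h1
        exact le_antisymm h1 (by rw [← h]; exact norm_nonneg _)
      rw [hMT] at humem
      have huspan : u ∈ Submodule.span ℝ ({x₀} : Set X) := by
        rcases humem with h1 | h1
        · rw [h1]; exact Submodule.mem_span_singleton_self x₀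
        · rw [h1]; exact Submodule.neg_mem _ (Submodule.mem_span_singleton_self x₀)
      apply hy
      have : y = ‖y‖ • u := by
        rw [hu, smul_smul, mul_inv_cancel₀ (norm_ne_zero_iff.mpr hy0), one_smul]
      rw [this]
      exact Submodule.smul_mem _ _ huspan
  have hTx₀ne : T x₀ ≠ 0 := by
    intro h0; rw [h0, norm_zero] at hTx₀; linarith
  -- Hahn-Banach functional at x₀
  obtain ⟨ψ, hψ1, hψx⟩ := exists_dual_vector ℝ x₀ (norm_ne_zero_iff.mpr hx₀ne)
  rw [hx₀] at hψx
  have hψx' : ψ x₀ = (1 : ℝ) := hψx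
  -- coordinate formula for P
  have hPz : ∀ z : X, P z = ψ (P z) • x₀ := by
    intro z
    have hm : P z ∈ LinearMap.range (P : X →ₗ[ℝ] X) := ⟨z, rfl⟩
    rw [hPrange, Submodule.mem_span_singleton] at hm
    obtain ⟨c, hc⟩ := hm
    have hcc : ψ (P z) = c := by
      rw [← hc, map_smul, smul_eq_mul, hψx', mul_one]
    rw [hcc]; exact hc.symm
  have hPx₀ : P x₀ = x₀ := by
    have hx₀mem : x₀ ∈ LinearMap.range (P : X →ₗ[ℝ] X) := by
      rw [hPrange]; exact Submodule.mem_span_singleton_self x₀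
    obtain ⟨w, hw⟩ := hx₀mem
    have hw' : P w = x₀ := hw
    rw [← hw']; exact hPidem w
  have hψPx₀ : ψ (P x₀) = 1 := by rw [hPx₀, hψx']
  have hPnorm : ∀ z : X, |ψ (P z)| = ‖P z‖ := by
    intro z
    conv_rhs => rw [hPz z]
    rw [norm_smul, hx₀, mul_one, Real.norm_eq_abs]
  have hPle : ∀ z : X, ‖P z‖ ≤ ‖z‖ := by
    intro z; rw [hPL z]; linarith [norm_nonneg (z - P z)]
  have hQle : ∀ z : X, ‖z - P z‖ ≤ ‖z‖ := by
    intro z; rw [hPL z]; linarith [norm_nonneg (P z)]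
  -- basic facts about the auxiliary maps
  have hA_x₀ : ∀ y : Y, auxA ψ P y x₀ = y := by
    intro y
    rw [auxA_apply, hψPx₀, one_smul]
  have hAcompι : ∀ y : Y,
      (auxA (Y := Y) ψ P y).comp (LinearMap.ker (P : X →ₗ[ℝ] X)).subtypeL = 0 := by
    intro y
    ext n
    have hn : P (n : X) = 0 := n.2
    show ψ (P (n : X)) • y = 0
    rw [hn, map_zero, zero_smul]
  have hπx₀ : auxPi P hPidem x₀ = 0 := by
    apply Subtype.ext
    show x₀ - P x₀ = (0 : X)
    rw [hPx₀, sub_self]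
  have hBx₀ : ∀ R : ↥(LinearMap.ker (P : X →ₗ[ℝ] X)) →L[ℝ] Y, auxB P hPidem R x₀ = 0 := by
    intro R
    rw [auxB_apply, hπx₀, map_zero]
  have hBcompι : ∀ R : ↥(LinearMap.ker (P : X →ₗ[ℝ] X)) →L[ℝ] Y,
      (auxB P hPidem R).comp (LinearMap.ker (P : X →ₗ[ℝ] X)).subtypeL = R := by
    intro R
    ext n
    show R (auxPi P hPidem (n : X)) = R n
    congr 1
    apply Subtype.ext
    show (n : X) - P (n : X) = (n : X)
    rw [show P (n : X) = 0 from n.2, sub_zero]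
  have hπnorm : ∀ z : X, ‖auxPi P hPidem z‖ = ‖z - P z‖ := fun z => rfl
  -- decomposition of an operator
  have hdecomp : ∀ S : X →L[ℝ] Y,
      auxA ψ P (S x₀) + auxB P hPidem (S.comp (LinearMap.ker (P : X →ₗ[ℝ] X)).subtypeL) = S := by
    intro S
    ext z
    have h1 : (auxA ψ P (S x₀) + auxB P hPidem (S.comp (LinearMap.ker (P : X →ₗ[ℝ] X)).subtypeL)) z
        = ψ (P z) • S x₀ + S (z - P z) := rfl
    rw [h1, ← map_smul, ← hPz z, ← map_add]
    congr 1
    abel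
  -- the key max-norm estimate
  have hcomb : ∀ (y : Y) (R : ↥(LinearMap.ker (P : X →ₗ[ℝ] X)) →L[ℝ] Y), ‖y‖ ≤ 1 → ‖R‖ ≤ 1 →
      ‖auxA ψ P y + auxB P hPidem R‖ ≤ 1 := by
    intro y R hy hR
    apply ContinuousLinearMap.opNorm_le_bound _ zero_le_one
    intro z
    rw [one_mul]
    have h1 : (auxA ψ P y + auxB P hPidem R) z = ψ (P z) • y + R (auxPi P hPidem z) := rfl
    rw [h1]
    calc ‖ψ (P z) • y + R (auxPi P hPidem z)‖
        ≤ ‖ψ (P z) • y‖ + ‖R (auxPi P hPidem z)‖ := norm_add_le _ _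
      _ ≤ |ψ (P z)| * ‖y‖ + ‖R‖ * ‖auxPi P hPidem z‖ := by
          refine add_le_add (le_of_eq ?_) (R.le_opNorm _)
          rw [norm_smul, Real.norm_eq_abs]
      _ ≤ ‖P z‖ * 1 + 1 * ‖z - P z‖ := by
          rw [hPnorm z, hπnorm z]
          refine add_le_add ?_ ?_
          · exact mul_le_mul_of_nonneg_left hy (norm_nonneg _)
          · exact mul_le_mul_of_nonneg_right hR (norm_nonneg _)
      _ = ‖z‖ := by rw [mul_one, one_mul, (hPL z).symm]
  -- norm bounds for evaluation and restriction
  have happly_le : ∀ S : X →L[ℝ] Y, ‖S x₀‖ ≤ ‖S‖ := by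
    intro S
    calc ‖S x₀‖ ≤ ‖S‖ * ‖x₀‖ := S.le_opNorm _
      _ = ‖S‖ := by rw [hx₀, mul_one]
  have hrestr_le : ∀ S : X →L[ℝ] Y, ‖S.comp (LinearMap.ker (P : X →ₗ[ℝ] X)).subtypeL‖ ≤ ‖S‖ := by
    intro S
    apply ContinuousLinearMap.opNorm_le_bound _ (norm_nonneg S)
    intro n
    exact S.le_opNorm (n : X)
  -- generic: a norming functional of `T x₀` lifts to a norming functional of `T`
  have hfun1 : ∀ g : StrongDual ℝ Y, ‖g‖ = 1 → g (T x₀) = ‖T x₀‖ →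
      ‖g.comp (ContinuousLinearMap.apply ℝ Y x₀)‖ = 1 ∧
        (g.comp (ContinuousLinearMap.apply ℝ Y x₀)) T = ‖T‖ := by
    intro g hg1 hgT
    have happ : ∀ S : X →L[ℝ] Y,
        (g.comp (ContinuousLinearMap.apply ℝ Y x₀)) S = g (S x₀) := fun _ => rfl
    have hT' : (g.comp (ContinuousLinearMap.apply ℝ Y x₀)) T = ‖T‖ := by
      rw [happ, hgT, hTx₀]
    refine ⟨le_antisymm ?_ ?_, hT'⟩
    · apply ContinuousLinearMap.opNorm_le_bound _ zero_le_one
      intro S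
      rw [one_mul, happ]
      calc ‖g (S x₀)‖ ≤ ‖g‖ * ‖S x₀‖ := g.le_opNorm _
        _ = ‖S x₀‖ := by rw [hg1, one_mul]
        _ ≤ ‖S‖ := happly_le S
    · have h2 : ‖T‖ ≤ ‖g.comp (ContinuousLinearMap.apply ℝ Y x₀)‖ * ‖T‖ := by
        calc ‖T‖ = (g.comp (ContinuousLinearMap.apply ℝ Y x₀)) T := hT'.symm
          _ ≤ ‖(g.comp (ContinuousLinearMap.apply ℝ Y x₀)) T‖ := le_abs_self _
          _ ≤ ‖g.comp (ContinuousLinearMap.apply ℝ Y x₀)‖ * ‖T‖ :=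
              ContinuousLinearMap.le_opNorm _ _
      exact le_of_mul_le_mul_right (by rw [one_mul]; exact h2) hTpos
  constructor
  · -- forward direction
    rintro ⟨f, ⟨hf1, hfT⟩, hfuniq⟩
    have hliftf : ∀ g : StrongDual ℝ Y, ‖g‖ = 1 → g (T x₀) = ‖T x₀‖ →
        g.comp (ContinuousLinearMap.apply ℝ Y x₀) = f := by
      intro g hg1 hgT
      exact hfuniq _ (hfun1 g hg1 hgT)
    constructor
    · -- (i): smoothness of T x₀
      obtain ⟨g₀, hg₀1, hg₀T0⟩ := exists_dual_vector ℝ (T x₀) (norm_ne_zero_iff.mpr hTx₀ne)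
      have hg₀T : g₀ (T x₀) = ‖T x₀‖ := hg₀T0
      refine ⟨g₀, ⟨hg₀1, hg₀T⟩, ?_⟩
      intro g₁ ⟨hg₁1, hg₁T⟩
      have e : g₁.comp (ContinuousLinearMap.apply ℝ Y x₀)
          = g₀.comp (ContinuousLinearMap.apply ℝ Y x₀) :=
        (hliftf g₁ hg₁1 hg₁T).trans (hliftf g₀ hg₀1 hg₀T).symm
      ext y
      have h1 := ContinuousLinearMap.ext_iff.mp e (auxA ψ P y)
      have l1 : (g₁.comp (ContinuousLinearMap.apply ℝ Y x₀)) (auxA ψ P y)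
          = g₁ (auxA ψ P y x₀) := rfl
      have l0 : (g₀.comp (ContinuousLinearMap.apply ℝ Y x₀)) (auxA ψ P y)
          = g₀ (auxA ψ P y x₀) := rfl
      rw [l1, l0, hA_x₀ y] at h1
      exact h1
    · -- (ii): strict inequality on the restriction
      by_contra hcon
      push_neg at hcon
      have hTι : ‖T.comp (LinearMap.ker (P : X →ₗ[ℝ] X)).subtypeL‖ = ‖T‖ :=
        le_antisymm (hrestr_le T) hcon
      have hTιne : T.comp (LinearMap.ker (P : X →ₗ[ℝ] X)).subtypeL ≠ 0 := by
        intro h0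
        have hz : ‖T.comp (LinearMap.ker (P : X →ₗ[ℝ] X)).subtypeL‖ = 0 := by rw [h0]; exact norm_zero
        rw [hTι] at hz
        linarith
      obtain ⟨H, hH1, hHT0⟩ := exists_dual_vector ℝ (T.comp (LinearMap.ker (P : X →ₗ[ℝ] X)).subtypeL) (norm_ne_zero_iff.mpr hTιne)
      have hHT : H (T.comp (LinearMap.ker (P : X →ₗ[ℝ] X)).subtypeL)
          = ‖T.comp (LinearMap.ker (P : X →ₗ[ℝ] X)).subtypeL‖ := hHT0
      set f₂ : StrongDual ℝ (X →L[ℝ] Y) :=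
        H.comp ((ContinuousLinearMap.compL ℝ ↥(LinearMap.ker (P : X →ₗ[ℝ] X)) X Y).flip
          (LinearMap.ker (P : X →ₗ[ℝ] X)).subtypeL) with hf₂def
      have hf₂app : ∀ S : X →L[ℝ] Y, f₂ S = H (S.comp (LinearMap.ker (P : X →ₗ[ℝ] X)).subtypeL) :=
        fun _ => rfl
      have hf₂T : f₂ T = ‖T‖ := by rw [hf₂app, hHT, hTι]
      have hf₂n : ‖f₂‖ = 1 := by
        refine le_antisymm ?_ ?_
        · apply ContinuousLinearMap.opNorm_le_bound _ zero_le_one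
          intro S
          rw [one_mul, hf₂app]
          calc ‖H (S.comp (LinearMap.ker (P : X →ₗ[ℝ] X)).subtypeL)‖
              ≤ ‖H‖ * ‖S.comp (LinearMap.ker (P : X →ₗ[ℝ] X)).subtypeL‖ := H.le_opNorm _
            _ = ‖S.comp (LinearMap.ker (P : X →ₗ[ℝ] X)).subtypeL‖ := by rw [hH1, one_mul]
            _ ≤ ‖S‖ := hrestr_le S
        · have h2 : ‖T‖ ≤ ‖f₂‖ * ‖T‖ := by
            calc ‖T‖ = f₂ T := hf₂T.symm
              _ ≤ ‖f₂ T‖ := le_abs_self _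
              _ ≤ ‖f₂‖ * ‖T‖ := ContinuousLinearMap.le_opNorm _ _
          exact le_of_mul_le_mul_right (by rw [one_mul]; exact h2) hTpos
      obtain ⟨g₀, hg₀1, hg₀T0⟩ := exists_dual_vector ℝ (T x₀) (norm_ne_zero_iff.mpr hTx₀ne)
      have hg₀T : g₀ (T x₀) = ‖T x₀‖ := hg₀T0
      have e : g₀.comp (ContinuousLinearMap.apply ℝ Y x₀) = f₂ :=
        (hliftf g₀ hg₀1 hg₀T).trans (hfuniq f₂ ⟨hf₂n, hf₂T⟩).symm
      have h1 := ContinuousLinearMap.ext_iff.mp e (auxA ψ P (T x₀))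
      have l0 : (g₀.comp (ContinuousLinearMap.apply ℝ Y x₀)) (auxA ψ P (T x₀))
          = g₀ (auxA ψ P (T x₀) x₀) := rfl
      have l2 : f₂ (auxA ψ P (T x₀)) = H ((auxA (Y := Y) ψ P (T x₀)).comp
          (LinearMap.ker (P : X →ₗ[ℝ] X)).subtypeL) := rfl
      rw [l0, hA_x₀, hg₀T] at h1
      rw [l2, hAcompι, map_zero] at h1
      rw [hTx₀] at h1
      linarith
  · -- backward direction
    rintro ⟨⟨g, ⟨hg1, hgT⟩, hguniq⟩, hlt⟩
    refine ⟨g.comp (ContinuousLinearMap.apply ℝ Y x₀), hfun1 g hg1 hgT, ?_⟩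
    intro f' ⟨hf'1, hf'T⟩
    set g' : StrongDual ℝ Y := f'.comp (auxA ψ P) with hg'def
    set h' : StrongDual ℝ (↥(LinearMap.ker (P : X →ₗ[ℝ] X)) →L[ℝ] Y) := f'.comp (auxB P hPidem) with hh'def
    have hg'app : ∀ y : Y, g' y = f' (auxA ψ P y) := fun _ => rfl
    have hh'app : ∀ R, h' R = f' (auxB P hPidem R) := fun _ => rfl
    -- ℓ¹ decomposition of the norm of f'
    have hsum : ‖g'‖ + ‖h'‖ ≤ 1 := by
      refine _root_.le_of_forall_pos_le_add ?_
      intro ε hε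
      obtain ⟨y, hy1, hy2⟩ := g'.exists_lt_apply_of_lt_opNorm
        (show ‖g'‖ - ε / 2 < ‖g'‖ by linarith)
      obtain ⟨R, hR1, hR2⟩ := h'.exists_lt_apply_of_lt_opNorm
        (show ‖h'‖ - ε / 2 < ‖h'‖ by linarith)
      obtain ⟨y', hy'n, hy'v⟩ : ∃ y' : Y, ‖y'‖ ≤ 1 ∧ ‖g' y‖ ≤ g' y' := by
        rcases le_or_gt 0 (g' y) with h | h
        · exact ⟨y, hy1.le, le_of_eq (by rw [Real.norm_eq_abs, abs_of_nonneg h])⟩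
        · refine ⟨-y, by rw [norm_neg]; exact hy1.le, le_of_eq ?_⟩
          rw [map_neg, Real.norm_eq_abs, abs_of_neg h]
      obtain ⟨R', hR'n, hR'v⟩ : ∃ R', ‖R'‖ ≤ 1 ∧ ‖h' R‖ ≤ h' R' := by
        rcases le_or_gt 0 (h' R) with h | h
        · exact ⟨R, hR1.le, le_of_eq (by rw [Real.norm_eq_abs, abs_of_nonneg h])⟩
        · refine ⟨-R, by rw [norm_neg]; exact hR1.le, le_of_eq ?_⟩
          rw [map_neg, Real.norm_eq_abs, abs_of_neg h]
      have hle : g' y' + h' R' ≤ 1 := by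
        have e : g' y' + h' R' = f' (auxA ψ P y' + auxB P hPidem R') := by
          rw [map_add, hg'app, hh'app]
        rw [e]
        calc f' (auxA ψ P y' + auxB P hPidem R')
            ≤ ‖f' (auxA ψ P y' + auxB P hPidem R')‖ := le_abs_self _
          _ ≤ ‖f'‖ * ‖auxA ψ P y' + auxB P hPidem R'‖ := ContinuousLinearMap.le_opNorm _ _
          _ ≤ 1 * 1 := by
              rw [hf'1, one_mul, one_mul]
              exact hcomb y' R' hy'n hR'n
          _ = 1 := one_mul 1
      linarith [hy2.trans_le hy'v, hR2.trans_le hR'v]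
    -- decomposition of f' T
    have hf'dec : ∀ S : X →L[ℝ] Y,
        f' S = g' (S x₀) + h' (S.comp (LinearMap.ker (P : X →ₗ[ℝ] X)).subtypeL) := by
      intro S
      conv_lhs => rw [← hdecomp S]
      rw [map_add, hg'app, hh'app]
    -- h' must vanish
    have hh'0 : ‖h'‖ = 0 := by
      by_contra hne
      have hpos : 0 < ‖h'‖ := lt_of_le_of_ne (norm_nonneg _) (Ne.symm hne)
      have h1 : g' (T x₀) ≤ ‖g'‖ * ‖T‖ := by
        calc g' (T x₀) ≤ ‖g' (T x₀)‖ := le_abs_self _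
          _ ≤ ‖g'‖ * ‖T x₀‖ := g'.le_opNorm _
          _ = ‖g'‖ * ‖T‖ := by rw [hTx₀]
      have h2 : h' (T.comp (LinearMap.ker (P : X →ₗ[ℝ] X)).subtypeL)
          ≤ ‖h'‖ * ‖T.comp (LinearMap.ker (P : X →ₗ[ℝ] X)).subtypeL‖ := by
        calc h' (T.comp (LinearMap.ker (P : X →ₗ[ℝ] X)).subtypeL)
            ≤ ‖h' (T.comp (LinearMap.ker (P : X →ₗ[ℝ] X)).subtypeL)‖ := le_abs_self _
          _ ≤ ‖h'‖ * ‖T.comp (LinearMap.ker (P : X →ₗ[ℝ] X)).subtypeL‖ := h'.le_opNorm _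
      have h3 : ‖h'‖ * ‖T.comp (LinearMap.ker (P : X →ₗ[ℝ] X)).subtypeL‖ < ‖h'‖ * ‖T‖ :=
        mul_lt_mul_of_pos_left hlt hpos
      have h4 := hf'dec T
      rw [hf'T] at h4
      nlinarith [norm_nonneg g', norm_nonneg h']
    have hh'zero : h' = 0 := norm_eq_zero.mp hh'0
    have hg'T : g' (T x₀) = ‖T x₀‖ := by
      have h4 := hf'dec T
      rw [hf'T, hh'zero] at h4
      simp only [ContinuousLinearMap.zero_apply, add_zero] at h4
      rw [← h4, hTx₀]
    have hg'1 : ‖g'‖ = 1 := by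
      refine le_antisymm (by linarith [norm_nonneg h']) ?_
      have h2 : ‖T‖ ≤ ‖g'‖ * ‖T‖ := by
        calc ‖T‖ = ‖T x₀‖ := hTx₀.symm
          _ = g' (T x₀) := hg'T.symm
          _ ≤ ‖g' (T x₀)‖ := le_abs_self _
          _ ≤ ‖g'‖ * ‖T x₀‖ := g'.le_opNorm _
          _ = ‖g'‖ * ‖T‖ := by rw [hTx₀]
      exact le_of_mul_le_mul_right (by rw [one_mul]; exact h2) hTpos
    have hg'g : g' = g := hguniq g' ⟨hg'1, hg'T⟩
    -- conclude f' = f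
    ext S
    have h5 := hf'dec S
    rw [hh'zero] at h5
    simp only [ContinuousLinearMap.zero_apply, add_zero] at h5
    rw [h5, hg'g]
    rfl
end

section
/- Let X and Y be real normed linear spaces of dimension at least 2, and let T be a bounded linear operator from X to Y with nonempty norm attainment set M_T. If T is a smooth point of the space of bounded linear operators from X to Y, then (i) M_T = {x₀, −x₀} for some x₀ ∈ X with ‖x₀‖ = 1, (ii) Tx₀ is a smooth point of Y, and (iii) dist(T, K(X,Y)) < ‖T‖. -/
set_option maxHeartbeats 1000000
set_option synthInstance.maxHeartbeats 200000

open NormedSpace Metric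

/-- A rank-one operator `φ.smulRight y` is a compact operator. -/
lemma smulRight_isCompactOperator {X Y : Type*} [NormedAddCommGroup X] [NormedSpace ℝ X]
    [NormedAddCommGroup Y] [NormedSpace ℝ Y] (φ : X →L[ℝ] ℝ) (y : Y) :
    IsCompactOperator ⇑(φ.smulRight y) := by
  refine ⟨(· • y) '' Set.Icc (-1:ℝ) 1, (isCompact_Icc.image (by fun_prop)), ?_⟩
  have h1 : φ ⁻¹' Set.Icc (-1:ℝ) 1 ∈ nhds (0:X) := by
    apply φ.continuous.continuousAt.preimage_mem_nhds
    simp only [map_zero]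
    exact Icc_mem_nhds (by norm_num) (by norm_num)
  filter_upwards [h1] with x hx
  exact ⟨φ x, hx, rfl⟩

/-- **Theorem 11 (necessary conditions for smoothness).** Let `X, Y` be real normed
spaces of dimension ≥ 2 and `T : X → Y` bounded linear with nonempty norm attainment
set. If `T` is a smooth point of `L(X,Y)`, then (i) `M_T = {x₀, -x₀}` for some unit
vector `x₀`, (ii) `Tx₀` is a smooth point of `Y`, and (iii) `dist(T, K(X,Y)) < ‖T‖`. -/
theorem smooth_necessary_conditions
    {X Y : Type*} [NormedAddCommGroup X] [NormedSpace ℝ X]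
    [NormedAddCommGroup Y] [NormedSpace ℝ Y]
    (hdimX : 2 ≤ Module.rank ℝ X) (hdimY : 2 ≤ Module.rank ℝ Y)
    (T : X →L[ℝ] Y)
    (hMT : {x : X | ‖x‖ = 1 ∧ ‖T x‖ = ‖T‖}.Nonempty)
    (hsmooth : ∃! f : StrongDual ℝ (X →L[ℝ] Y), ‖f‖ = 1 ∧ f T = ‖T‖) :
    ∃ x₀ : X, ‖x₀‖ = 1 ∧
      {x : X | ‖x‖ = 1 ∧ ‖T x‖ = ‖T‖} = {x₀, -x₀} ∧
      (∃! g : StrongDual ℝ Y, ‖g‖ = 1 ∧ g (T x₀) = ‖T x₀‖) ∧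
      Metric.infDist T {K : X →L[ℝ] Y | IsCompactOperator ⇑K} < ‖T‖ := by
  classical
  haveI hXnt : Nontrivial X :=
    rank_pos_iff_nontrivial.mp (lt_of_lt_of_le (by norm_num) hdimX)
  haveI hYnt : Nontrivial Y :=
    rank_pos_iff_nontrivial.mp (lt_of_lt_of_le (by norm_num) hdimY)
  obtain ⟨f, ⟨hf1, hfT⟩, hfun⟩ := hsmooth
  obtain ⟨x₀, hx₀, hTx₀⟩ := hMT
  -- L(X,Y) is nontrivial
  obtain ⟨y₁, hy₁⟩ := exists_ne (0:Y)
  obtain ⟨x₁, hx₁ne⟩ := exists_ne (0:X)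
  obtain ⟨φ₁, hφ₁n, hφ₁⟩ := exists_dual_vector ℝ x₁ (norm_ne_zero_iff.mpr hx₁ne)
  haveI : Nontrivial (X →L[ℝ] Y) := by
    refine ⟨φ₁.smulRight y₁, 0, fun h => ?_⟩
    have h2 := congrArg (fun S : X →L[ℝ] Y => S x₁) h
    simp only [ContinuousLinearMap.smulRight_apply, hφ₁,
      ContinuousLinearMap.zero_apply] at h2
    rcases smul_eq_zero.mp h2 with h3 | h3
    · exact hx₁ne (norm_eq_zero.mp h3)
    · exact hy₁ h3
  -- T ≠ 0
  have hT0 : T ≠ 0 := by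
    intro hT
    obtain ⟨h, hh1, _⟩ := exists_dual_vector' ℝ (0 : X →L[ℝ] Y)
    have e1 : h = f := hfun h ⟨hh1, by simp [hT]⟩
    have e2 : -h = f := hfun (-h) ⟨(norm_neg h).trans hh1, by simp [hT]⟩
    have hhh : h = -h := e1.trans e2.symm
    have h2 : (2:ℝ) • h = 0 := by
      rw [two_smul]; nth_rewrite 2 [hhh]; simp
    have h0 : h = 0 := by simpa [smul_eq_zero] using h2
    rw [h0] at hh1; simp at hh1
  have hTpos : 0 < ‖T‖ := norm_pos_iff.mpr hT0
  have hTx₀ne : T x₀ ≠ 0 := by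
    rw [← norm_ne_zero_iff, hTx₀]; exact ne_of_gt hTpos
  -- key: supporting functionals at points of M_T all induce f
  have key : ∀ x : X, ‖x‖ = 1 → ∀ g : StrongDual ℝ Y, ‖g‖ = 1 → g (T x) = ‖T‖ →
      ∀ S : X →L[ℝ] Y, g (S x) = f S := by
    intro x hx g hg hgT
    set F : StrongDual ℝ (X →L[ℝ] Y) := g.comp (ContinuousLinearMap.apply ℝ Y x) with hF
    have hFapp : ∀ S : X →L[ℝ] Y, F S = g (S x) := fun S => rfl
    have hFle : ‖F‖ ≤ 1 := by
      refine ContinuousLinearMap.opNorm_le_bound _ zero_le_one fun S => ?_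
      calc ‖F S‖ = ‖g (S x)‖ := rfl
        _ ≤ ‖g‖ * ‖S x‖ := g.le_opNorm _
        _ = ‖S x‖ := by rw [hg, one_mul]
        _ ≤ ‖S‖ * ‖x‖ := S.le_opNorm x
        _ = 1 * ‖S‖ := by rw [hx, mul_one, one_mul]
    have hFT : F T = ‖T‖ := hgT
    have hF1 : ‖F‖ = 1 := by
      refine le_antisymm hFle ?_
      have h1 : ‖F T‖ ≤ ‖F‖ * ‖T‖ := F.le_opNorm T
      rw [hFT, Real.norm_of_nonneg (norm_nonneg T)] at h1
      nlinarith
    have hFf : F = f := hfun F ⟨hF1, hFT⟩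
    intro S; rw [← hFf]; rfl
  obtain ⟨g₀, hg₀1, hg₀T⟩ := exists_dual_vector ℝ (T x₀) (norm_ne_zero_iff.mpr hTx₀ne)
  have key₀ : ∀ S : X →L[ℝ] Y, g₀ (S x₀) = f S :=
    key x₀ hx₀ g₀ hg₀1 (by rw [hg₀T, hTx₀]; simp)
  obtain ⟨φ₀, hφ₀1, hφ₀x⟩ := exists_dual_vector ℝ x₀
    (by rw [← norm_ne_zero_iff, hx₀]; norm_num)
  refine ⟨x₀, hx₀, ?_, ?_, ?_⟩
  · -- (i)
    ext z
    simp only [Set.mem_setOf_eq, Set.mem_insert_iff, Set.mem_singleton_iff]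
    constructor
    · rintro ⟨hz, hTz⟩
      have hTzne : T z ≠ 0 := by
        rw [← norm_ne_zero_iff, hTz]; exact ne_of_gt hTpos
      obtain ⟨g₁, hg₁1, hg₁T⟩ := exists_dual_vector ℝ (T z) (norm_ne_zero_iff.mpr hTzne)
      have key₁ : ∀ S : X →L[ℝ] Y, g₁ (S z) = f S :=
        key z hz g₁ hg₁1 (by rw [hg₁T, hTz]; simp)
      have hS : ∀ (φ : StrongDual ℝ X) (y : Y), φ z * g₁ y = φ x₀ * g₀ y := by
        intro φ y
        have h1 := (key₁ (φ.smulRight y)).trans (key₀ (φ.smulRight y)).symm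
        simpa [ContinuousLinearMap.smulRight_apply, map_smul, smul_eq_mul] using h1
      have hg₁ne : g₁ ≠ 0 := by
        intro h; rw [h] at hg₁1; simp at hg₁1
      obtain ⟨y, hy⟩ : ∃ y, g₁ y ≠ 0 := by
        by_contra h; push_neg at h
        exact hg₁ne (by ext w; simp [h w])
      set c : ℝ := g₀ y / g₁ y with hc
      have hz₀ : z = c • x₀ := by
        rw [eq_iff_forall_dual_eq ℝ]
        intro φ
        rw [map_smul, smul_eq_mul, hc, div_mul_eq_mul_div, eq_div_iff hy]
        linear_combination hS φ y
      have hcabs : |c| = 1 := by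
        have h2 := congrArg norm hz₀
        rw [norm_smul, hz, hx₀, Real.norm_eq_abs, mul_one] at h2
        linarith
      rcases (abs_eq (by norm_num : (0:ℝ) ≤ 1)).mp hcabs with h | h
      · left; rw [hz₀, h, one_smul]
      · right; rw [hz₀, h, neg_one_smul]
    · rintro (rfl | rfl)
      · exact ⟨hx₀, hTx₀⟩
      · exact ⟨by simpa using hx₀, by simpa using hTx₀⟩
  · -- (ii)
    refine ⟨g₀, ⟨hg₀1, hg₀T⟩, ?_⟩
    rintro g ⟨hg1, hgT⟩
    have keyg : ∀ S : X →L[ℝ] Y, g (S x₀) = f S :=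
      key x₀ hx₀ g hg1 (by rw [hgT, hTx₀])
    ext y
    have h1 := (keyg (φ₀.smulRight y)).trans (key₀ (φ₀.smulRight y)).symm
    simpa [ContinuousLinearMap.smulRight_apply, map_smul, smul_eq_mul, hφ₀x, hx₀] using h1
  · -- (iii)
    set C : Submodule ℝ (X →L[ℝ] Y) :=
      { carrier := {K | IsCompactOperator ⇑K}
        add_mem' := fun ha hb => ha.add hb
        zero_mem' := isCompactOperator_zero
        smul_mem' := fun c K hK => by simpa using hK.smul c } with hCdef
    have hle : infDist T {K : X →L[ℝ] Y | IsCompactOperator ⇑K} ≤ ‖T‖ := by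
      have h0 : (0 : X →L[ℝ] Y) ∈ {K : X →L[ℝ] Y | IsCompactOperator ⇑K} := by
        simpa using (isCompactOperator_zero :
          IsCompactOperator (⇑(0 : X →L[ℝ] Y)))
      calc infDist T {K : X →L[ℝ] Y | IsCompactOperator ⇑K} ≤ dist T 0 :=
            infDist_le_dist_of_mem h0
        _ = ‖T‖ := dist_zero_right T
    refine lt_of_le_of_ne hle ?_
    intro hdist
    set Cc := C.topologicalClosure with hCc
    haveI : IsClosed (Cc : Set (X →L[ℝ] Y)) := C.isClosed_topologicalClosure
    have hCcset : (Cc : Set (X →L[ℝ] Y)) = closure (C : Set (X →L[ℝ] Y)) := by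
      rw [hCc, Submodule.topologicalClosure_coe]
    have hnorm : ∀ S : X →L[ℝ] Y, ‖(Submodule.Quotient.mk S : (X →L[ℝ] Y) ⧸ Cc)‖
        = infDist S (Cc : Set (X →L[ℝ] Y)) := fun S => QuotientAddGroup.norm_mk S
    have hqT : ‖(Submodule.Quotient.mk T : (X →L[ℝ] Y) ⧸ Cc)‖ = ‖T‖ := by
      rw [hnorm, hCcset, infDist_closure]
      exact hdist
    have hqTne : (Submodule.Quotient.mk T : (X →L[ℝ] Y) ⧸ Cc) ≠ 0 := by
      intro h
      have hmem : T ∈ Cc := (Submodule.Quotient.mk_eq_zero Cc).mp h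
      have h0 : infDist T (Cc : Set (X →L[ℝ] Y)) = 0 := infDist_zero_of_mem hmem
      rw [hCcset, infDist_closure] at h0
      rw [show ((C : Set (X →L[ℝ] Y))) = {K : X →L[ℝ] Y | IsCompactOperator ⇑K} from rfl,
        hdist] at h0
      exact ne_of_gt hTpos h0
    obtain ⟨ψ, hψ1, hψT⟩ := exists_dual_vector ℝ
      (Submodule.Quotient.mk T : (X →L[ℝ] Y) ⧸ Cc) (by rw [hqT]; exact ne_of_gt hTpos)
    set F : StrongDual ℝ (X →L[ℝ] Y) :=
      LinearMap.mkContinuous (ψ.toLinearMap.comp Cc.mkQ) 1 (by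
        intro S
        calc ‖ψ (Cc.mkQ S)‖ ≤ ‖ψ‖ * ‖(Submodule.Quotient.mk S : (X →L[ℝ] Y) ⧸ Cc)‖ :=
              ψ.le_opNorm _
          _ = ‖(Submodule.Quotient.mk S : (X →L[ℝ] Y) ⧸ Cc)‖ := by rw [hψ1, one_mul]
          _ ≤ ‖S‖ := Submodule.Quotient.norm_mk_le _ S
          _ = 1 * ‖S‖ := (one_mul _).symm) with hFdef
    have hFapp : ∀ S : X →L[ℝ] Y,
        F S = ψ (Submodule.Quotient.mk S : (X →L[ℝ] Y) ⧸ Cc) := fun S => rfl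
    have hFT : F T = ‖T‖ := by rw [hFapp, hψT, hqT]; simp
    have hFle : ‖F‖ ≤ 1 := LinearMap.mkContinuous_norm_le _ zero_le_one _
    have hF1 : ‖F‖ = 1 := by
      refine le_antisymm hFle ?_
      have h1 : ‖F T‖ ≤ ‖F‖ * ‖T‖ := F.le_opNorm T
      rw [hFT, Real.norm_of_nonneg (norm_nonneg T)] at h1
      nlinarith
    have hFf : F = f := hfun F ⟨hF1, hFT⟩
    -- contradiction with the rank-one operator S₀
    set S₀ : X →L[ℝ] Y := φ₀.smulRight (T x₀) with hS₀def
    have hfS₀ : f S₀ = ‖T‖ := by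
      rw [← key₀]
      have hS₀x : S₀ x₀ = T x₀ := by
        simp [hS₀def, hφ₀x, hx₀]
      rw [hS₀x, hg₀T, hTx₀]
      simp
    have hS₀C : S₀ ∈ Cc :=
      Submodule.le_topologicalClosure C (smulRight_isCompactOperator φ₀ (T x₀))
    have hFS₀ : F S₀ = 0 := by
      rw [hFapp, (Submodule.Quotient.mk_eq_zero Cc).mpr hS₀C, map_zero]
    rw [hFf, hfS₀] at hFS₀
    exact ne_of_gt hTpos hFS₀
end

section
/- Let X be a real reflexive Banach space and Y a real Banach space, both of dimension at least 2. Suppose K(X,Y), the space of compact linear operators from X to Y, is an M-ideal in L(X,Y), the space of bounded linear operators from X to Y. Let T ∈ L(X,Y) be such that (i) M_T = {x₀, −x₀} for some x₀ ∈ X with ‖x₀‖ = 1, (ii) Tx₀ is a smooth point of Y, and (iii) dist(T, K(X,Y)) < ‖T‖. Then T is a smooth point of L(X,Y). -/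
open NormedSpace Filter Metric Topology

set_option synthInstance.maxHeartbeats 1000000
set_option maxHeartbeats 4000000
set_option linter.unusedSectionVars false

section SmoothAux

variable {X Y : Type*} [NormedAddCommGroup X] [NormedSpace ℝ X] [CompleteSpace X]
    [NormedAddCommGroup Y] [NormedSpace ℝ Y] [CompleteSpace Y]
    (P : StrongDual ℝ (X →L[ℝ] Y) →L[ℝ] StrongDual ℝ (X →L[ℝ] Y))

variable {X Y : Type*} [NormedAddCommGroup X] [NormedSpace ℝ X] [CompleteSpace X]
    [NormedAddCommGroup Y] [NormedSpace ℝ Y] [CompleteSpace Y]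
    (P : StrongDual ℝ (X →L[ℝ] Y) →L[ℝ] StrongDual ℝ (X →L[ℝ] Y))

/-- If a functional nearly attains its norm on compact operators, it is killed by `P`. -/
theorem aux_kerP_of_norming
    (hPL : ∀ f, ‖f‖ = ‖P f‖ + ‖f - P f‖)
    (hPrange : Set.range ⇑P =
      {f : StrongDual ℝ (X →L[ℝ] Y) | ∀ K : X →L[ℝ] Y, IsCompactOperator ⇑K → f K = 0})
    (φ : StrongDual ℝ (X →L[ℝ] Y))
    (hφ : ∀ ε > (0:ℝ), ∃ K : X →L[ℝ] Y, IsCompactOperator ⇑K ∧ ‖K‖ ≤ 1 ∧ ‖φ‖ - ε ≤ φ K) :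
    P φ = 0 := by
  have hmem : P φ ∈ Set.range ⇑P := ⟨φ, rfl⟩
  rw [hPrange] at hmem
  have key : ∀ ε > (0:ℝ), ‖φ‖ ≤ ‖φ - P φ‖ + ε := by
    intro ε hε
    obtain ⟨K, hK, hK1, hKφ⟩ := hφ ε hε
    have h0 : (P φ) K = 0 := hmem K hK
    have h1 : φ K = (φ - P φ) K := by simp [h0]
    have h2 : (φ - P φ) K ≤ ‖φ - P φ‖ := by
      calc (φ - P φ) K ≤ ‖(φ - P φ) K‖ := le_abs_self _
        _ ≤ ‖φ - P φ‖ * ‖K‖ := (φ - P φ).le_opNorm K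
        _ ≤ ‖φ - P φ‖ * 1 := mul_le_mul_of_nonneg_left hK1 (norm_nonneg (φ - P φ))
        _ = ‖φ - P φ‖ := mul_one _
    rw [h1] at hKφ
    linarith
  have h3 : ‖φ‖ ≤ ‖φ - P φ‖ := le_of_forall_pos_le_add (fun ε hε => key ε hε)
  have h4 := hPL φ
  have h5 : ‖P φ‖ ≤ 0 := by linarith
  have h6 : ‖P φ‖ = 0 := le_antisymm h5 (norm_nonneg (P φ))
  exact (ContinuousLinearMap.opNorm_zero_iff _).mp h6

/-- Step 1: any supporting functional of `T` is killed by `P`. -/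
theorem aux_step1
    (hPL : ∀ f, ‖f‖ = ‖P f‖ + ‖f - P f‖)
    (hPrange : Set.range ⇑P =
      {f : StrongDual ℝ (X →L[ℝ] Y) | ∀ K : X →L[ℝ] Y, IsCompactOperator ⇑K → f K = 0})
    (T : X →L[ℝ] Y)
    (hdist : Metric.infDist T {K : X →L[ℝ] Y | IsCompactOperator ⇑K} < ‖T‖)
    (f : StrongDual ℝ (X →L[ℝ] Y)) (hf1 : ‖f‖ = 1) (hfT : f T = ‖T‖) :
    P f = 0 := by
  set s : Set (X →L[ℝ] Y) := {K : X →L[ℝ] Y | IsCompactOperator ⇑K} with hsdef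
  have hs : s.Nonempty := ⟨0, isCompactOperator_zero⟩
  have hmem : P f ∈ Set.range ⇑P := ⟨f, rfl⟩
  rw [hPrange] at hmem
  set D := Metric.infDist T s with hD
  have hD0 : 0 ≤ D := Metric.infDist_nonneg
  have h1 : (P f) T ≤ ‖P f‖ * D := by
    by_cases h0 : P f = 0
    · simp only [h0, ContinuousLinearMap.zero_apply, norm_zero, zero_mul]; exact mul_nonneg (norm_nonneg (0 : StrongDual ℝ (X →L[ℝ] Y))) hD0
    · have hne : ‖P f‖ ≠ 0 := fun hn => h0 ((ContinuousLinearMap.opNorm_zero_iff _).mp hn)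
      have hpos : 0 < ‖P f‖ := lt_of_le_of_ne (norm_nonneg (P f)) (Ne.symm hne)
      have hgoal : (P f) T / ‖P f‖ ≤ D := by
        rw [hD, Metric.infDist_eq_iInf]
        have : Nonempty s := hs.to_subtype
        refine le_ciInf fun K => ?_
        have hK0 : (P f) (K : X →L[ℝ] Y) = 0 := hmem K K.2
        have he : (P f) T = (P f) (T - (K : X →L[ℝ] Y)) := by simp [hK0]
        rw [div_le_iff₀ hpos, he, dist_eq_norm]
        calc (P f) (T - (K : X →L[ℝ] Y)) ≤ ‖(P f) (T - (K : X →L[ℝ] Y))‖ := le_abs_self _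
          _ ≤ ‖P f‖ * ‖T - (K : X →L[ℝ] Y)‖ := (P f).le_opNorm _
          _ = ‖T - (K : X →L[ℝ] Y)‖ * ‖P f‖ := mul_comm _ _
      calc (P f) T = ((P f) T / ‖P f‖) * ‖P f‖ := by field_simp
        _ ≤ D * ‖P f‖ := mul_le_mul_of_nonneg_right hgoal (norm_nonneg (P f))
        _ = ‖P f‖ * D := mul_comm _ _
  have h2 : (f - P f) T ≤ ‖f - P f‖ * ‖T‖ := by
    calc (f - P f) T ≤ ‖(f - P f) T‖ := le_abs_self _
      _ ≤ ‖f - P f‖ * ‖T‖ := (f - P f).le_opNorm _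
  have h3 : ‖f - P f‖ = 1 - ‖P f‖ := by have := hPL f; rw [hf1] at this; linarith
  have h4 : f T = (P f) T + (f - P f) T := by simp
  have h5 : ‖P f‖ ≤ 0 := by nlinarith [hfT ▸ h4]
  exact (ContinuousLinearMap.opNorm_zero_iff _).mp (le_antisymm h5 (norm_nonneg _))

/-- Two functionals killed by `P` agreeing on compacts are equal. -/
theorem aux_eq_of_agree
    (hPidem : ∀ f, P (P f) = P f)
    (hPrange : Set.range ⇑P =
      {f : StrongDual ℝ (X →L[ℝ] Y) | ∀ K : X →L[ℝ] Y, IsCompactOperator ⇑K → f K = 0})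
    (f₁ f₂ : StrongDual ℝ (X →L[ℝ] Y)) (h1 : P f₁ = 0) (h2 : P f₂ = 0)
    (h : ∀ K : X →L[ℝ] Y, IsCompactOperator ⇑K → f₁ K = f₂ K) : f₁ = f₂ := by
  have hmem : f₁ - f₂ ∈ Set.range ⇑P := by
    rw [hPrange]
    intro K hK
    simp [h K hK]
  obtain ⟨v, hv⟩ := hmem
  have : f₁ - f₂ = P (f₁ - f₂) := by rw [← hv, hPidem]
  rw [map_sub, h1, h2, sub_zero] at this
  have := this
  rw [sub_eq_zero] at this
  exact this



/-- Rank one operators are compact. -/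
theorem aux_isCompactOperator_smulRight (c : X →L[ℝ] ℝ) (y : Y) :
    IsCompactOperator ⇑(c.smulRight y) := by
  refine ⟨(fun t : ℝ => t • y) '' Metric.closedBall 0 ‖c‖, ?_, ?_⟩
  · exact (isCompact_closedBall 0 ‖c‖).image (continuous_id.smul continuous_const)
  · refine Filter.mem_of_superset (Metric.closedBall_mem_nhds 0 one_pos) ?_
    intro z hz
    refine ⟨c z, ?_, rfl⟩
    rw [Metric.mem_closedBall, dist_zero_right] at hz ⊢
    calc ‖c z‖ ≤ ‖c‖ * ‖z‖ := c.le_opNorm z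
      _ ≤ ‖c‖ * 1 := mul_le_mul_of_nonneg_left hz (norm_nonneg _)
      _ = ‖c‖ := mul_one _

/-- The functional `S ↦ h (S x)`. -/
noncomputable def auxPhi (x : X) (h : StrongDual ℝ Y) : StrongDual ℝ (X →L[ℝ] Y) :=
  h.comp (ContinuousLinearMap.apply ℝ Y x)

@[simp] theorem auxPhi_apply (x : X) (h : StrongDual ℝ Y) (S : X →L[ℝ] Y) :
    auxPhi x h S = h (S x) := rfl

theorem auxPhi_norm_le (x : X) (h : StrongDual ℝ Y) : ‖auxPhi x h‖ ≤ ‖h‖ * ‖x‖ := by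
  refine ContinuousLinearMap.opNorm_le_bound _ (mul_nonneg (norm_nonneg _) (norm_nonneg _)) ?_
  intro S
  calc ‖auxPhi x h S‖ = ‖h (S x)‖ := rfl
    _ ≤ ‖h‖ * ‖S x‖ := h.le_opNorm _
    _ ≤ ‖h‖ * (‖S‖ * ‖x‖) := mul_le_mul_of_nonneg_left (S.le_opNorm x) (norm_nonneg _)
    _ = ‖h‖ * ‖x‖ * ‖S‖ := by ring

/-- `auxPhi x h` nearly attains its norm on compacts when `‖x‖ = ‖h‖ = 1`. -/
theorem auxPhi_norming (x : X) (h : StrongDual ℝ Y) (hx : ‖x‖ = 1) (hh : ‖h‖ = 1) :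
    ∀ ε > (0:ℝ), ∃ K : X →L[ℝ] Y, IsCompactOperator ⇑K ∧ ‖K‖ ≤ 1 ∧ ‖auxPhi x h‖ - ε ≤ auxPhi x h K := by
  intro ε hε
  have hx0 : x ≠ 0 := by intro h0; rw [h0, norm_zero] at hx; norm_num at hx
  obtain ⟨c, hc1, hcx⟩ := exists_dual_vector ℝ x (norm_ne_zero_iff.mpr hx0)
  have hlt : 1 - ε < ‖h‖ := by rw [hh]; linarith
  obtain ⟨y, hy1, hyv⟩ := h.exists_lt_apply_of_lt_opNorm hlt
  -- adjust sign of y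
  have habs : 1 - ε < |h y| := hyv
  rcases abs_cases (h y) with ⟨he, _⟩ | ⟨he, _⟩
  · refine ⟨c.smulRight y, aux_isCompactOperator_smulRight c y, ?_, ?_⟩
    · rw [c.norm_smulRight_apply, hc1, one_mul]; exact le_of_lt hy1
    · have : auxPhi x h (c.smulRight y) = h y := by
        simp only [auxPhi_apply, ContinuousLinearMap.smulRight_apply, map_smul, smul_eq_mul]
        have : c x = ‖x‖ := by exact_mod_cast hcx
        rw [this, hx, one_mul]
      rw [this]
      have h1 : ‖auxPhi x h‖ ≤ 1 := by
        have := auxPhi_norm_le x h; rw [hx, hh] at this; simpa using this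
      have h2 : 1 - ε < h y := by rwa [Real.norm_eq_abs, he] at hyv
      linarith
  · refine ⟨c.smulRight (-y), ?_, ?_, ?_⟩
    · exact aux_isCompactOperator_smulRight c (-y)
    · rw [c.norm_smulRight_apply, hc1, one_mul, norm_neg]; exact le_of_lt hy1
    · have heval : auxPhi x h (c.smulRight (-y)) = - h y := by
        simp only [auxPhi_apply, ContinuousLinearMap.smulRight_apply, map_smul, smul_eq_mul]
        have hcx' : c x = ‖x‖ := by exact_mod_cast hcx
        rw [map_neg, hcx', hx, one_mul]
      rw [heval]
      have h1 : ‖auxPhi x h‖ ≤ 1 := by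
        have := auxPhi_norm_le x h; rw [hx, hh] at this; simpa using this
      have h2 : 1 - ε < -h y := by rwa [Real.norm_eq_abs, he] at hyv
      linarith


/-- The subspace of compact operators. -/
def auxJ (X Y : Type*) [NormedAddCommGroup X] [NormedSpace ℝ X]
    [NormedAddCommGroup Y] [NormedSpace ℝ Y] : Subspace ℝ (X →L[ℝ] Y) where
  carrier := {K : X →L[ℝ] Y | IsCompactOperator ⇑K}
  add_mem' hf hg := by
    have := hf.add hg
    simpa using this
  zero_mem' := by
    show IsCompactOperator _
    simpa using (isCompactOperator_zero : IsCompactOperator (fun _ : X => (0:Y)))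
  smul_mem' c K hK := by
    have := hK.smul c
    simpa using this


/-- A functional killed by `P` nearly attains its norm on compacts. -/
theorem aux_kerP_norming
    (hPidem : ∀ f, P (P f) = P f)
    (hPL : ∀ f, ‖f‖ = ‖P f‖ + ‖f - P f‖)
    (hPrange : Set.range ⇑P =
      {f : StrongDual ℝ (X →L[ℝ] Y) | ∀ K : X →L[ℝ] Y, IsCompactOperator ⇑K → f K = 0})
    (u : StrongDual ℝ (X →L[ℝ] Y)) (hu : P u = 0) :
    ∀ ε > (0:ℝ), ∃ K : X →L[ℝ] Y, IsCompactOperator ⇑K ∧ ‖K‖ ≤ 1 ∧ ‖u‖ - ε ≤ u K := by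
  intro ε hε
  set J := auxJ X Y with hJ
  set r : StrongDual ℝ ↥J := u.comp J.subtypeL with hr
  obtain ⟨g, hg1, hg2⟩ := exists_extension_norm_eq J r
  -- u - g vanishes on compacts
  have hvan : u - g ∈ Set.range ⇑P := by
    rw [hPrange]
    intro K hK
    have : g K = r ⟨K, hK⟩ := hg1 ⟨K, hK⟩
    simp only [ContinuousLinearMap.sub_apply, this, hr]
    simp [ContinuousLinearMap.comp_apply]
  obtain ⟨v, hv⟩ := hvan
  have heq : u - g = P (u - g) := by rw [← hv, hPidem]
  have heq2 : u - g = - P g := by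
    rw [heq, map_sub, hu, zero_sub]
  have hur : ‖u‖ ≤ ‖g‖ := by
    have hgd : u = g - P g := by
      have := heq2
      rw [sub_eq_iff_eq_add] at this
      rw [this]; abel
    have := hPL g
    have hn : ‖g - P g‖ = ‖u‖ := by rw [← hgd]
    linarith [norm_nonneg (P g)]
  -- now find K
  by_cases h0 : ‖u‖ ≤ ε
  · refine ⟨0, isCompactOperator_zero, by simp, ?_⟩
    simp only [map_zero]
    linarith
  · push_neg at h0
    have hlt : ‖u‖ - ε < ‖g‖ := by linarith
    rw [hg2] at hlt
    obtain ⟨K, hK1, hKv⟩ := ContinuousLinearMap.exists_lt_apply_of_lt_opNorm _ hlt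
    have hKnorm : ‖(K : X →L[ℝ] Y)‖ = ‖K‖ := rfl
    have hrK : r K = u (K : X →L[ℝ] Y) := rfl
    rcases abs_cases (r K) with ⟨he, _⟩ | ⟨he, _⟩
    · refine ⟨(K : X →L[ℝ] Y), K.2, by rw [hKnorm]; exact le_of_lt hK1, ?_⟩
      have : ‖u‖ - ε < r K := by rwa [Real.norm_eq_abs, he] at hKv
      rw [hrK] at this; linarith
    · refine ⟨-(K : X →L[ℝ] Y), ?_, ?_, ?_⟩
      · have := K.2.neg; simpa using this
      · rw [norm_neg, hKnorm]; exact le_of_lt hK1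
      · have : ‖u‖ - ε < - r K := by rwa [Real.norm_eq_abs, he] at hKv
        rw [hrK] at this
        rw [map_neg]
        linarith


theorem aux_key
    (hrefl : Function.Surjective (NormedSpace.inclusionInDoubleDual ℝ X))
    (P : StrongDual ℝ (X →L[ℝ] Y) →L[ℝ] StrongDual ℝ (X →L[ℝ] Y))
    (hPidem : ∀ f, P (P f) = P f)
    (hPL : ∀ f, ‖f‖ = ‖P f‖ + ‖f - P f‖)
    (hPrange : Set.range ⇑P =
      {f : StrongDual ℝ (X →L[ℝ] Y) | ∀ K : X →L[ℝ] Y, IsCompactOperator ⇑K → f K = 0})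
    (T : X →L[ℝ] Y) (x₀ : X) (hx₀ : ‖x₀‖ = 1)
    (hMT : {x : X | ‖x‖ = 1 ∧ ‖T x‖ = ‖T‖} = {x₀, -x₀})
    (g : StrongDual ℝ Y) (hg1 : ‖g‖ = 1)
    (hgu : ∀ h : StrongDual ℝ Y, ‖h‖ = 1 → h (T x₀) = ‖T x₀‖ → h = g)
    (hdist : Metric.infDist T {K : X →L[ℝ] Y | IsCompactOperator ⇑K} < ‖T‖)
    (C : X →L[ℝ] Y) (hC : IsCompactOperator ⇑C)
    (f : StrongDual ℝ (X →L[ℝ] Y)) (hf1 : ‖f‖ = 1) (hfT : f T = ‖T‖) :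
    f C ≤ g (C x₀) := by
  have hT0 : (0:ℝ) < ‖T‖ := lt_of_le_of_lt Metric.infDist_nonneg hdist
  have hTx₀ : ‖T x₀‖ = ‖T‖ := by
    have : x₀ ∈ ({x₀, -x₀} : Set X) := Set.mem_insert _ _
    rw [← hMT] at this
    exact this.2
  -- selection of near-maximizers and their supporting functionals
  have hsel : ∀ t : ℝ, ∃ (x : X) (h' : StrongDual ℝ Y), ‖x‖ ≤ 1 ∧ ‖h'‖ ≤ 1 ∧
      ((0 < t ∧ t * ‖C‖ + t * t < ‖T‖) →
        (‖h'‖ = 1 ∧ ‖T + t • C‖ - t * t ≤ h' ((T + t • C) x))) := by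
    intro t
    by_cases hgood : 0 < t ∧ t * ‖C‖ + t * t < ‖T‖
    · obtain ⟨ht, hsm⟩ := hgood
      have htC : ‖T‖ - t * ‖C‖ ≤ ‖T + t • C‖ := by
        have h1 : ‖T‖ ≤ ‖T + t • C‖ + ‖t • C‖ := by
          calc ‖T‖ = ‖(T + t • C) - t • C‖ := by congr 1; abel
            _ ≤ ‖T + t • C‖ + ‖t • C‖ := norm_sub_le _ _
        have h2 : ‖t • C‖ ≤ t * ‖C‖ := by
          have := _root_.norm_smul_le t C
          rwa [Real.norm_eq_abs, abs_of_pos ht] at this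
        linarith
      have hr : ‖T + t • C‖ - t * t < ‖T + t • C‖ := by nlinarith
      obtain ⟨x, hx1, hxv⟩ := (T + t • C).exists_lt_apply_of_lt_opNorm hr
      have hv0 : (T + t • C) x ≠ 0 := by
        intro h0
        rw [h0, norm_zero] at hxv
        nlinarith
      obtain ⟨h', hh1, hh2⟩ := exists_dual_vector ℝ ((T + t • C) x) (norm_ne_zero_iff.mpr hv0)
      refine ⟨x, h', le_of_lt hx1, le_of_eq hh1, fun _ => ⟨hh1, ?_⟩⟩
      have : h' ((T + t • C) x) = ‖(T + t • C) x‖ := by exact_mod_cast hh2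
      rw [this]
      linarith
    · exact ⟨0, 0, by simp, by simp, fun hg => absurd hg hgood⟩
  choose xs hs hx1 hh1 hgood using hsel
  -- the filter of small positive times
  set l : Filter ℝ := nhdsWithin 0 (Set.Ioi 0) with hl
  haveI : l.NeBot := nhdsGT_neBot 0
  set U : Ultrafilter ℝ := Ultrafilter.of l with hU
  have hUl : (U : Filter ℝ) ≤ l := Ultrafilter.of_le l
  have ht0 : Tendsto (fun t : ℝ => t) (U : Filter ℝ) (𝓝 0) :=
    tendsto_id.mono_left (hUl.trans nhdsWithin_le_nhds)
  have htpos : ∀ᶠ t in (U : Filter ℝ), 0 < t := hUl self_mem_nhdsWithin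
  have hsmallev : ∀ᶠ t in (U : Filter ℝ), t * ‖C‖ + t * t < ‖T‖ := by
    have htend : Tendsto (fun t : ℝ => t * ‖C‖ + t * t) (U : Filter ℝ) (𝓝 0) := by
      have := (ht0.mul_const ‖C‖).add (ht0.mul ht0)
      simpa using this
    exact htend.eventually_lt_const hT0
  have hgoodev : ∀ᶠ t in (U : Filter ℝ), 0 < t ∧ t * ‖C‖ + t * t < ‖T‖ := htpos.and hsmallev
  have hEv : ∀ᶠ t in (U : Filter ℝ),
      ‖hs t‖ = 1 ∧ ‖T + t • C‖ - t * t ≤ hs t ((T + t • C) (xs t)) :=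
    hgoodev.mono fun t ht => hgood t ht
  -- weak cluster point of (xs t) via the double dual
  obtain ⟨x, hxle, hweak⟩ : ∃ x : X, ‖x‖ ≤ 1 ∧
      ∀ φ : StrongDual ℝ X, Tendsto (fun t => φ (xs t)) (U : Filter ℝ) (𝓝 (φ x)) := by
    set ι := inclusionInDoubleDual ℝ X with hι
    set mW : ℝ → WeakDual ℝ (StrongDual ℝ X) :=
      fun t => StrongDual.toWeakDual (ι (xs t)) with hmW
    have hBcpt : IsCompact (⇑WeakDual.toStrongDual ⁻¹'
        Metric.closedBall (0 : StrongDual ℝ (StrongDual ℝ X)) 1) :=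
      WeakDual.isCompact_closedBall 0 1
    have hle : (Ultrafilter.map mW U : Filter (WeakDual ℝ (StrongDual ℝ X))) ≤
        Filter.principal (⇑WeakDual.toStrongDual ⁻¹'
          Metric.closedBall (0 : StrongDual ℝ (StrongDual ℝ X)) 1) := by
      rw [Filter.le_principal_iff]
      refine Filter.eventually_map.mpr (Filter.Eventually.of_forall fun t => ?_)
      show WeakDual.toStrongDual (mW t) ∈ Metric.closedBall 0 1
      refine (mem_closedBall_zero_iff (E := StrongDual ℝ (StrongDual ℝ X))).mpr ?_
      calc ‖WeakDual.toStrongDual (mW t)‖ = ‖ι (xs t)‖ := rfl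
        _ ≤ ‖xs t‖ := double_dual_bound ℝ X (xs t)
        _ ≤ 1 := hx1 t
    obtain ⟨ξ, hξB, hξ⟩ := hBcpt.ultrafilter_le_nhds (Ultrafilter.map mW U) hle
    obtain ⟨x, hxeq⟩ := hrefl (WeakDual.toStrongDual ξ)
    refine ⟨x, ?_, ?_⟩
    · refine norm_le_dual_bound ℝ x zero_le_one fun φ => ?_
      have h1 : ι x φ = φ x := dual_def ℝ X x φ
      have h2 : ι x = WeakDual.toStrongDual ξ := hxeq
      have hξn : ‖WeakDual.toStrongDual ξ‖ ≤ 1 := by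
        have := hξB
        exact (mem_closedBall_zero_iff (E := StrongDual ℝ (StrongDual ℝ X))).mp this
      calc ‖φ x‖ = ‖ι x φ‖ := by rw [h1]
        _ ≤ ‖ι x‖ * ‖φ‖ := (ι x).le_opNorm φ
        _ = ‖WeakDual.toStrongDual ξ‖ * ‖φ‖ := by rw [h2]
        _ ≤ 1 * ‖φ‖ := mul_le_mul_of_nonneg_right hξn (norm_nonneg _)
    · intro φ
      have hT : Tendsto mW (U : Filter ℝ) (𝓝 ξ) := hξ
      have hev : Tendsto (fun w : WeakDual ℝ (StrongDual ℝ X) => w φ) (𝓝 ξ) (𝓝 (ξ φ)) :=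
        (WeakDual.eval_continuous φ).continuousAt
      have hcomp := hev.comp hT
      have heq2 : ξ φ = φ x := by
        have h3 : WeakDual.toStrongDual ξ φ = ι x φ := by rw [hxeq]
        rw [dual_def] at h3
        exact Eq.trans (rfl : ξ φ = WeakDual.toStrongDual ξ φ) h3
      rw [heq2] at hcomp
      exact hcomp
  -- weak-* cluster point of the supporting functionals
  obtain ⟨h, hhle, hhconv⟩ : ∃ h : StrongDual ℝ Y, ‖h‖ ≤ 1 ∧
      ∀ y : Y, Tendsto (fun t => hs t y) (U : Filter ℝ) (𝓝 (h y)) := by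
    set mH : ℝ → WeakDual ℝ Y := fun t => StrongDual.toWeakDual (hs t) with hmH
    have hBcpt : IsCompact (⇑WeakDual.toStrongDual ⁻¹'
        Metric.closedBall (0 : StrongDual ℝ Y) 1) := WeakDual.isCompact_closedBall 0 1
    have hle : (Ultrafilter.map mH U : Filter (WeakDual ℝ Y)) ≤
        Filter.principal (⇑WeakDual.toStrongDual ⁻¹' Metric.closedBall (0 : StrongDual ℝ Y) 1) := by
      rw [Filter.le_principal_iff]
      refine Filter.eventually_map.mpr (Filter.Eventually.of_forall fun t => ?_)
      show WeakDual.toStrongDual (mH t) ∈ Metric.closedBall 0 1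
      rw [Metric.mem_closedBall, dist_zero_right]
      exact hh1 t
    obtain ⟨χ, hχB, hχ⟩ := hBcpt.ultrafilter_le_nhds (Ultrafilter.map mH U) hle
    refine ⟨WeakDual.toStrongDual χ, ?_, ?_⟩
    · rwa [Set.mem_preimage, Metric.mem_closedBall, dist_zero_right] at hχB
    · intro y
      have hT : Tendsto mH (U : Filter ℝ) (𝓝 χ) := hχ
      have hev : Tendsto (fun w : WeakDual ℝ Y => w y) (𝓝 χ) (𝓝 (χ y)) :=
        (WeakDual.eval_continuous y).continuousAt
      exact hev.comp hT
  -- compact operators turn weak convergence into norm convergence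
  have hCC : ∀ C' : X →L[ℝ] Y, IsCompactOperator ⇑C' →
      Tendsto (fun t => C' (xs t)) (U : Filter ℝ) (𝓝 (C' x)) := by
    intro C' hC'
    have hS : IsCompact (closure (⇑C' '' Metric.closedBall 0 1)) := by
      have h1 : IsCompactOperator ⇑(C' : X →ₗ[ℝ] Y) := hC'
      exact h1.isCompact_closure_image_closedBall 1
    have hle' : (Ultrafilter.map (fun t => C' (xs t)) U : Filter Y) ≤
        Filter.principal (closure (⇑C' '' Metric.closedBall 0 1)) := by
      rw [Filter.le_principal_iff]
      refine Filter.eventually_map.mpr (Filter.Eventually.of_forall fun t => ?_)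
      exact subset_closure ⟨xs t, Metric.mem_closedBall.mpr (by
        rw [dist_zero_right]; exact hx1 t), rfl⟩
    obtain ⟨y, hyS, hy⟩ := hS.ultrafilter_le_nhds _ hle'
    have hyx : y = C' x := by
      refine (NormedSpace.eq_iff_forall_dual_eq ℝ).mpr fun gY => ?_
      have t1 : Tendsto (fun t => gY (C' (xs t))) (U : Filter ℝ) (𝓝 (gY y)) :=
        (gY.continuous.tendsto y).comp hy
      have t2 : Tendsto (fun t => (gY.comp C') (xs t)) (U : Filter ℝ)
          (𝓝 ((gY.comp C') x)) := hweak (gY.comp C')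
      exact tendsto_nhds_unique t1 (by simpa using t2)
    rw [hyx] at hy
    exact hy
  -- construction of the limit functional F
  set vals : (X →L[ℝ] Y) → ℝ → ℝ := fun S t => hs t (S (xs t)) with hvals
  have hvb : ∀ S t, |vals S t| ≤ ‖S‖ := by
    intro S t
    calc |vals S t| = ‖hs t (S (xs t))‖ := (Real.norm_eq_abs _).symm
      _ ≤ ‖hs t‖ * ‖S (xs t)‖ := (hs t).le_opNorm _
      _ ≤ 1 * (‖S‖ * ‖xs t‖) := by
          refine mul_le_mul (hh1 t) (S.le_opNorm _) (norm_nonneg _) zero_le_one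
      _ ≤ 1 * (‖S‖ * 1) := by
          refine mul_le_mul_of_nonneg_left ?_ zero_le_one
          exact mul_le_mul_of_nonneg_left (hx1 t) (norm_nonneg _)
      _ = ‖S‖ := by ring
  have hex : ∀ S : X →L[ℝ] Y, ∃ r : ℝ, Tendsto (vals S) (U : Filter ℝ) (𝓝 r) := by
    intro S
    have hc : IsCompact (Set.Icc (-‖S‖) ‖S‖) := isCompact_Icc
    have hle'' : (Ultrafilter.map (vals S) U : Filter ℝ) ≤
        Filter.principal (Set.Icc (-‖S‖) ‖S‖) := by
      rw [Filter.le_principal_iff]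
      refine Filter.eventually_map.mpr (Filter.Eventually.of_forall fun t => ?_)
      exact abs_le.mp (hvb S t)
    obtain ⟨r, _, hr⟩ := hc.ultrafilter_le_nhds _ hle''
    exact ⟨r, hr⟩
  choose Fv hFv using hex
  have hFvle : ∀ S, |Fv S| ≤ ‖S‖ := by
    intro S
    have hcl : IsClosed (Set.Icc (-‖S‖) ‖S‖) := isClosed_Icc
    have := hcl.mem_of_tendsto (hFv S)
      (Filter.Eventually.of_forall fun t => abs_le.mp (hvb S t))
    exact abs_le.mpr this
  have hadd : ∀ S1 S2 : X →L[ℝ] Y, Fv (S1 + S2) = Fv S1 + Fv S2 := by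
    intro S1 S2
    have ht : Tendsto (vals (S1 + S2)) (U : Filter ℝ) (𝓝 (Fv S1 + Fv S2)) := by
      have := (hFv S1).add (hFv S2)
      refine this.congr fun t => ?_
      simp [hvals, map_add]
    exact tendsto_nhds_unique (hFv (S1 + S2)) ht
  have hsmulF : ∀ (c : ℝ) (S : X →L[ℝ] Y), Fv (c • S) = c * Fv S := by
    intro c S
    have ht : Tendsto (vals (c • S)) (U : Filter ℝ) (𝓝 (c * Fv S)) := by
      have := (hFv S).const_mul c
      refine this.congr fun t => ?_
      simp [hvals, map_smul, smul_eq_mul]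
    exact tendsto_nhds_unique (hFv (c • S)) ht
  set F : StrongDual ℝ (X →L[ℝ] Y) := LinearMap.mkContinuous
    { toFun := Fv, map_add' := hadd, map_smul' := hsmulF } 1
    (fun S => by rw [one_mul]; exact (Real.norm_eq_abs _).symm ▸ hFvle S) with hF
  have hFapp : ∀ S, F S = Fv S := fun S => rfl
  -- F T = ‖T‖
  have hvalsTC : ∀ᶠ t in (U : Filter ℝ),
      ‖T‖ - (2 * ‖C‖ * t + t * t) ≤ vals T t ∧ vals T t ≤ ‖T‖ := by
    refine (hgoodev.and hEv).mono fun t ht => ?_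
    obtain ⟨⟨htpos', hsm'⟩, hnorm1, hineq⟩ := ht
    have hsplit : hs t ((T + t • C) (xs t)) = vals T t + t * vals C t := by
      simp [hvals, map_add, map_smul, smul_eq_mul, mul_comm]
    have hCb : |vals C t| ≤ ‖C‖ := hvb C t
    have htC : ‖T‖ - t * ‖C‖ ≤ ‖T + t • C‖ := by
      have h1 : ‖T‖ ≤ ‖T + t • C‖ + ‖t • C‖ := by
        calc ‖T‖ = ‖(T + t • C) - t • C‖ := by congr 1; abel
          _ ≤ ‖T + t • C‖ + ‖t • C‖ := norm_sub_le _ _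
      have h2 : ‖t • C‖ ≤ t * ‖C‖ := by
        have := _root_.norm_smul_le t C
        rwa [Real.norm_eq_abs, abs_of_pos htpos'] at this
      linarith
    constructor
    · have := hineq
      rw [hsplit] at this
      have habs : t * vals C t ≤ t * ‖C‖ := by
        have := (abs_le.mp hCb).2
        nlinarith
      have h2C : 2 * ‖C‖ * t = t * ‖C‖ + t * ‖C‖ := by ring
      linarith
    · exact le_trans (le_abs_self _) (hvb T t)
  have hTt : Tendsto (vals T) (U : Filter ℝ) (𝓝 ‖T‖) := by
    have hlow : Tendsto (fun t : ℝ => ‖T‖ - (2 * ‖C‖ * t + t * t)) (U : Filter ℝ)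
        (𝓝 ‖T‖) := by
      have h1 : Tendsto (fun t : ℝ => 2 * ‖C‖ * t + t * t) (U : Filter ℝ) (𝓝 0) := by
        have := (ht0.const_mul (2 * ‖C‖)).add (ht0.mul ht0)
        simpa using this
      have := (tendsto_const_nhds (α := ℝ) (x := ‖T‖) (f := (U : Filter ℝ))).sub h1
      simpa using this
    exact tendsto_of_tendsto_of_tendsto_of_le_of_le' hlow tendsto_const_nhds
      (hvalsTC.mono fun t ht => ht.1) (hvalsTC.mono fun t ht => ht.2)
  have hFT : F T = ‖T‖ := tendsto_nhds_unique (hFv T) hTt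
  -- ‖F‖ = 1
  have hFn : ‖F‖ = 1 := by
    have hle1 : ‖F‖ ≤ 1 := LinearMap.mkContinuous_norm_le _ zero_le_one _
    have hge1 : 1 ≤ ‖F‖ := by
      have := F.le_opNorm T
      rw [hFapp] at this
      have h2 : ‖Fv T‖ = ‖T‖ := by rw [← hFapp, hFT]; exact (Real.norm_eq_abs _).symm ▸
        (abs_of_pos hT0)
      rw [h2] at this
      nlinarith
    linarith
  -- P F = 0 and F is norming on compacts
  have hPF : P F = 0 := aux_step1  P hPL hPrange T hdist F hFn hFT
  have hnorming := aux_kerP_norming  P hPidem hPL hPrange F hPF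
  -- F K = h (K x) for every compact K
  have hFK : ∀ K : X →L[ℝ] Y, IsCompactOperator ⇑K → F K = h (K x) := by
    intro K hK
    have htt : Tendsto (vals K) (U : Filter ℝ) (𝓝 (h (K x))) := by
      have hnconv : Tendsto (fun t => ‖K (xs t) - K x‖) (U : Filter ℝ) (𝓝 0) := by
        have := (hCC K hK).sub_const (K x)
        have h2 := this.norm
        simpa using h2
      have hpart1 : Tendsto (fun t => hs t (K x)) (U : Filter ℝ) (𝓝 (h (K x))) :=
        hhconv (K x)
      have hpart2 : Tendsto (fun t => hs t (K (xs t)) - hs t (K x)) (U : Filter ℝ)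
          (𝓝 0) := by
        refine squeeze_zero_norm (fun t => ?_) hnconv
        calc ‖hs t (K (xs t)) - hs t (K x)‖ = ‖hs t (K (xs t) - K x)‖ := by
              rw [map_sub]
          _ ≤ ‖hs t‖ * ‖K (xs t) - K x‖ := (hs t).le_opNorm _
          _ ≤ 1 * ‖K (xs t) - K x‖ :=
              mul_le_mul_of_nonneg_right (hh1 t) (norm_nonneg _)
          _ = ‖K (xs t) - K x‖ := one_mul _
      have := hpart1.add hpart2
      rw [add_zero] at this
      refine this.congr fun t => ?_
      simp [hvals]
    exact tendsto_nhds_unique (hFv K) htt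
  -- ‖x‖ = 1 and ‖h‖ = 1
  have hprod : 1 ≤ ‖h‖ * ‖x‖ := by
    refine le_of_forall_pos_le_add fun ε hε => ?_
    obtain ⟨K, hK, hK1, hKF⟩ := hnorming ε hε
    rw [hFn] at hKF
    have h1 : F K = h (K x) := hFK K hK
    have h2 : h (K x) ≤ ‖h‖ * ‖x‖ := by
      calc h (K x) ≤ ‖h (K x)‖ := le_abs_self _
        _ ≤ ‖h‖ * ‖K x‖ := h.le_opNorm _
        _ ≤ ‖h‖ * (‖K‖ * ‖x‖) := mul_le_mul_of_nonneg_left (K.le_opNorm x) (norm_nonneg _)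
        _ ≤ ‖h‖ * (1 * ‖x‖) := by
            refine mul_le_mul_of_nonneg_left ?_ (norm_nonneg _)
            exact mul_le_mul_of_nonneg_right hK1 (norm_nonneg _)
        _ = ‖h‖ * ‖x‖ := by ring
    rw [h1] at hKF
    linarith
  have hxn : ‖x‖ = 1 := by
    have h1 : ‖h‖ * ‖x‖ ≤ ‖x‖ := by
      have := mul_le_mul_of_nonneg_right hhle (norm_nonneg x)
      simpa using this
    have := le_trans hprod h1
    linarith [hxle]
  have hhn : ‖h‖ = 1 := by
    have h1 : ‖h‖ * ‖x‖ ≤ ‖h‖ := by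
      have := mul_le_mul_of_nonneg_left hxle (norm_nonneg h)
      simpa using this
    have := le_trans hprod h1
    linarith [hhle]
  -- F coincides with auxPhi x h
  have hφ : P (auxPhi x h) = 0 :=
    aux_kerP_of_norming  P hPL hPrange _ (auxPhi_norming  x h hxn hhn)
  have hFφ : F = auxPhi x h := by
    refine aux_eq_of_agree  P hPidem hPrange F (auxPhi x h) hPF hφ fun K hK => ?_
    rw [hFK K hK]
    rfl
  have hTx : h (T x) = ‖T‖ := by
    have : F T = h (T x) := by rw [hFφ]; rfl
    rw [← this, hFT]
  have hTxn : ‖T x‖ = ‖T‖ := by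
    refine le_antisymm ?_ ?_
    · calc ‖T x‖ ≤ ‖T‖ * ‖x‖ := T.le_opNorm x
        _ = ‖T‖ := by rw [hxn, mul_one]
    · calc ‖T‖ = h (T x) := hTx.symm
        _ ≤ ‖h (T x)‖ := le_abs_self _
        _ ≤ ‖h‖ * ‖T x‖ := h.le_opNorm _
        _ = ‖T x‖ := by rw [hhn, one_mul]
  -- x = x₀ or x = -x₀, and F C = g (C x₀)
  have hxmem : x ∈ ({x₀, -x₀} : Set X) := by
    rw [← hMT]
    exact ⟨hxn, hTxn⟩
  have hFC : F C = g (C x₀) := by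
    rcases hxmem with hxx | hxx
    · have hg' : h = g := by
        refine hgu h hhn ?_
        rw [hTx₀, ← hxx]
        exact hTx
      have : F C = h (C x) := hFK C hC
      rw [this, hxx, hg']
    · have hxx' : x = -x₀ := hxx
      have hg' : (-h) = g := by
        refine hgu (-h) (by rw [norm_neg]; exact hhn) ?_
        have : (-h) (T x₀) = h (T x) := by
          rw [hxx']
          simp
        rw [this, hTx, hTx₀]
      have h1 : F C = h (C x) := hFK C hC
      rw [h1, hxx']
      have : h (C (-x₀)) = (-h) (C x₀) := by simp
      rw [this, hg']
  -- final inequality : f C ≤ F C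
  have hev2 : ∀ᶠ t in (U : Filter ℝ), f C ≤ vals C t + t := by
    refine (hgoodev.and hEv).mono fun t ht => ?_
    obtain ⟨⟨htpos', hsm'⟩, hnorm1, hineq⟩ := ht
    have hsplit : hs t ((T + t • C) (xs t)) = vals T t + t * vals C t := by
      simp [hvals, map_add, map_smul, smul_eq_mul, mul_comm]
    have hvT : vals T t ≤ ‖T‖ := le_trans (le_abs_self _) (hvb T t)
    have hfTC : f T + t * f C ≤ ‖T + t • C‖ := by
      have h1 : f (T + t • C) = f T + t * f C := by
        simp [map_add, map_smul, smul_eq_mul]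
      calc f T + t * f C = f (T + t • C) := h1.symm
        _ ≤ ‖f (T + t • C)‖ := le_abs_self _
        _ ≤ ‖f‖ * ‖T + t • C‖ := f.le_opNorm _
        _ = ‖T + t • C‖ := by rw [hf1, one_mul]
    have h2 : ‖T + t • C‖ ≤ vals T t + t * vals C t + t * t := by
      rw [← hsplit]; linarith
    have h3 : t * f C ≤ t * vals C t + t * t := by
      rw [hfT] at hfTC
      linarith
    have h4 : t * f C ≤ t * (vals C t + t) := by linarith [h3]; 
    exact le_of_mul_le_mul_left (by linarith [h4]) htpos'
  have hlim : Tendsto (fun t => vals C t + t) (U : Filter ℝ) (𝓝 (F C)) := by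
    have := (hFv C).add ht0
    rw [add_zero] at this
    exact this.congr fun t => rfl
  have : f C ≤ F C := ge_of_tendsto hlim hev2
  rw [hFC] at this
  exact this

end SmoothAux

/-- **Theorem 12 (sufficient conditions for smoothness).** Let `X` be a real
reflexive Banach space and `Y` a real Banach space, both of dimension ≥ 2, with
`K(X,Y)` an M-ideal in `L(X,Y)`. If `T ∈ L(X,Y)` satisfies (i) `M_T = {x₀, -x₀}`
for a unit vector `x₀`, (ii) `Tx₀` is a smooth point of `Y`, and
(iii) `dist(T, K(X,Y)) < ‖T‖`, then `T` is a smooth point of `L(X,Y)`. -/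
theorem smooth_sufficient_conditions
    {X Y : Type*} [NormedAddCommGroup X] [NormedSpace ℝ X] [CompleteSpace X]
    [NormedAddCommGroup Y] [NormedSpace ℝ Y] [CompleteSpace Y]
    (hrefl : Function.Surjective (NormedSpace.inclusionInDoubleDual ℝ X))
    (hdimX : 2 ≤ Module.rank ℝ X) (hdimY : 2 ≤ Module.rank ℝ Y)
    (P : StrongDual ℝ (X →L[ℝ] Y) →L[ℝ] StrongDual ℝ (X →L[ℝ] Y))
    (hPidem : ∀ f, P (P f) = P f)
    (hPL : ∀ f, ‖f‖ = ‖P f‖ + ‖f - P f‖)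
    (hPrange : Set.range ⇑P =
      {f : StrongDual ℝ (X →L[ℝ] Y) | ∀ K : X →L[ℝ] Y, IsCompactOperator ⇑K → f K = 0})
    (T : X →L[ℝ] Y) (x₀ : X) (hx₀ : ‖x₀‖ = 1)
    (hMT : {x : X | ‖x‖ = 1 ∧ ‖T x‖ = ‖T‖} = {x₀, -x₀})
    (hsmoothY : ∃! g : StrongDual ℝ Y, ‖g‖ = 1 ∧ g (T x₀) = ‖T x₀‖)
    (hdist : Metric.infDist T {K : X →L[ℝ] Y | IsCompactOperator ⇑K} < ‖T‖) :
    ∃! f : StrongDual ℝ (X →L[ℝ] Y), ‖f‖ = 1 ∧ f T = ‖T‖ := by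
  obtain ⟨g, ⟨hg1, hg2⟩, hgu0⟩ := hsmoothY
  have hgu : ∀ h : StrongDual ℝ Y, ‖h‖ = 1 → h (T x₀) = ‖T x₀‖ → h = g :=
    fun h a b => hgu0 h ⟨a, b⟩
  have hT0 : (0:ℝ) < ‖T‖ := lt_of_le_of_lt Metric.infDist_nonneg hdist
  have hTx₀ : ‖T x₀‖ = ‖T‖ := by
    have : x₀ ∈ ({x₀, -x₀} : Set X) := Set.mem_insert _ _
    rw [← hMT] at this
    exact this.2
  set ψ : StrongDual ℝ (X →L[ℝ] Y) := auxPhi x₀ g with hψ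
  have hψT : ψ T = ‖T‖ := by
    have : ψ T = g (T x₀) := rfl
    rw [this, hg2, hTx₀]
  have hψn : ‖ψ‖ = 1 := by
    have hle1 : ‖ψ‖ ≤ 1 := by
      have := auxPhi_norm_le x₀ g
      rw [hg1, hx₀] at this
      simpa using this
    have hge1 : 1 ≤ ‖ψ‖ := by
      have h1 := ψ.le_opNorm T
      rw [hψT] at h1
      have h2 : ‖(‖T‖ : ℝ)‖ = ‖T‖ := by
        rw [Real.norm_eq_abs, abs_of_pos hT0]
      rw [h2] at h1
      nlinarith
    linarith
  refine ⟨ψ, ⟨hψn, hψT⟩, ?_⟩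
  rintro f ⟨hf1, hfT⟩
  have hPf : P f = 0 := aux_step1 P hPL hPrange T hdist f hf1 hfT
  have hPψ : P ψ = 0 := aux_step1 P hPL hPrange T hdist ψ hψn hψT
  have hagree : ∀ K : X →L[ℝ] Y, IsCompactOperator ⇑K → f K = ψ K := by
    intro K hK
    have hle : f K ≤ g (K x₀) :=
      aux_key hrefl P hPidem hPL hPrange T x₀ hx₀ hMT g hg1 hgu hdist K hK f hf1 hfT
    have hKneg : IsCompactOperator ⇑(-K) := by
      have := hK.neg
      simpa using this
    have hge : f (-K) ≤ g ((-K) x₀) :=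
      aux_key hrefl P hPidem hPL hPrange T x₀ hx₀ hMT g hg1 hgu hdist (-K) hKneg f hf1 hfT
    have h1 : f (-K) = - f K := by simp
    have h2 : g ((-K) x₀) = - g (K x₀) := by simp
    rw [h1, h2] at hge
    have : ψ K = g (K x₀) := rfl
    rw [this]
    linarith
  exact aux_eq_of_agree P hPidem hPrange f ψ hPf hPψ hagree
end
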